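/- arXiv:2501.01288 — 3 statements merged into one kernel-verified Lean document; each statement's English description precedes it below -/
import Mathlib

section
/- Let n ≥ 6 be even and t₁, t₂, t₃ in Sym(2n) as above. Then ⟨t₁,t₂,t₃⟩ is isomorphic to the Coxeter group D_n, i.e., it equals the subgroup ⟨β₀,…,β_{n−1}⟩ of Sym(2n) in the standard embedding. -/
open Equiv Equiv.Perm


/-- `t₁ = (1,2)(n+1,n+2)(n-1,2n-1)(n,2n)` -/
def u1 (n : ℕ) : Equiv.Perm ℕ :=
  Equiv.swap 1 2 * Equiv.swap (n + 1) (n + 2) *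
    Equiv.swap (n - 1) (2 * n - 1) * Equiv.swap n (2 * n)

/-- `t₂ = (2,3)(4,5)⋯(n-2,n-1)(n+2,n+3)⋯(2n-2,2n-1)` -/
def u2 (n : ℕ) : Equiv.Perm ℕ :=
  ((List.range ((n - 2) / 2)).map fun k =>
    Equiv.swap (2 * (k + 1)) (2 * (k + 1) + 1) *
      Equiv.swap (n + 2 * (k + 1)) (n + 2 * (k + 1) + 1)).prod

/-- `t₃ = (3,4)(5,6)⋯(n-1,n)(n+3,n+4)⋯(2n-1,2n)` -/
def u3 (n : ℕ) : Equiv.Perm ℕ :=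
  ((List.range ((n - 2) / 2)).map fun k =>
    Equiv.swap (2 * (k + 1) + 1) (2 * (k + 1) + 2) *
      Equiv.swap (n + 2 * (k + 1) + 1) (n + 2 * (k + 1) + 2)).prod

/-- `βᵢ` generators of the standard copy of the Coxeter group `Dₙ` inside `Sym(2n)`
(realized as permutations of `ℕ`, moving only points in `{1,…,2n}`). -/
def beta (n i : ℕ) : Equiv.Perm ℕ :=
  if i = 0 then Equiv.swap 1 (n + 1) * Equiv.swap 2 (n + 2)
  else Equiv.swap i (i + 1) * Equiv.swap (n + i) (n + i + 1)

/-- The standard copy of the Coxeter group `Dₙ` in `Sym(2n)`, generated by `β₀,…,β_{n-1}`. -/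
def Dn (n : ℕ) : Subgroup (Equiv.Perm ℕ) :=
  Subgroup.closure {g | ∃ i < n, g = beta n i}



private lemma conj2 (w : Perm ℕ) (a b c d : ℕ) :
    w * (Equiv.swap a b * Equiv.swap c d) * w⁻¹ =
      Equiv.swap (w a) (w b) * Equiv.swap (w c) (w d) := by
  rw [Equiv.swap_apply_apply, Equiv.swap_apply_apply]
  group

private lemma step {H : Subgroup (Perm ℕ)} (w : Perm ℕ) (hw : w ∈ H)
    {a b c d a' b' c' d' : ℕ}
    (h : Equiv.swap a b * Equiv.swap c d ∈ H)
    (ha : w a = a') (hb : w b = b') (hc : w c = c') (hd : w d = d') :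
    Equiv.swap a' b' * Equiv.swap c' d' ∈ H := by
  subst ha hb hc hd
  rw [← conj2]
  exact mul_mem (mul_mem hw h) (inv_mem hw)

private lemma pairswap_fix {a b c d x : ℕ} (h1 : x ≠ a) (h2 : x ≠ b) (h3 : x ≠ c)
    (h4 : x ≠ d) : (Equiv.swap a b * Equiv.swap c d) x = x := by
  rw [Equiv.Perm.mul_apply, Equiv.swap_apply_of_ne_of_ne h3 h4,
    Equiv.swap_apply_of_ne_of_ne h1 h2]

private lemma pairswap_left {a b c d : ℕ} (h1 : a ≠ c) (h2 : a ≠ d) :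
    (Equiv.swap a b * Equiv.swap c d) a = b := by
  rw [Equiv.Perm.mul_apply, Equiv.swap_apply_of_ne_of_ne h1 h2, Equiv.swap_apply_left]

private lemma pairswap_right {a b c d : ℕ} (h1 : b ≠ c) (h2 : b ≠ d) :
    (Equiv.swap a b * Equiv.swap c d) b = a := by
  rw [Equiv.Perm.mul_apply, Equiv.swap_apply_of_ne_of_ne h1 h2, Equiv.swap_apply_right]

private lemma pairswap_left2 {a b c d : ℕ} (h1 : d ≠ a) (h2 : d ≠ b) :
    (Equiv.swap a b * Equiv.swap c d) c = d := by
  rw [Equiv.Perm.mul_apply, Equiv.swap_apply_left, Equiv.swap_apply_of_ne_of_ne h1 h2]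

private lemma pairswap_right2 {a b c d : ℕ} (h1 : c ≠ a) (h2 : c ≠ b) :
    (Equiv.swap a b * Equiv.swap c d) d = c := by
  rw [Equiv.Perm.mul_apply, Equiv.swap_apply_right, Equiv.swap_apply_of_ne_of_ne h1 h2]

private lemma swcomm {a b c d : ℕ} (h1 : a ≠ c) (h2 : a ≠ d) (h3 : b ≠ c) (h4 : b ≠ d) :
    Commute (Equiv.swap a b) (Equiv.swap c d) := by
  have h := Equiv.swap_apply_apply (Equiv.swap c d) a b
  rw [Equiv.swap_apply_of_ne_of_ne h1 h2, Equiv.swap_apply_of_ne_of_ne h3 h4,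
    Equiv.swap_inv] at h
  show _ = _
  calc Equiv.swap a b * Equiv.swap c d
      = Equiv.swap c d * Equiv.swap a b * Equiv.swap c d * Equiv.swap c d := by
        rw [← h]
    _ = Equiv.swap c d * Equiv.swap a b := by
        rw [mul_assoc, Equiv.swap_mul_self, mul_one]

private lemma listprod_fix (l : List (Perm ℕ)) (x : ℕ) (h : ∀ g ∈ l, g x = x) :
    l.prod x = x := by
  induction l with
  | nil => rfl
  | cons g t ih =>
    rw [List.prod_cons, Equiv.Perm.mul_apply, ih (fun g hg => h g (List.mem_cons_of_mem _ hg)),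
      h g List.mem_cons_self]

private lemma rangeprod_apply (φ : ℕ → Perm ℕ) (m x k : ℕ) (hk : k < m)
    (hfix : ∀ j, j < m → j ≠ k → φ j x = x)
    (hfix2 : ∀ j, j < m → j ≠ k → φ j (φ k x) = φ k x) :
    ((List.range m).map φ).prod x = φ k x := by
  have base : ((List.range (k + 1)).map φ).prod x = φ k x := by
    rw [List.range_succ, List.map_append, List.prod_append]
    simp only [List.map_cons, List.map_nil, List.prod_cons, List.prod_nil, mul_one]
    rw [Equiv.Perm.mul_apply]
    exact listprod_fix _ _ (fun g hg => by
      obtain ⟨j, hj, rfl⟩ := List.mem_map.1 hg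
      exact hfix2 j (lt_of_lt_of_le (List.mem_range.1 hj) hk.le) (List.mem_range.1 hj).ne)
  have main : ∀ M, k + 1 ≤ M → M ≤ m → ((List.range M).map φ).prod x = φ k x := by
    intro M
    induction M with
    | zero => omega
    | succ M ih =>
      intro h1 h2
      rcases Nat.lt_or_ge k M with h | h
      · rw [List.range_succ, List.map_append, List.prod_append]
        simp only [List.map_cons, List.map_nil, List.prod_cons, List.prod_nil, mul_one]
        rw [Equiv.Perm.mul_apply, hfix M h2 (by omega), ih (by omega) (by omega)]
      · have : M = k := by omega
        subst this
        exact base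
  exact main m hk le_rfl

private lemma rangeprod_apply' (φ : ℕ → Perm ℕ) (m x k v : ℕ) (hk : k < m)
    (hv : φ k x = v)
    (hfix : ∀ j, j < m → j ≠ k → φ j x = x)
    (hfix2 : ∀ j, j < m → j ≠ k → φ j v = v) :
    ((List.range m).map φ).prod x = v := by
  rw [rangeprod_apply φ m x k hk hfix (fun j hj hne => by rw [hv]; exact hfix2 j hj hne), hv]

private lemma u2_fixpt {n : ℕ} (x : ℕ)
    (h : ∀ j, j < (n - 2) / 2 →
      x ≠ 2 * (j + 1) ∧ x ≠ 2 * (j + 1) + 1 ∧ x ≠ n + 2 * (j + 1) ∧ x ≠ n + 2 * (j + 1) + 1) :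
    u2 n x = x := by
  unfold u2
  refine listprod_fix _ _ (fun g hg => ?_)
  obtain ⟨i, hi, rfl⟩ := List.mem_map.1 hg
  obtain ⟨a1, a2, a3, a4⟩ := h i (List.mem_range.1 hi)
  exact pairswap_fix a1 a2 a3 a4

private lemma u3_fixpt {n : ℕ} (x : ℕ)
    (h : ∀ j, j < (n - 2) / 2 →
      x ≠ 2 * (j + 1) + 1 ∧ x ≠ 2 * (j + 1) + 2 ∧ x ≠ n + 2 * (j + 1) + 1 ∧
        x ≠ n + 2 * (j + 1) + 2) :
    u3 n x = x := by
  unfold u3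
  refine listprod_fix _ _ (fun g hg => ?_)
  obtain ⟨i, hi, rfl⟩ := List.mem_map.1 hg
  obtain ⟨a1, a2, a3, a4⟩ := h i (List.mem_range.1 hi)
  exact pairswap_fix a1 a2 a3 a4

private lemma u2_ee {n : ℕ} (he : Even n) (y : ℕ) (h2 : 2 ≤ y) (hy : y + 2 ≤ n)
    (hp : y % 2 = 0) :
    u2 n y = y + 1 ∧ u2 n (y + 1) = y ∧ u2 n (n + y) = n + y + 1 ∧ u2 n (n + y + 1) = n + y := by
  obtain ⟨m0, hm0⟩ := he
  obtain ⟨j, hj⟩ : ∃ j, y = 2 * (j + 1) := ⟨y / 2 - 1, by omega⟩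
  subst hj
  have hk : j < (n - 2) / 2 := by omega
  refine ⟨?_, ?_, ?_, ?_⟩ <;> unfold u2
  · exact rangeprod_apply' _ _ _ j _ hk (pairswap_left (by omega) (by omega))
      (fun i hi hne => pairswap_fix (by omega) (by omega) (by omega) (by omega))
      (fun i hi hne => pairswap_fix (by omega) (by omega) (by omega) (by omega))
  · exact rangeprod_apply' _ _ _ j _ hk (pairswap_right (by omega) (by omega))
      (fun i hi hne => pairswap_fix (by omega) (by omega) (by omega) (by omega))
      (fun i hi hne => pairswap_fix (by omega) (by omega) (by omega) (by omega))
  · exact rangeprod_apply' _ _ _ j _ hk (pairswap_left2 (by omega) (by omega))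
      (fun i hi hne => pairswap_fix (by omega) (by omega) (by omega) (by omega))
      (fun i hi hne => pairswap_fix (by omega) (by omega) (by omega) (by omega))
  · exact rangeprod_apply' _ _ _ j _ hk (pairswap_right2 (by omega) (by omega))
      (fun i hi hne => pairswap_fix (by omega) (by omega) (by omega) (by omega))
      (fun i hi hne => pairswap_fix (by omega) (by omega) (by omega) (by omega))

private lemma u3_oo {n : ℕ} (he : Even n) (y : ℕ) (h3 : 3 ≤ y) (hy : y + 1 ≤ n)
    (hp : y % 2 = 1) :
    u3 n y = y + 1 ∧ u3 n (y + 1) = y ∧ u3 n (n + y) = n + y + 1 ∧ u3 n (n + y + 1) = n + y := by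
  obtain ⟨m0, hm0⟩ := he
  obtain ⟨j, hj⟩ : ∃ j, y = 2 * (j + 1) + 1 := ⟨y / 2 - 1, by omega⟩
  subst hj
  have hk : j < (n - 2) / 2 := by omega
  have e1 : 2 * (j + 1) + 1 + 1 = 2 * (j + 1) + 2 := rfl
  have e2 : n + (2 * (j + 1) + 1) = n + 2 * (j + 1) + 1 := by omega
  have e3 : n + (2 * (j + 1) + 1) + 1 = n + 2 * (j + 1) + 2 := by omega
  refine ⟨?_, ?_, ?_, ?_⟩ <;> unfold u3
  · exact rangeprod_apply' _ _ _ j _ hk (pairswap_left (by omega) (by omega))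
      (fun i hi hne => pairswap_fix (by omega) (by omega) (by omega) (by omega))
      (fun i hi hne => pairswap_fix (by omega) (by omega) (by omega) (by omega))
  · rw [e1]
    exact rangeprod_apply' _ _ _ j _ hk (pairswap_right (by omega) (by omega))
      (fun i hi hne => pairswap_fix (by omega) (by omega) (by omega) (by omega))
      (fun i hi hne => pairswap_fix (by omega) (by omega) (by omega) (by omega))
  · rw [e2, show n + 2 * (j + 1) + 1 + 1 = n + 2 * (j + 1) + 2 from rfl]
    exact rangeprod_apply' _ _ _ j _ hk (pairswap_left2 (by omega) (by omega))
      (fun i hi hne => pairswap_fix (by omega) (by omega) (by omega) (by omega))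
      (fun i hi hne => pairswap_fix (by omega) (by omega) (by omega) (by omega))
  · rw [e3, e2]
    exact rangeprod_apply' _ _ _ j _ hk (pairswap_right2 (by omega) (by omega))
      (fun i hi hne => pairswap_fix (by omega) (by omega) (by omega) (by omega))
      (fun i hi hne => pairswap_fix (by omega) (by omega) (by omega) (by omega))

private lemma conj2' (w x y : Perm ℕ) : w * (x * y) * w⁻¹ = (w * x * w⁻¹) * (w * y * w⁻¹) := by
  group

private lemma mid_comm (a b c d : Perm ℕ) (h : b * c = c * b) :
    (a * b) * (c * d) = (a * c) * (b * d) := by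
  rw [mul_assoc, ← mul_assoc b c d, h, mul_assoc, ← mul_assoc]

private lemma sq_one (x y : Perm ℕ) (hx : x * x = 1) (hy : y * y = 1) (h : x * y = y * x) :
    (x * y) * (x * y) = 1 := by
  calc (x * y) * (x * y) = x * (y * x) * y := by group
    _ = x * (x * y) * y := by rw [← h]
    _ = (x * x) * (y * y) := by group
    _ = 1 := by rw [hx, hy, one_mul]

private lemma cancel_right (a b c : Perm ℕ) (hc : c * b = b * c) (hcc : c * c = 1) :
    (a * c) * (b * c) = a * b := by
  rw [mul_assoc, ← mul_assoc c b c, hc, mul_assoc b c c, hcc, mul_one]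

private lemma commute_cube (A B : Perm ℕ) (h : Commute A B) (hA : A ^ 3 = 1) (hB : B * B = 1) :
    (A * B) ^ 3 = B := by
  rw [h.mul_pow, hA, one_mul, show (3 : ℕ) = 2 + 1 from rfl, pow_succ, pow_two, hB, one_mul]

private lemma three_cycle {a b c : ℕ} (h1 : a ≠ b) (h2 : a ≠ c) (h3 : b ≠ c) :
    (Equiv.swap a b * Equiv.swap a c) ^ 3 = 1 := by
  have sA : (Equiv.swap a b * Equiv.swap a c) a = c := by
    rw [Equiv.Perm.mul_apply, Equiv.swap_apply_left, Equiv.swap_apply_of_ne_of_ne h2.symm h3.symm]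
  have sB : (Equiv.swap a b * Equiv.swap a c) b = a := by
    rw [Equiv.Perm.mul_apply, Equiv.swap_apply_of_ne_of_ne h1.symm h3, Equiv.swap_apply_right]
  have sC : (Equiv.swap a b * Equiv.swap a c) c = b := by
    rw [Equiv.Perm.mul_apply, Equiv.swap_apply_right, Equiv.swap_apply_left]
  rw [show (3 : ℕ) = 2 + 1 from rfl, pow_succ, pow_two]
  ext x
  show (Equiv.swap a b * Equiv.swap a c) ((Equiv.swap a b * Equiv.swap a c)
    ((Equiv.swap a b * Equiv.swap a c) x)) = x
  rcases eq_or_ne x a with rfl | hxa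
  · rw [sA, sC, sB]
  rcases eq_or_ne x b with rfl | hxb
  · rw [sB, sA, sC]
  rcases eq_or_ne x c with rfl | hxc
  · rw [sC, sB, sA]
  · rw [pairswap_fix hxa hxb hxa hxc, pairswap_fix hxa hxb hxa hxc,
      pairswap_fix hxa hxb hxa hxc]

private lemma hg_mem {n : ℕ} (hn : 6 ≤ n) (he : Even n) (H : Subgroup (Perm ℕ))
    (h1 : u1 n ∈ H) (h2 : u2 n ∈ H) :
    Equiv.swap (n - 2 + 1) (n + (n - 2 + 1)) * Equiv.swap (n - 2) (n + (n - 2)) ∈ H := by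
  have hm0 := he
  obtain ⟨m0, hm0⟩ := hm0
  have hu1d : u1 n = (Equiv.swap 1 2 * Equiv.swap (n + 1) (n + 2)) *
      (Equiv.swap (n - 2 + 1) (n + (n - 2 + 1)) * Equiv.swap n (n + n)) := by
    unfold u1
    rw [show n - 1 = n - 2 + 1 by omega, show 2 * n - 1 = n + (n - 2 + 1) by omega,
      show 2 * n = n + n by omega, mul_assoc]
  have v1 : u2 n 1 = 1 := u2_fixpt 1 (fun j hj => by omega)
  have v2 : u2 n 2 = 3 := by have := (u2_ee he 2 le_rfl (by omega) rfl).1; omega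
  have v3 : u2 n (n + 1) = n + 1 := u2_fixpt _ (fun j hj => by omega)
  have v4 : u2 n (n + 2) = n + 3 := by have := (u2_ee he 2 le_rfl (by omega) rfl).2.2.1; omega
  have v5 : u2 n (n - 2 + 1) = n - 2 :=
    (u2_ee he (n - 2) (by omega) (by omega) (by omega)).2.1
  have v6 : u2 n (n + (n - 2 + 1)) = n + (n - 2) := by
    have := (u2_ee he (n - 2) (by omega) (by omega) (by omega)).2.2.2
    rw [show n + (n - 2 + 1) = n + (n - 2) + 1 from rfl]
    exact this
  have v7 : u2 n n = n := u2_fixpt _ (fun j hj => by omega)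
  have v8 : u2 n (n + n) = n + n := u2_fixpt _ (fun j hj => by omega)
  have hX : u2 n * u1 n * (u2 n)⁻¹ =
      (Equiv.swap 1 3 * Equiv.swap (n + 1) (n + 3)) *
        (Equiv.swap (n - 2) (n + (n - 2)) * Equiv.swap n (n + n)) := by
    rw [hu1d, conj2', conj2, conj2, v1, v2, v3, v4, v5, v6, v7, v8]
  have key : (u1 n * (u2 n * u1 n * (u2 n)⁻¹)) ^ 3 ∈ H :=
    pow_mem (mul_mem h1 (mul_mem (mul_mem h2 h1) (inv_mem h2))) 3
  rw [hX, hu1d] at key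
  -- rearrange (P1*Q1)*(P2*Q2) = (P1*P2)*(Q1*Q2)
  have hc1 : (Equiv.swap (n - 2 + 1) (n + (n - 2 + 1)) * Equiv.swap n (n + n)) *
      (Equiv.swap 1 3 * Equiv.swap (n + 1) (n + 3)) =
      (Equiv.swap 1 3 * Equiv.swap (n + 1) (n + 3)) *
      (Equiv.swap (n - 2 + 1) (n + (n - 2 + 1)) * Equiv.swap n (n + n)) := by
    refine Commute.eq ?_
    refine Commute.mul_left (Commute.mul_right ?_ ?_) (Commute.mul_right ?_ ?_) <;>
      exact swcomm (by omega) (by omega) (by omega) (by omega)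
  rw [mid_comm _ _ _ _ hc1] at key
  -- collapse Q1*Q2
  have hB : (Equiv.swap (n - 2 + 1) (n + (n - 2 + 1)) * Equiv.swap n (n + n)) *
      (Equiv.swap (n - 2) (n + (n - 2)) * Equiv.swap n (n + n)) =
      Equiv.swap (n - 2 + 1) (n + (n - 2 + 1)) * Equiv.swap (n - 2) (n + (n - 2)) := by
    rw [← mul_assoc, mul_assoc (Equiv.swap (n - 2 + 1) (n + (n - 2 + 1)))]
    rw [show Equiv.swap n (n + n) * Equiv.swap (n - 2) (n + (n - 2)) =
      Equiv.swap (n - 2) (n + (n - 2)) * Equiv.swap n (n + n) from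
      (swcomm (by omega) (by omega) (by omega) (by omega)).eq]
    rw [← mul_assoc, mul_assoc _ (Equiv.swap n (n + n)), Equiv.swap_mul_self, mul_one]
  rw [hB] at key
  -- cube
  have hA3 : ((Equiv.swap 1 2 * Equiv.swap (n + 1) (n + 2)) *
      (Equiv.swap 1 3 * Equiv.swap (n + 1) (n + 3))) ^ 3 = 1 := by
    rw [mid_comm _ _ _ _ (swcomm (by omega) (by omega) (by omega) (by omega)).eq]
    have hcm : Commute (Equiv.swap 1 2 * Equiv.swap 1 3)
        (Equiv.swap (n + 1) (n + 2) * Equiv.swap (n + 1) (n + 3)) := by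
      refine Commute.mul_left (Commute.mul_right ?_ ?_) (Commute.mul_right ?_ ?_) <;>
        exact swcomm (by omega) (by omega) (by omega) (by omega)
    rw [hcm.mul_pow, three_cycle (by omega) (by omega) (by omega),
      three_cycle (by omega) (by omega) (by omega), one_mul]
  have hB2 : (Equiv.swap (n - 2 + 1) (n + (n - 2 + 1)) * Equiv.swap (n - 2) (n + (n - 2))) *
      (Equiv.swap (n - 2 + 1) (n + (n - 2 + 1)) * Equiv.swap (n - 2) (n + (n - 2))) = 1 :=
    sq_one _ _ (Equiv.swap_mul_self _ _) (Equiv.swap_mul_self _ _)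
      (swcomm (by omega) (by omega) (by omega) (by omega)).eq
  have hAB : Commute ((Equiv.swap 1 2 * Equiv.swap (n + 1) (n + 2)) *
      (Equiv.swap 1 3 * Equiv.swap (n + 1) (n + 3)))
      (Equiv.swap (n - 2 + 1) (n + (n - 2 + 1)) * Equiv.swap (n - 2) (n + (n - 2))) := by
    refine Commute.mul_left (Commute.mul_left (Commute.mul_right ?_ ?_) (Commute.mul_right ?_ ?_))
      (Commute.mul_left (Commute.mul_right ?_ ?_) (Commute.mul_right ?_ ?_)) <;>
      exact swcomm (by omega) (by omega) (by omega) (by omega)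
  rwa [commute_cube _ _ hAB hA3 hB2] at key

private lemma cancel_left (s a b : Perm ℕ) (hc : a * s = s * a) (hss : s * s = 1) :
    (s * a) * (s * b) = a * b := by
  calc (s * a) * (s * b) = s * (a * s) * b := by group
    _ = s * (s * a) * b := by rw [hc]
    _ = (s * s) * (a * b) := by group
    _ = a * b := by rw [hss, one_mul]

section Hside

variable {n : ℕ} {H : Subgroup (Perm ℕ)}

private lemma u1_fix (hn : 6 ≤ n) (x : ℕ) (c1 : x ≠ 1) (c2 : x ≠ 2) (c3 : x ≠ n + 1)
    (c4 : x ≠ n + 2) (c5 : x ≠ n - 1) (c6 : x ≠ 2 * n - 1) (c7 : x ≠ n) (c8 : x ≠ 2 * n) :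
    u1 n x = x := by
  show (Equiv.swap 1 2) ((Equiv.swap (n + 1) (n + 2))
    ((Equiv.swap (n - 1) (2 * n - 1)) ((Equiv.swap n (2 * n)) x))) = x
  rw [Equiv.swap_apply_of_ne_of_ne c7 c8, Equiv.swap_apply_of_ne_of_ne c5 c6,
    Equiv.swap_apply_of_ne_of_ne c3 c4, Equiv.swap_apply_of_ne_of_ne c1 c2]

private lemma u1_ap2 (hn : 6 ≤ n) : u1 n 2 = 1 := by
  show (Equiv.swap 1 2) ((Equiv.swap (n + 1) (n + 2))
    ((Equiv.swap (n - 1) (2 * n - 1)) ((Equiv.swap n (2 * n)) 2))) = 1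
  rw [Equiv.swap_apply_of_ne_of_ne (show (2:ℕ) ≠ n by omega) (show (2:ℕ) ≠ 2*n by omega),
    Equiv.swap_apply_of_ne_of_ne (show (2:ℕ) ≠ n-1 by omega) (show (2:ℕ) ≠ 2*n-1 by omega),
    Equiv.swap_apply_of_ne_of_ne (show (2:ℕ) ≠ n+1 by omega) (show (2:ℕ) ≠ n+2 by omega),
    Equiv.swap_apply_right]

private lemma u1_apn2 (hn : 6 ≤ n) : u1 n (n + 2) = n + 1 := by
  show (Equiv.swap 1 2) ((Equiv.swap (n + 1) (n + 2))
    ((Equiv.swap (n - 1) (2 * n - 1)) ((Equiv.swap n (2 * n)) (n + 2)))) = n + 1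
  rw [Equiv.swap_apply_of_ne_of_ne (show n+2 ≠ n by omega) (show n+2 ≠ 2*n by omega),
    Equiv.swap_apply_of_ne_of_ne (show n+2 ≠ n-1 by omega) (show n+2 ≠ 2*n-1 by omega),
    Equiv.swap_apply_right, Equiv.swap_apply_of_ne_of_ne (show n+1 ≠ 1 by omega)
    (show n+1 ≠ 2 by omega)]

private lemma pairC (hn : 6 ≤ n) (he : Even n)
    (h1 : u1 n ∈ H) (h2 : u2 n ∈ H) (h3 : u3 n ∈ H) :
    ∀ a, 2 ≤ a → a + 4 ≤ n →
      Equiv.swap (a + 4) (n + (a + 4)) * Equiv.swap a (n + a) ∈ H := by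
  obtain ⟨m0, hm0⟩ := id he
  have hg := hg_mem hn he H h1 h2
  -- base : pair (n, n-4)
  have st1 : Equiv.swap (n - 4 + 4) (n + (n - 4 + 4)) *
      Equiv.swap (n - 4 + 1) (n + (n - 4 + 1)) ∈ H := by
    refine step (u3 n) h3 hg ?_ ?_ ?_ ?_
    · have hv := (u3_oo he (n - 2 + 1) (by omega) (by omega) (by omega)).1
      omega
    · have hv := (u3_oo he (n - 2 + 1) (by omega) (by omega) (by omega)).2.2.1
      omega
    · have hv := (u3_oo he (n - 4 + 1) (by omega) (by omega) (by omega)).2.1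
      rw [show n - 4 + 1 + 1 = n - 2 from by omega] at hv
      omega
    · have hv := (u3_oo he (n - 4 + 1) (by omega) (by omega) (by omega)).2.2.2
      rw [show n + (n - 4 + 1) + 1 = n + (n - 2) from by omega] at hv
      omega
  have base : Equiv.swap (n - 4 + 4) (n + (n - 4 + 4)) *
      Equiv.swap (n - 4) (n + (n - 4)) ∈ H := by
    refine step (u2 n) h2 st1 ?_ ?_ ?_ ?_
    · exact u2_fixpt _ (fun j hj => by omega)
    · exact u2_fixpt _ (fun j hj => by omega)
    · exact (u2_ee he (n - 4) (by omega) (by omega) (by omega)).2.1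
    · have hv := (u2_ee he (n - 4) (by omega) (by omega) (by omega)).2.2.2
      rw [show n + (n - 4) + 1 = n + (n - 4 + 1) from rfl] at hv
      omega
  suffices key : ∀ k a, 2 ≤ a → a + 4 + k = n →
      Equiv.swap (a + 4) (n + (a + 4)) * Equiv.swap a (n + a) ∈ H by
    intro a ha hb
    exact key (n - (a + 4)) a ha (by omega)
  intro k
  induction k with
  | zero =>
    intro a ha hsum
    have e : a = n - 4 := by omega
    subst e
    exact base
  | succ k ih =>
    intro a ha hsum
    have prev := ih (a + 1) (by omega) (by omega)
    rcases Nat.even_or_odd a with ⟨t, ht⟩ | ⟨t, ht⟩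
    · -- a even, a+1 odd : conjugate by u2
      refine step (u2 n) h2 prev ?_ ?_ ?_ ?_
      · have hv := (u2_ee he (a + 4) (by omega) (by omega) (by omega)).2.1
        rw [show a + 4 + 1 = a + 1 + 4 from by omega] at hv
        omega
      · have hv := (u2_ee he (a + 4) (by omega) (by omega) (by omega)).2.2.2
        rw [show n + (a + 4) + 1 = n + (a + 1 + 4) from by omega] at hv
        omega
      · exact (u2_ee he a (by omega) (by omega) (by omega)).2.1
      · have hv := (u2_ee he a (by omega) (by omega) (by omega)).2.2.2
        rw [show n + a + 1 = n + (a + 1) from rfl] at hv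
        omega
    · -- a odd : conjugate by u3
      refine step (u3 n) h3 prev ?_ ?_ ?_ ?_
      · have hv := (u3_oo he (a + 4) (by omega) (by omega) (by omega)).2.1
        rw [show a + 4 + 1 = a + 1 + 4 from by omega] at hv
        omega
      · have hv := (u3_oo he (a + 4) (by omega) (by omega) (by omega)).2.2.2
        rw [show n + (a + 4) + 1 = n + (a + 1 + 4) from by omega] at hv
        omega
      · exact (u3_oo he a (by omega) (by omega) (by omega)).2.1
      · have hv := (u3_oo he a (by omega) (by omega) (by omega)).2.2.2
        rw [show n + a + 1 = n + (a + 1) from rfl] at hv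
        omega

private lemma hq_mem (hn : 6 ≤ n) (he : Even n)
    (h1 : u1 n ∈ H) (h2 : u2 n ∈ H) (h3 : u3 n ∈ H) :
    Equiv.swap 6 (n + 6) * Equiv.swap 1 (n + 1) ∈ H := by
  obtain ⟨m0, hm0⟩ := id he
  have c2 := pairC hn he h1 h2 h3 2 le_rfl (by omega)
  rcases eq_or_ne n 6 with rfl | hne
  · have st := step (u1 6) h1 c2 (show u1 6 (2 + 4) = 12 from by decide)
      (show u1 6 (6 + (2 + 4)) = 6 from by decide)
      (show u1 6 2 = 1 from by decide) (show u1 6 (6 + 2) = 6 + 1 from by decide)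
    rwa [show (12 : ℕ) = 6 + 6 from by norm_num, Equiv.swap_comm (6 + 6) 6] at st
  · have h8 : 8 ≤ n := by omega
    refine step (u1 n) h1 c2 ?_ ?_ ?_ ?_
    · have := u1_fix hn (2 + 4) (by omega) (by omega) (by omega) (by omega) (by omega)
        (by omega) (by omega) (by omega)
      omega
    · have := u1_fix hn (n + (2 + 4)) (by omega) (by omega) (by omega) (by omega) (by omega)
        (by omega) (by omega) (by omega)
      omega
    · exact u1_ap2 hn
    · have := u1_apn2 hn
      omega

private lemma hB_mem (hn : 6 ≤ n) (he : Even n)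
    (h1 : u1 n ∈ H) (h2 : u2 n ∈ H) (h3 : u3 n ∈ H) :
    ∀ y, 2 ≤ y → y ≤ n → Equiv.swap y (n + y) * Equiv.swap 1 (n + 1) ∈ H := by
  obtain ⟨m0, hm0⟩ := id he
  have q6 := hq_mem hn he h1 h2 h3
  have u3f1 : u3 n 1 = 1 := u3_fixpt _ (fun j hj => by omega)
  have u3fn1 : u3 n (n + 1) = n + 1 := u3_fixpt _ (fun j hj => by omega)
  have u2f1 : u2 n 1 = 1 := u2_fixpt _ (fun j hj => by omega)
  have u2fn1 : u2 n (n + 1) = n + 1 := u2_fixpt _ (fun j hj => by omega)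
  have q5 : Equiv.swap 5 (n + 5) * Equiv.swap 1 (n + 1) ∈ H := by
    refine step (u3 n) h3 q6 ?_ ?_ u3f1 u3fn1
    · have hv := (u3_oo he 5 (by omega) (by omega) (by omega)).2.1
      rw [show (5 : ℕ) + 1 = 6 from by norm_num] at hv
      omega
    · have hv := (u3_oo he 5 (by omega) (by omega) (by omega)).2.2.2
      rw [show n + 5 + 1 = n + 6 from by omega] at hv
      omega
  have q4 : Equiv.swap 4 (n + 4) * Equiv.swap 1 (n + 1) ∈ H := by
    refine step (u2 n) h2 q5 ?_ ?_ u2f1 u2fn1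
    · have hv := (u2_ee he 4 (by omega) (by omega) (by omega)).2.1
      rw [show (4 : ℕ) + 1 = 5 from by norm_num] at hv
      omega
    · have hv := (u2_ee he 4 (by omega) (by omega) (by omega)).2.2.2
      rw [show n + 4 + 1 = n + 5 from by omega] at hv
      omega
  have q3 : Equiv.swap 3 (n + 3) * Equiv.swap 1 (n + 1) ∈ H := by
    refine step (u3 n) h3 q4 ?_ ?_ u3f1 u3fn1
    · have hv := (u3_oo he 3 (by omega) (by omega) (by omega)).2.1
      rw [show (3 : ℕ) + 1 = 4 from by norm_num] at hv
      omega
    · have hv := (u3_oo he 3 (by omega) (by omega) (by omega)).2.2.2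
      rw [show n + 3 + 1 = n + 4 from by omega] at hv
      omega
  have q2 : Equiv.swap 2 (n + 2) * Equiv.swap 1 (n + 1) ∈ H := by
    refine step (u2 n) h2 q3 ?_ ?_ u2f1 u2fn1
    · have hv := (u2_ee he 2 (by omega) (by omega) (by omega)).2.1
      rw [show (2 : ℕ) + 1 = 3 from by norm_num] at hv
      omega
    · have hv := (u2_ee he 2 (by omega) (by omega) (by omega)).2.2.2
      rw [show n + 2 + 1 = n + 3 from by omega] at hv
      omega
  intro y hy
  induction y, hy using Nat.le_induction with
  | base => intro _; exact q2
  | succ y hy ih =>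
    intro hyn
    have prev := ih (by omega)
    rcases Nat.even_or_odd y with ⟨t, ht⟩ | ⟨t, ht⟩
    · refine step (u2 n) h2 prev ?_ ?_ u2f1 u2fn1
      · exact (u2_ee he y (by omega) (by omega) (by omega)).1
      · have hv := (u2_ee he y (by omega) (by omega) (by omega)).2.2.1
        omega
    · refine step (u3 n) h3 prev ?_ ?_ u3f1 u3fn1
      · exact (u3_oo he y (by omega) (by omega) (by omega)).1
      · have hv := (u3_oo he y (by omega) (by omega) (by omega)).2.2.1
        omega

end Hside

section Final

variable {n : ℕ} {H : Subgroup (Perm ℕ)}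

private lemma hu1_decomp (hn : 6 ≤ n) : u1 n =
    (Equiv.swap 1 2 * Equiv.swap (n + 1) (n + 2)) *
      (Equiv.swap (n - 2 + 1) (n + (n - 2 + 1)) * Equiv.swap n (n + n)) := by
  unfold u1
  rw [show n - 1 = n - 2 + 1 by omega, show 2 * n - 1 = n + (n - 2 + 1) by omega,
    show 2 * n = n + n by omega, mul_assoc]

private lemma betas_in_H (hn : 6 ≤ n) (he : Even n)
    (h1 : u1 n ∈ H) (h2 : u2 n ∈ H) (h3 : u3 n ∈ H) :
    ∀ i, i < n → beta n i ∈ H := by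
  obtain ⟨m0, hm0⟩ := id he
  have u3f1 : u3 n 1 = 1 := u3_fixpt _ (fun j hj => by omega)
  have u3fn1 : u3 n (n + 1) = n + 1 := u3_fixpt _ (fun j hj => by omega)
  have u2f1 : u2 n 1 = 1 := u2_fixpt _ (fun j hj => by omega)
  have u2fn1 : u2 n (n + 1) = n + 1 := u2_fixpt _ (fun j hj => by omega)
  have hB := hB_mem hn he h1 h2 h3
  have hgam : Equiv.swap (n - 2 + 1) (n + (n - 2 + 1)) * Equiv.swap n (n + n) ∈ H := by
    have hmm := mul_mem (hB (n - 2 + 1) (by omega) (by omega)) (hB n (by omega) le_rfl)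
    rwa [cancel_right _ _ _
      (swcomm (by omega) (by omega) (by omega) (by omega)).eq (Equiv.swap_mul_self _ _)] at hmm
  have hbeta1 : Equiv.swap 1 2 * Equiv.swap (n + 1) (n + 2) ∈ H := by
    have hmm := mul_mem h1 hgam
    rw [hu1_decomp hn, mul_assoc,
      sq_one _ _ (Equiv.swap_mul_self _ _) (Equiv.swap_mul_self _ _)
        (swcomm (by omega) (by omega) (by omega) (by omega)).eq, mul_one] at hmm
    exact hmm
  have hR : ∀ b, 2 ≤ b → b ≤ n → Equiv.swap 1 b * Equiv.swap (n + 1) (n + b) ∈ H := by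
    intro b hb
    induction b, hb using Nat.le_induction with
    | base => intro _; exact hbeta1
    | succ b hb ih =>
      intro hbn
      have prev := ih (by omega)
      rcases Nat.even_or_odd b with ⟨t, ht⟩ | ⟨t, ht⟩
      · refine step (u2 n) h2 prev u2f1 ?_ u2fn1 ?_
        · exact (u2_ee he b (by omega) (by omega) (by omega)).1
        · have hv := (u2_ee he b (by omega) (by omega) (by omega)).2.2.1
          omega
      · refine step (u3 n) h3 prev u3f1 ?_ u3fn1 ?_
        · exact (u3_oo he b (by omega) (by omega) (by omega)).1
        · have hv := (u3_oo he b (by omega) (by omega) (by omega)).2.2.1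
          omega
  have hbj : ∀ j, 2 ≤ j → j + 1 ≤ n →
      Equiv.swap j (j + 1) * Equiv.swap (n + j) (n + j + 1) ∈ H := by
    intro j hj hjn
    refine step (Equiv.swap 1 j * Equiv.swap (n + 1) (n + j))
      (hR j hj (by omega)) (hR (j + 1) (by omega) (by omega)) ?_ ?_ ?_ ?_
    · exact pairswap_left (by omega) (by omega)
    · exact pairswap_fix (by omega) (by omega) (by omega) (by omega)
    · exact pairswap_left2 (by omega) (by omega)
    · have hfix : (Equiv.swap 1 j * Equiv.swap (n + 1) (n + j)) (n + (j + 1)) = n + (j + 1) :=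
        pairswap_fix (by omega) (by omega) (by omega) (by omega)
      omega
  intro i hi
  rcases Nat.lt_or_ge i 2 with hlt | hge
  · interval_cases i
    · unfold beta
      rw [if_pos rfl]
      have hq := hB 2 (by omega) (by omega)
      rwa [(swcomm (by omega) (by omega) (by omega) (by omega)).eq] at hq
    · unfold beta
      rw [if_neg one_ne_zero]
      exact hbeta1
  · unfold beta
    rw [if_neg (by omega)]
    exact hbj i hge (by omega)

private lemma us_in_Dn (hn : 6 ≤ n) (he : Even n) :
    u1 n ∈ Dn n ∧ u2 n ∈ Dn n ∧ u3 n ∈ Dn n := by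
  obtain ⟨m0, hm0⟩ := id he
  have hbetaD : ∀ i, i < n → beta n i ∈ Dn n := fun i hi =>
    Subgroup.subset_closure ⟨i, hi, rfl⟩
  have hbD : ∀ i, 1 ≤ i → i + 1 ≤ n →
      Equiv.swap i (i + 1) * Equiv.swap (n + i) (n + i + 1) ∈ Dn n := by
    intro i hi1 hi2
    have h := hbetaD i (by omega)
    unfold beta at h
    rwa [if_neg (by omega)] at h
  have hb0D : Equiv.swap 1 (n + 1) * Equiv.swap 2 (n + 2) ∈ Dn n := by
    have h := hbetaD 0 (by omega)
    unfold beta at h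
    rwa [if_pos rfl] at h
  have hu2D : u2 n ∈ Dn n := by
    unfold u2
    refine Subgroup.list_prod_mem _ (fun x hx => ?_)
    obtain ⟨k, hk, rfl⟩ := List.mem_map.1 hx
    have hkr := List.mem_range.1 hk
    exact hbD (2 * (k + 1)) (by omega) (by omega)
  have hu3D : u3 n ∈ Dn n := by
    unfold u3
    refine Subgroup.list_prod_mem _ (fun x hx => ?_)
    obtain ⟨k, hk, rfl⟩ := List.mem_map.1 hx
    have hkr := List.mem_range.1 hk
    exact hbD (2 * (k + 1) + 1) (by omega) (by omega)
  have hBD : ∀ y, 2 ≤ y → y ≤ n →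
      Equiv.swap 1 (n + 1) * Equiv.swap y (n + y) ∈ Dn n := by
    intro y hy
    induction y, hy using Nat.le_induction with
    | base => intro _; exact hb0D
    | succ y hy ih =>
      intro hyn
      have prev := ih (by omega)
      refine step (Equiv.swap y (y + 1) * Equiv.swap (n + y) (n + y + 1))
        (hbD y (by omega) (by omega)) prev ?_ ?_ ?_ ?_
      · exact pairswap_fix (by omega) (by omega) (by omega) (by omega)
      · exact pairswap_fix (by omega) (by omega) (by omega) (by omega)
      · exact pairswap_left (by omega) (by omega)
      · have hfix := pairswap_left2 (a := y) (b := y + 1) (c := n + y) (d := n + y + 1)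
          (by omega) (by omega)
        omega
  have hgamD : Equiv.swap (n - 2 + 1) (n + (n - 2 + 1)) * Equiv.swap n (n + n) ∈ Dn n := by
    have hmm := mul_mem (hBD (n - 2 + 1) (by omega) (by omega)) (hBD n (by omega) le_rfl)
    rwa [cancel_left _ _ _
      (swcomm (by omega) (by omega) (by omega) (by omega)).eq (Equiv.swap_mul_self _ _)] at hmm
  have hu1D : u1 n ∈ Dn n := by
    have hP1 : Equiv.swap 1 2 * Equiv.swap (n + 1) (n + 2) ∈ Dn n :=
      hbD 1 (by omega) (by omega)
    have hmm := mul_mem hP1 hgamD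
    rwa [← hu1_decomp hn] at hmm
  exact ⟨hu1D, hu2D, hu3D⟩

end Final


/-- For even `n ≥ 6`, `⟨t₁,t₂,t₃⟩` equals the standard copy `⟨β₀,…,β_{n-1}⟩` of the
Coxeter group `Dₙ` in `Sym(2n)`. -/
theorem stmt13 (n : ℕ) (hn : 6 ≤ n) (he : Even n) :
    Subgroup.closure {u1 n, u2 n, u3 n} = Dn n := by
  apply le_antisymm
  · rw [Subgroup.closure_le]
    intro g hg
    obtain ⟨hu1D, hu2D, hu3D⟩ := us_in_Dn hn he
    simp only [Set.mem_insert_iff, Set.mem_singleton_iff] at hg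
    rcases hg with rfl | rfl | rfl
    · exact hu1D
    · exact hu2D
    · exact hu3D
  · unfold Dn
    rw [Subgroup.closure_le]
    rintro g ⟨i, hi, rfl⟩
    exact betas_in_H hn he
      (Subgroup.subset_closure (by simp)) (Subgroup.subset_closure (by simp))
      (Subgroup.subset_closure (by simp)) i hi
end

section
/- Let G = ⟨s₁,…,s_r⟩ ≤ W ≤ Sym(2n) be a string group generated by involutions, where W ≅ D_n with W = SN, S ≅ Sym(n) acting simultaneously on {1,…,n} and {n+1,…,2n}, and N the subgroup of even sign changes. If G_{1,…,r−1} = S is a string C-group and s_r ∈ N ∖ Z(G), then G = W and (G, {s₁,…,s_r}) is a string C-group. -/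
/-- The subgroup `N` of even sign changes: it is generated by (hence consists exactly of)
products of an even number of transpositions of the form `(i, n+i)`, `1 ≤ i ≤ n`. -/
def Neven (n : ℕ) : Subgroup (Equiv.Perm ℕ) :=
  Subgroup.closure {g | ∃ i ∈ Finset.Icc 1 n, ∃ j ∈ Finset.Icc 1 n,
    g = Equiv.swap i (n + i) * Equiv.swap j (n + j)}

/-- For a tuple `s : Fin r → G` and `J ⊆ {1,…,r}`, the subgroup `G_J = ⟨sⱼ : j ∈ J⟩`. -/
def subJ {G : Type*} [Group G] {r : ℕ} (s : Fin r → G) (J : Set (Fin r)) : Subgroup G :=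
  Subgroup.closure (s '' J)

/-- The intersection property `G_J ⊓ G_K = G_{J ∩ K}` holds for all subsets `J, K` of `A`;
`IsCOn s Set.univ` says that `(⟨s⟩, s)` is a string C-group provided `s` is a string
group generated by involutions. -/
def IsCOn {G : Type*} [Group G] {r : ℕ} (s : Fin r → G) (A : Set (Fin r)) : Prop :=
  ∀ J ⊆ A, ∀ K ⊆ A, subJ s J ⊓ subJ s K = subJ s (J ∩ K)

open Equiv Finset

/-- the function of the "sign change on A" permutation -/
def npfun (n : ℕ) (A : Finset ℕ) (x : ℕ) : ℕ :=
  if x ∈ A then n + x else if n < x ∧ x - n ∈ A then x - n else x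

lemma npfun_invol {n : ℕ} {A : Finset ℕ} (h : A ⊆ Finset.Icc 1 n) :
    Function.Involutive (npfun n A) := by
  intro x
  unfold npfun
  by_cases hx : x ∈ A
  · have h1 : 1 ≤ x ∧ x ≤ n := by simpa using h hx
    have h2 : n + x ∉ A := fun hc => by have := h hc; simp at this; omega
    simp [hx, h2, h1]
    omega
  · by_cases h3 : n < x ∧ x - n ∈ A
    · have h4 : 1 ≤ x - n ∧ x - n ≤ n := by simpa using h h3.2
      simp [hx, h3, h3.2]
      omega
    · simp [hx, h3]

/-- the "sign change on `A`" permutation: swaps `i ↔ n+i` for each `i ∈ A`. -/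
def nperm (n : ℕ) (A : Finset ℕ) : Equiv.Perm ℕ :=
  if h : A ⊆ Finset.Icc 1 n then (npfun_invol h).toPerm else 1

lemma nperm_apply {n : ℕ} {A : Finset ℕ} (h : A ⊆ Finset.Icc 1 n) (x : ℕ) :
    nperm n A x = npfun n A x := by
  simp [nperm, h, Function.Involutive.coe_toPerm]

lemma nperm_empty (n : ℕ) : nperm n ∅ = 1 := by
  ext x
  rw [nperm_apply (by simp)]
  simp [npfun]

lemma nperm_mul {n : ℕ} {A B : Finset ℕ} (hA : A ⊆ Finset.Icc 1 n) (hB : B ⊆ Finset.Icc 1 n) :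
    nperm n A * nperm n B = nperm n (symmDiff A B) := by
  have hAB : symmDiff A B ⊆ Finset.Icc 1 n := by
    intro x hx
    rw [Finset.mem_symmDiff] at hx
    rcases hx with ⟨h1, _⟩ | ⟨h1, _⟩
    exacts [hA h1, hB h1]
  ext x
  rw [Equiv.Perm.mul_apply, nperm_apply hA, nperm_apply hB, nperm_apply hAB]
  unfold npfun
  by_cases hx : 1 ≤ x ∧ x ≤ n
  · -- x in low range
    have hxA : n + x ∉ A := fun hc => by have := hA hc; simp at this; omega
    have hnx : ¬ n < x := by omega
    by_cases hxB : x ∈ B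
    · have hsub : n + x - n = x := by omega
      by_cases hxA' : x ∈ A
      · have : x ∉ symmDiff A B := by rw [Finset.mem_symmDiff]; tauto
        simp [hxB, hxA, hxA', hsub, this, hnx]
        omega
      · have : x ∈ symmDiff A B := by rw [Finset.mem_symmDiff]; tauto
        simp [hxB, hxA, hxA', hsub, this, hnx]
    · have hnxB : ¬ (n < x ∧ x - n ∈ B) := by
        rintro ⟨h1, _⟩; omega
      by_cases hxA' : x ∈ A
      · have : x ∈ symmDiff A B := by rw [Finset.mem_symmDiff]; tauto
        simp [hxB, hnxB, hxA', this]
      · have : x ∉ symmDiff A B := by rw [Finset.mem_symmDiff]; tauto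
        simp [hxB, hnxB, hxA', this, hnx]
  · -- x not in low range
    have hxA : x ∉ A := fun hc => by have := hA hc; simp at this; omega
    have hxB : x ∉ B := fun hc => by have := hB hc; simp at this; omega
    have hxAB : x ∉ symmDiff A B := by rw [Finset.mem_symmDiff]; tauto
    by_cases hhi : n < x ∧ 1 ≤ x - n ∧ x - n ≤ n
    · -- x in high range
      by_cases hB' : x - n ∈ B
      · have hlow : 1 ≤ x - n ∧ x - n ≤ n := hhi.2
        have hAnx : n + (x - n) ∉ A := fun hc => by have := hA hc; simp at this; omega
        by_cases hA' : x - n ∈ A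
        · have : x - n ∉ symmDiff A B := by rw [Finset.mem_symmDiff]; tauto
          simp [hxB, hB', hhi.1, hA', hxAB, this]
          omega
        · have : x - n ∈ symmDiff A B := by rw [Finset.mem_symmDiff]; tauto
          simp [hxB, hB', hhi.1, hA', hxAB, this]
          intro h; omega
      · have h1 : ¬ (n < x ∧ x - n ∈ B) := by tauto
        by_cases hA' : x - n ∈ A
        · have : x - n ∈ symmDiff A B := by rw [Finset.mem_symmDiff]; tauto
          simp [hxB, hB', h1, hxA, hhi.1, hA', this, hxAB]
        · have : x - n ∉ symmDiff A B := by rw [Finset.mem_symmDiff]; tauto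
          simp [hxB, hB', h1, hxA, hA', this, hxAB]
    · -- x outside everything
      have h1 : ¬ (n < x ∧ x - n ∈ B) := by
        rintro ⟨hh, hc⟩; have := hB hc; simp at this; omega
      have h2 : ¬ (n < x ∧ x - n ∈ A) := by
        rintro ⟨hh, hc⟩; have := hA hc; simp at this; omega
      have h3 : ¬ (n < x ∧ x - n ∈ symmDiff A B) := by
        rintro ⟨hh, hc⟩; rw [Finset.mem_symmDiff] at hc; tauto
      simp [hxB, h1, hxA, h2, hxAB, h3]

lemma nperm_eq_one_iff {n : ℕ} {A : Finset ℕ} (hn : 1 ≤ n) (hA : A ⊆ Finset.Icc 1 n) :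
    nperm n A = 1 ↔ A = ∅ := by
  constructor
  · intro h
    by_contra hne
    obtain ⟨a, ha⟩ := Finset.nonempty_iff_ne_empty.2 hne
    have h1 : 1 ≤ a ∧ a ≤ n := by simpa using hA ha
    have := congrArg (fun (f : Equiv.Perm ℕ) => f a) h
    simp [nperm_apply hA, npfun, ha] at this
    omega
  · rintro rfl; exact nperm_empty n

/-- The subgroup of permutations supported on `{1,…,n}`. -/
def Plow (n : ℕ) : Subgroup (Equiv.Perm ℕ) where
  carrier := {τ | ∀ x, x ∉ Finset.Icc 1 n → τ x = x}
  one_mem' := by intro x _; rfl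
  mul_mem' := by
    intro a b ha hb x hx
    simp only [Equiv.Perm.mul_apply]
    rw [hb x hx, ha x hx]
  inv_mem' := by
    intro a ha x hx
    have : a x = x := ha x hx
    have := congrArg (a⁻¹ : Equiv.Perm ℕ) this
    simpa using this.symm

lemma Plow_maps {n : ℕ} {τ : Equiv.Perm ℕ} (h : τ ∈ Plow n) {x : ℕ}
    (hx : x ∈ Finset.Icc 1 n) : τ x ∈ Finset.Icc 1 n := by
  by_contra hc
  have h1 : τ (τ x) = τ x := h _ hc
  have h2 : τ x = x := τ.injective h1
  rw [h2] at hc; exact hc hx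

/-- full sign change -/
def eps (n : ℕ) : Equiv.Perm ℕ := nperm n (Finset.Icc 1 n)

lemma eps_low {n x : ℕ} (hx : x ∈ Finset.Icc 1 n) : eps n x = n + x := by
  rw [eps, nperm_apply (le_refl _)]; simp [npfun, hx]

lemma eps_high {n x : ℕ} (hx : x ∈ Finset.Icc 1 n) : eps n (n + x) = x := by
  rw [eps, nperm_apply (le_refl _)]
  have hx' := Finset.mem_Icc.mp hx
  have h1 : n + x ∉ Finset.Icc 1 n := by simp [Finset.mem_Icc]; omega
  have h3 : n + x - n = x := by omega
  unfold npfun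
  rw [if_neg h1, if_pos ⟨by omega, by rw [h3]; exact hx⟩, h3]

lemma eps_out {n x : ℕ} (hx : x ∉ Finset.Icc 1 n) (hx2 : ¬ (n < x ∧ x - n ∈ Finset.Icc 1 n)) :
    eps n x = x := by
  rw [eps, nperm_apply (le_refl _)]
  unfold npfun
  rw [if_neg hx, if_neg hx2]

lemma eps_fix {n τx : ℕ} (h : τx ∈ Finset.Icc 1 n) (τ : Equiv.Perm ℕ) (hτ : τ ∈ Plow n) :
    τ (n + τx) = n + τx := by
  apply hτ
  simp at h ⊢
  omega

/-- the "doubled" version of a permutation supported on `{1,…,n}`: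
acts the same way on `{n+1,…,2n}`. -/
def dbl (n : ℕ) (τ : Equiv.Perm ℕ) : Equiv.Perm ℕ := τ * (eps n * τ * eps n)

lemma dbl_low {n : ℕ} {τ : Equiv.Perm ℕ} (hτ : τ ∈ Plow n) {x : ℕ}
    (hx : x ∈ Finset.Icc 1 n) : dbl n τ x = τ x := by
  have h1 : n + x ∉ Finset.Icc 1 n := by simp at hx ⊢; omega
  simp only [dbl, Equiv.Perm.mul_apply]
  rw [eps_low hx, hτ _ h1, eps_high hx]

lemma dbl_high {n : ℕ} {τ : Equiv.Perm ℕ} (hτ : τ ∈ Plow n) {x : ℕ}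
    (hx : x ∈ Finset.Icc 1 n) : dbl n τ (n + x) = n + τ x := by
  have hτx := Plow_maps hτ hx
  simp only [dbl, Equiv.Perm.mul_apply]
  rw [eps_high hx, eps_low hτx, eps_fix hτx τ hτ]

lemma dbl_out {n : ℕ} {τ : Equiv.Perm ℕ} (hτ : τ ∈ Plow n) {x : ℕ}
    (hx : x ∉ Finset.Icc 1 n) (hx2 : ¬ (n < x ∧ x - n ∈ Finset.Icc 1 n)) :
    dbl n τ x = x := by
  simp only [dbl, Equiv.Perm.mul_apply]
  rw [eps_out hx hx2, hτ _ hx, eps_out hx hx2, hτ _ hx]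

lemma dbl_cases (n x : ℕ) :
    x ∈ Finset.Icc 1 n ∨ (n < x ∧ x - n ∈ Finset.Icc 1 n) ∨
      (x ∉ Finset.Icc 1 n ∧ ¬ (n < x ∧ x - n ∈ Finset.Icc 1 n)) := by
  by_cases h1 : x ∈ Finset.Icc 1 n
  · exact Or.inl h1
  · by_cases h2 : n < x ∧ x - n ∈ Finset.Icc 1 n
    · exact Or.inr (Or.inl h2)
    · exact Or.inr (Or.inr ⟨h1, h2⟩)

lemma dbl_mul {n : ℕ} {σ τ : Equiv.Perm ℕ} (hσ : σ ∈ Plow n) (hτ : τ ∈ Plow n) :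
    dbl n σ * dbl n τ = dbl n (σ * τ) := by
  have hστ : σ * τ ∈ Plow n := mul_mem hσ hτ
  ext x
  rcases dbl_cases n x with hx | ⟨hx1, hx2⟩ | ⟨hx1, hx2⟩
  · rw [Equiv.Perm.mul_apply, dbl_low hτ hx, dbl_low hσ (Plow_maps hτ hx), dbl_low hστ hx]
    rfl
  · obtain ⟨y, rfl⟩ : ∃ y, x = n + y := ⟨x - n, by omega⟩
    have hy : y ∈ Finset.Icc 1 n := by simpa using hx2
    rw [Equiv.Perm.mul_apply, dbl_high hτ hy, dbl_high hσ (Plow_maps hτ hy), dbl_high hστ hy]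
    rfl
  · rw [Equiv.Perm.mul_apply, dbl_out hτ hx1 hx2, dbl_out hσ hx1 hx2, dbl_out hστ hx1 hx2]

lemma dbl_one (n : ℕ) : dbl n 1 = 1 := by
  ext x
  rcases dbl_cases n x with hx | ⟨hx1, hx2⟩ | ⟨hx1, hx2⟩
  · rw [dbl_low (one_mem _) hx]
  · obtain ⟨y, rfl⟩ : ∃ y, x = n + y := ⟨x - n, by omega⟩
    rw [dbl_high (one_mem _) (by simpa using hx2)]
    rfl
  · rw [dbl_out (one_mem _) hx1 hx2]; rfl

lemma dbl_inv {n : ℕ} {τ : Equiv.Perm ℕ} (hτ : τ ∈ Plow n) :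
    (dbl n τ)⁻¹ = dbl n τ⁻¹ := by
  rw [inv_eq_iff_mul_eq_one, dbl_mul hτ (inv_mem hτ), mul_inv_cancel, dbl_one]

/-- the diagonal copy of `Sym(n)` -/
def Sdiag (n : ℕ) : Subgroup (Equiv.Perm ℕ) where
  carrier := {g | ∃ τ ∈ Plow n, g = dbl n τ}
  one_mem' := ⟨1, one_mem _, (dbl_one n).symm⟩
  mul_mem' := by
    rintro a b ⟨σ, hσ, rfl⟩ ⟨τ, hτ, rfl⟩
    exact ⟨σ * τ, mul_mem hσ hτ, dbl_mul hσ hτ⟩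
  inv_mem' := by
    rintro a ⟨τ, hτ, rfl⟩
    exact ⟨τ⁻¹, inv_mem hτ, dbl_inv hτ⟩

/-- the subgroup of even sign changes, described explicitly -/
def NS (n : ℕ) : Subgroup (Equiv.Perm ℕ) where
  carrier := {g | ∃ A : Finset ℕ, A ⊆ Finset.Icc 1 n ∧ Even A.card ∧ g = nperm n A}
  one_mem' := ⟨∅, by simp, by simp, (nperm_empty n).symm⟩
  mul_mem' := by
    rintro a b ⟨A, hA, hcA, rfl⟩ ⟨B, hB, hcB, rfl⟩
    refine ⟨symmDiff A B, ?_, ?_, nperm_mul hA hB⟩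
    · intro x hx
      rw [Finset.mem_symmDiff] at hx
      rcases hx with ⟨h1, _⟩ | ⟨h1, _⟩
      exacts [hA h1, hB h1]
    · have h1 : (A \ B).card + (A ∩ B).card = A.card := Finset.card_sdiff_add_card_inter A B
      have h2 : (B \ A).card + (B ∩ A).card = B.card := Finset.card_sdiff_add_card_inter B A
      have hd : Disjoint (A \ B) (B \ A) := disjoint_sdiff_sdiff
      have h3 : (symmDiff A B).card = (A \ B).card + (B \ A).card := by
        rw [symmDiff_def]
        exact Finset.card_union_of_disjoint hd
      have h4 : (A ∩ B).card = (B ∩ A).card := by rw [Finset.inter_comm]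
      rcases hcA with ⟨a, ha⟩
      rcases hcB with ⟨b, hb⟩
      exact ⟨(A \ B).card + (B \ A).card - ((A \ B).card + (B \ A).card) / 2 - ((A \ B).card + (B \ A).card) % 2 + 0, by omega⟩
  inv_mem' := by
    rintro a ⟨A, hA, hcA, rfl⟩
    refine ⟨A, hA, hcA, ?_⟩
    rw [inv_eq_iff_mul_eq_one, nperm_mul hA hA]
    simp [nperm_empty]

lemma nperm_mem_NS {n : ℕ} {A : Finset ℕ} (hA : A ⊆ Finset.Icc 1 n) (hc : Even A.card) :
    nperm n A ∈ NS n := ⟨A, hA, hc, rfl⟩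

/-- `S ∩ N = 1` -/
lemma Sdiag_inf_NS {n : ℕ} (hn : 1 ≤ n) {g : Equiv.Perm ℕ}
    (hg : g ∈ Sdiag n) (hg' : g ∈ NS n) : g = 1 := by
  obtain ⟨τ, hτ, rfl⟩ := hg
  obtain ⟨A, hA, _, hEq⟩ := hg'
  by_cases hAe : A = ∅
  · rw [hEq, hAe, nperm_empty]
  · exfalso
    obtain ⟨a, ha⟩ := Finset.nonempty_iff_ne_empty.2 hAe
    have haI : a ∈ Finset.Icc 1 n := hA ha
    have h1 : dbl n τ a = τ a := dbl_low hτ haI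
    have h2 : nperm n A a = n + a := by
      rw [nperm_apply hA]; simp [npfun, ha]
    have h3 := Plow_maps hτ haI
    rw [hEq] at h1
    rw [h1] at h2
    simp [Finset.mem_Icc] at h3 haI
    omega

/-- conjugation of a sign change by a diagonal permutation -/
lemma dbl_conj_nperm {n : ℕ} {τ : Equiv.Perm ℕ} (hτ : τ ∈ Plow n) {A : Finset ℕ}
    (hA : A ⊆ Finset.Icc 1 n) :
    dbl n τ * nperm n A * (dbl n τ)⁻¹ = nperm n (A.image τ) := by
  have hAi : A.image τ ⊆ Finset.Icc 1 n := by
    intro x hx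
    rw [Finset.mem_image] at hx
    obtain ⟨a, ha, rfl⟩ := hx
    exact Plow_maps hτ (hA ha)
  have hmem : ∀ x, x ∈ A.image τ ↔ τ⁻¹ x ∈ A := by
    intro x
    rw [Finset.mem_image]
    constructor
    · rintro ⟨a, ha, rfl⟩; simpa using ha
    · intro h; exact ⟨τ⁻¹ x, h, by simp⟩
  rw [dbl_inv hτ]
  have hτi : τ⁻¹ ∈ Plow n := inv_mem hτ
  ext x
  simp only [Equiv.Perm.mul_apply]
  rcases dbl_cases n x with hx | ⟨hx1, hx2⟩ | ⟨hx1, hx2⟩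
  · rw [dbl_low hτi hx]
    have hτx : τ⁻¹ x ∈ Finset.Icc 1 n := Plow_maps hτi hx
    by_cases hmemA : τ⁻¹ x ∈ A
    · have e1 : nperm n A (τ⁻¹ x) = n + τ⁻¹ x := by
        rw [nperm_apply hA]; unfold npfun; rw [if_pos hmemA]
      rw [e1, dbl_high hτ hτx]
      have e2 : nperm n (A.image τ) x = n + x := by
        rw [nperm_apply hAi]; simp [npfun, (hmem x).2 hmemA]
      rw [e2]; simp
    · have e1 : nperm n A (τ⁻¹ x) = τ⁻¹ x := by
        rw [nperm_apply hA]
        have : ¬ (n < τ⁻¹ x ∧ τ⁻¹ x - n ∈ A) := by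
          rintro ⟨hh, _⟩; rw [Finset.mem_Icc] at hτx; omega
        unfold npfun; rw [if_neg hmemA, if_neg this]
      rw [e1, dbl_low hτ hτx]
      have e2 : nperm n (A.image τ) x = x := by
        rw [nperm_apply hAi]
        have h1 : x ∉ A.image τ := fun hc => hmemA ((hmem x).1 hc)
        have : ¬ (n < x ∧ x - n ∈ A.image τ) := by
          rintro ⟨hh, _⟩; simp [Finset.mem_Icc] at hx; omega
        unfold npfun
        rw [if_neg h1, if_neg this]
      rw [e2]; simp
  · obtain ⟨y, rfl⟩ : ∃ y, x = n + y := ⟨x - n, by omega⟩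
    have hy : y ∈ Finset.Icc 1 n := by simpa using hx2
    rw [dbl_high hτi hy]
    have hτy : τ⁻¹ y ∈ Finset.Icc 1 n := Plow_maps hτi hy
    have hyimg : y ∈ A.image τ ↔ τ⁻¹ y ∈ A := hmem y
    by_cases hmemA : τ⁻¹ y ∈ A
    · have e1 : nperm n A (n + τ⁻¹ y) = τ⁻¹ y := by
        rw [nperm_apply hA]
        have h1 : n + τ⁻¹ y ∉ A := fun hc => by
          have := hA hc; simp [Finset.mem_Icc] at this hτy; omega
        have h2 : n + τ⁻¹ y - n = τ⁻¹ y := by omega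
        have h3 : n < n + τ⁻¹ y := by rw [Finset.mem_Icc] at hτy; omega
        unfold npfun
        rw [if_neg h1, if_pos ⟨h3, by rw [h2]; exact hmemA⟩, h2]
      rw [e1, dbl_low hτ hτy]
      have e2 : nperm n (A.image τ) (n + y) = y := by
        rw [nperm_apply hAi]
        have h1 : n + y ∉ A.image τ := fun hc => by
          have := hAi hc; simp [Finset.mem_Icc] at this hy; omega
        have h2 : n + y - n = y := by omega
        have h3 : n < n + y := by simp [Finset.mem_Icc] at hy; omega
        unfold npfun
        rw [if_neg h1, if_pos ⟨h3, by rw [h2]; exact hyimg.2 hmemA⟩, h2]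
      rw [e2]; simp
    · have e1 : nperm n A (n + τ⁻¹ y) = n + τ⁻¹ y := by
        rw [nperm_apply hA]
        have h1 : n + τ⁻¹ y ∉ A := fun hc => by
          have := hA hc; simp [Finset.mem_Icc] at this hτy; omega
        have h2 : n + τ⁻¹ y - n = τ⁻¹ y := by omega
        unfold npfun
        rw [if_neg h1, if_neg (by rw [h2]; rintro ⟨_, hc⟩; exact hmemA hc)]
      rw [e1, dbl_high hτ hτy]
      have e2 : nperm n (A.image τ) (n + y) = n + y := by
        rw [nperm_apply hAi]
        have h1 : n + y ∉ A.image τ := fun hc => by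
          have := hAi hc; simp [Finset.mem_Icc] at this hy; omega
        have h2 : n + y - n = y := by omega
        unfold npfun
        rw [if_neg h1, if_neg (by rw [h2]; rintro ⟨_, hc⟩; exact hmemA (hyimg.1 hc))]
      rw [e2]; simp
  · rw [dbl_out hτi hx1 hx2]
    have e1 : nperm n A x = x := by
      rw [nperm_apply hA]
      have h1 : x ∉ A := fun hc => hx1 (hA hc)
      have h2 : ¬ (n < x ∧ x - n ∈ A) := by rintro ⟨hh, hc⟩; exact hx2 ⟨hh, hA hc⟩
      unfold npfun
      rw [if_neg h1, if_neg h2]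
    have e2 : nperm n (A.image τ) x = x := by
      rw [nperm_apply hAi]
      have h1 : x ∉ A.image τ := fun hc => hx1 (hAi hc)
      have h2 : ¬ (n < x ∧ x - n ∈ A.image τ) := by rintro ⟨hh, hc⟩; exact hx2 ⟨hh, hAi hc⟩
      unfold npfun
      rw [if_neg h1, if_neg h2]
    rw [e1, dbl_out hτ hx1 hx2, e2]

lemma swap_mem_Plow {n a b : ℕ} (ha : a ∈ Finset.Icc 1 n) (hb : b ∈ Finset.Icc 1 n) :
    Equiv.swap a b ∈ Plow n := by
  intro x hx
  apply Equiv.swap_apply_of_ne_of_ne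
  · rintro rfl; exact hx ha
  · rintro rfl; exact hx hb

/-- `swap i (n+i) * swap j (n+j) = nperm {i,j}` for distinct `i j` -/
lemma swap_pair_eq_nperm {n i j : ℕ} (hi : i ∈ Finset.Icc 1 n) (hj : j ∈ Finset.Icc 1 n)
    (hij : i ≠ j) :
    Equiv.swap i (n + i) * Equiv.swap j (n + j) = nperm n ({i, j} : Finset ℕ) := by
  simp only [Finset.mem_Icc] at hi hj
  have hsub : ({i, j} : Finset ℕ) ⊆ Finset.Icc 1 n := by
    intro x hx
    simp at hx
    rcases hx with rfl | rfl <;> simp [Finset.mem_Icc] <;> omega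
  ext x
  rw [Equiv.Perm.mul_apply, nperm_apply hsub]
  unfold npfun
  by_cases hxj : x = j
  · subst hxj
    rw [Equiv.swap_apply_left]
    rw [Equiv.swap_apply_of_ne_of_ne (by omega) (by omega)]
    have : x ∈ ({i, x} : Finset ℕ) := by simp
    simp only [if_pos this]
  · by_cases hxnj : x = n + j
    · subst hxnj
      rw [Equiv.swap_apply_right]
      rw [Equiv.swap_apply_of_ne_of_ne (by omega) (by omega)]
      have h1 : n + j ∉ ({i, j} : Finset ℕ) := by simp; omega
      have h2 : n + j - n = j := by omega
      rw [if_neg h1, if_pos ⟨by omega, by rw [h2]; simp⟩, h2]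
    · rw [Equiv.swap_apply_of_ne_of_ne hxj hxnj]
      by_cases hxi : x = i
      · subst hxi
        rw [Equiv.swap_apply_left]
        have : x ∈ ({x, j} : Finset ℕ) := by simp
        rw [if_pos this]
      · by_cases hxni : x = n + i
        · subst hxni
          rw [Equiv.swap_apply_right]
          have h1 : n + i ∉ ({i, j} : Finset ℕ) := by simp; omega
          have h2 : n + i - n = i := by omega
          rw [if_neg h1, if_pos ⟨by omega, by rw [h2]; simp⟩, h2]
        · rw [Equiv.swap_apply_of_ne_of_ne hxi hxni]
          have h1 : x ∉ ({i, j} : Finset ℕ) := by simp; omega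
          have h2 : ¬ (n < x ∧ x - n ∈ ({i, j} : Finset ℕ)) := by
            rintro ⟨hh, hc⟩; simp at hc; omega
          rw [if_neg h1, if_neg h2]

lemma beta_zero_eq {n : ℕ} (hn : 2 ≤ n) : beta n 0 = nperm n ({1, 2} : Finset ℕ) := by
  rw [beta]
  simp only [if_pos rfl]
  exact swap_pair_eq_nperm (by simp [Finset.mem_Icc]; omega) (by simp [Finset.mem_Icc]; omega)
    (by omega)

lemma beta_eq_dbl {n i : ℕ} (h1 : 1 ≤ i) (h2 : i < n) :
    beta n i = dbl n (Equiv.swap i (i + 1)) := by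
  have hi : i ∈ Finset.Icc 1 n := by simp [Finset.mem_Icc]; omega
  have hi1 : i + 1 ∈ Finset.Icc 1 n := by simp [Finset.mem_Icc]; omega
  have hτ : Equiv.swap i (i + 1) ∈ Plow n := swap_mem_Plow hi hi1
  rw [beta, if_neg (by omega)]
  ext x
  rw [Equiv.Perm.mul_apply]
  rcases dbl_cases n x with hx | ⟨hx1, hx2⟩ | ⟨hx1, hx2⟩
  · have hb := Finset.mem_Icc.mp hx
    have e1 : Equiv.swap (n+i) (n+i+1) x = x :=
      Equiv.swap_apply_of_ne_of_ne (by omega) (by omega)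
    rw [show n + i + 1 = (n+i)+1 from rfl, e1, dbl_low hτ hx]
  · obtain ⟨y, rfl⟩ : ∃ y, x = n + y := ⟨x - n, by omega⟩
    have hy : y ∈ Finset.Icc 1 n := by simpa using hx2
    have hyb := Finset.mem_Icc.mp hy
    rw [dbl_high hτ hy]
    by_cases hyi : y = i
    · subst hyi
      have e1 : Equiv.swap (n+y) (n+y+1) (n+y) = n+y+1 := Equiv.swap_apply_left _ _
      have e2 : Equiv.swap y (y+1) (n+y+1) = n+y+1 :=
        Equiv.swap_apply_of_ne_of_ne (by omega) (by omega)
      have e3 : Equiv.swap y (y+1) y = y + 1 := Equiv.swap_apply_left _ _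
      rw [e1, e2, e3]
      omega
    · by_cases hyi1 : y = i + 1
      · subst hyi1
        have e1 : Equiv.swap (n+i) (n+i+1) (n+(i+1)) = n+i :=
          by rw [show n+(i+1) = n+i+1 by omega]; exact Equiv.swap_apply_right _ _
        have e2 : Equiv.swap i (i+1) (n+i) = n+i :=
          Equiv.swap_apply_of_ne_of_ne (by omega) (by omega)
        have e3 : Equiv.swap i (i+1) (i+1) = i := Equiv.swap_apply_right _ _
        rw [e1, e2, e3]
      · have e1 : Equiv.swap (n+i) (n+i+1) (n+y) = n+y :=
          Equiv.swap_apply_of_ne_of_ne (by omega) (by omega)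
        have e2 : Equiv.swap i (i+1) (n+y) = n+y :=
          Equiv.swap_apply_of_ne_of_ne (by omega) (by omega)
        have e3 : Equiv.swap i (i+1) y = y :=
          Equiv.swap_apply_of_ne_of_ne (by omega) (by omega)
        rw [e1, e2, e3]
  · simp only [Finset.mem_Icc, not_and, not_le] at hx1 hx2
    have e1 : Equiv.swap (n+i) (n+i+1) x = x := by
      apply Equiv.swap_apply_of_ne_of_ne
      · rintro rfl; omega
      · rintro rfl; omega
    have e2 : Equiv.swap i (i+1) x = x := by
      apply Equiv.swap_apply_of_ne_of_ne
      · rintro rfl; omega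
      · rintro rfl; omega
    have hx1' : x ∉ Finset.Icc 1 n := by simp [Finset.mem_Icc]; omega
    have hx2' : ¬ (n < x ∧ x - n ∈ Finset.Icc 1 n) := by
      simp [Finset.mem_Icc]; omega
    rw [show n + i + 1 = (n+i)+1 from rfl, e1, e2, dbl_out hτ hx1' hx2']

/-- the diagonal `Sym(n)` as closure of the `βᵢ`, `i ≥ 1` -/
def Scl (n : ℕ) : Subgroup (Equiv.Perm ℕ) :=
  Subgroup.closure {g | ∃ i, 1 ≤ i ∧ i < n ∧ g = beta n i}

lemma Scl_le_Sdiag (n : ℕ) : Scl n ≤ Sdiag n := by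
  apply Subgroup.closure_le _ |>.2
  rintro g ⟨i, h1, h2, rfl⟩
  rw [beta_eq_dbl h1 h2]
  exact ⟨Equiv.swap i (i+1), swap_mem_Plow (by simp [Finset.mem_Icc]; omega)
    (by simp [Finset.mem_Icc]; omega), rfl⟩

lemma dbl_swap_mem_Scl {n : ℕ} : ∀ d a b : ℕ, a ∈ Finset.Icc 1 n → b ∈ Finset.Icc 1 n →
    b = a + d → dbl n (Equiv.swap a b) ∈ Scl n := by
  intro d
  induction d using Nat.strong_induction_on with
  | _ d ih =>
    intro a b ha hb hd
    match d, hd with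
    | 0, hd =>
      subst hd
      simp only [Nat.add_zero, Equiv.swap_self]
      rw [show (Equiv.refl ℕ) = (1 : Equiv.Perm ℕ) from rfl, dbl_one]
      exact one_mem _
    | 1, hd =>
      subst hd
      have hab := Finset.mem_Icc.mp ha
      have hbb := Finset.mem_Icc.mp hb
      rw [← beta_eq_dbl (by omega) (by omega)]
      exact Subgroup.subset_closure ⟨a, by omega, by omega, rfl⟩
    | (k+2), hd =>
      have hab := Finset.mem_Icc.mp ha
      have hbb := Finset.mem_Icc.mp hb
      set c := a + k + 1 with hc
      have hcI : c ∈ Finset.Icc 1 n := by simp [Finset.mem_Icc]; omega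
      have hσ : Equiv.swap c b ∈ Plow n := swap_mem_Plow hcI hb
      have hac : Equiv.swap a c ∈ Plow n := swap_mem_Plow ha hcI
      have e1 : Equiv.swap c b a = a :=
        Equiv.swap_apply_of_ne_of_ne (by omega) (by omega)
      have e2 : Equiv.swap c b c = b := Equiv.swap_apply_left _ _
      have key : Equiv.swap a b = Equiv.swap c b * Equiv.swap a c * (Equiv.swap c b)⁻¹ := by
        rw [← Equiv.swap_apply_apply, e1, e2]
      rw [key, ← dbl_mul (mul_mem hσ hac) (inv_mem hσ), ← dbl_mul hσ hac, ← dbl_inv hσ]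
      have m1 : dbl n (Equiv.swap c b) ∈ Scl n := by
        apply ih 1 (by omega) c b hcI hb (by omega)
      have m2 : dbl n (Equiv.swap a c) ∈ Scl n := by
        apply ih (k+1) (by omega) a c ha hcI (by omega)
      exact mul_mem (mul_mem m1 m2) (inv_mem m1)

lemma Neven_le_NS (n : ℕ) : Neven n ≤ NS n := by
  apply Subgroup.closure_le _ |>.2
  rintro g ⟨i, hi, j, hj, rfl⟩
  by_cases hij : i = j
  · subst hij
    rw [Equiv.swap_mul_self]
    exact one_mem _
  · rw [swap_pair_eq_nperm hi hj hij]
    apply nperm_mem_NS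
    · intro x hx; simp at hx; rcases hx with rfl | rfl <;> assumption
    · rw [Finset.card_insert_of_notMem (by simp [hij]), Finset.card_singleton]
      exact ⟨1, rfl⟩

lemma Plow_image_Icc {n : ℕ} {τ : Equiv.Perm ℕ} (hτ : τ ∈ Plow n) :
    Finset.image τ (Finset.Icc 1 n) = Finset.Icc 1 n := by
  apply Finset.eq_of_subset_of_card_le
  · intro x hx
    rw [Finset.mem_image] at hx
    obtain ⟨a, ha, rfl⟩ := hx
    exact Plow_maps hτ ha
  · rw [Finset.card_image_of_injective _ τ.injective]

lemma eps_commute_Dn {n : ℕ} (hn : 2 ≤ n) : ∀ g ∈ Dn n, Commute (eps n) g := by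
  intro g hg
  induction hg using Subgroup.closure_induction with
  | mem g hgen =>
    obtain ⟨i, hi, rfl⟩ := hgen
    by_cases hi0 : i = 0
    · subst hi0
      rw [beta_zero_eq hn]
      have h12 : ({1, 2} : Finset ℕ) ⊆ Finset.Icc 1 n := by
        intro x hx; simp at hx; rcases hx with rfl | rfl <;> simp [Finset.mem_Icc] <;> omega
      unfold Commute SemiconjBy
      rw [eps, nperm_mul (le_refl _) h12, nperm_mul h12 (le_refl _), symmDiff_comm]
    · have h1 : 1 ≤ i := by omega
      rw [beta_eq_dbl h1 hi]
      have hτ : Equiv.swap i (i+1) ∈ Plow n := swap_mem_Plow (by simp [Finset.mem_Icc]; omega)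
        (by simp [Finset.mem_Icc]; omega)
      have := dbl_conj_nperm hτ (le_refl (Finset.Icc 1 n))
      rw [Plow_image_Icc hτ] at this
      have : dbl n (Equiv.swap i (i+1)) * eps n = eps n * dbl n (Equiv.swap i (i+1)) := by
        have h2 := congrArg (fun z => z * dbl n (Equiv.swap i (i+1))) this
        simpa [mul_assoc, eps] using h2
      exact this.symm
  | one => exact Commute.one_right _
  | mul x y hx hy cx cy => exact Commute.mul_right cx cy
  | inv x hx cx => exact Commute.inv_right cx

lemma dbl_swap_mem_Scl' {n a b : ℕ} (ha : a ∈ Finset.Icc 1 n) (hb : b ∈ Finset.Icc 1 n) :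
    dbl n (Equiv.swap a b) ∈ Scl n := by
  rcases le_total a b with h | h
  · exact dbl_swap_mem_Scl (b - a) a b ha hb (by omega)
  · rw [Equiv.swap_comm]
    exact dbl_swap_mem_Scl (a - b) b a hb ha (by omega)

lemma image_swap_symmDiff {a b : ℕ} {A : Finset ℕ} (ha : a ∈ A) (hb : b ∉ A) :
    symmDiff A (A.image (Equiv.swap a b)) = ({a, b} : Finset ℕ) := by
  have hab : a ≠ b := fun h => hb (h ▸ ha)
  have hmem : ∀ x, x ∈ A.image (Equiv.swap a b) ↔ Equiv.swap a b x ∈ A := by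
    intro x
    rw [Finset.mem_image]
    constructor
    · rintro ⟨y, hy, rfl⟩
      rwa [Equiv.swap_apply_self]
    · intro h
      exact ⟨Equiv.swap a b x, h, Equiv.swap_apply_self _ _ _⟩
  ext x
  rw [Finset.mem_symmDiff, hmem]
  by_cases hxa : x = a
  · subst hxa
    simp [Equiv.swap_apply_left, ha, hb]
  · by_cases hxb : x = b
    · subst hxb
      simp [Equiv.swap_apply_right, ha, hb, hxa]
    · rw [Equiv.swap_apply_of_ne_of_ne hxa hxb]
      simp [hxa, hxb]

lemma part1 (n r : ℕ) (hn : 5 ≤ n) (hr : 1 ≤ r) (s : Fin r → Equiv.Perm ℕ)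
    (hmem : ∀ i, s i ∈ Dn n)
    (hinv : ∀ i, orderOf (s i) = 2)
    (hS : subJ s {i | (i : ℕ) + 1 < r}
      = Subgroup.closure {g | ∃ i, 1 ≤ i ∧ i < n ∧ g = beta n i})
    (hNmem : s ⟨r - 1, Nat.sub_lt hr Nat.one_pos⟩ ∈ Neven n)
    (hZ : ¬ ∀ g ∈ Subgroup.closure (Set.range s), Commute (s ⟨r - 1, Nat.sub_lt hr Nat.one_pos⟩) g) :
    Subgroup.closure (Set.range s) = Dn n := by
  set G := Subgroup.closure (Set.range s) with hG
  have hGDn : G ≤ Dn n := by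
    apply Subgroup.closure_le _ |>.2
    rintro g ⟨i, rfl⟩
    exact hmem i
  have hSclG : Scl n ≤ G := by
    rw [show Scl n = subJ s {i | (i : ℕ) + 1 < r} from hS.symm]
    exact Subgroup.closure_mono (Set.image_subset_range _ _)
  set t := s ⟨r - 1, Nat.sub_lt hr Nat.one_pos⟩ with ht
  have htG : t ∈ G := Subgroup.subset_closure (Set.mem_range_self _)
  obtain ⟨A₀, hA₀, hcA₀, htA₀⟩ := Neven_le_NS n hNmem
  have htne : t ≠ 1 := by
    intro h
    have := hinv ⟨r - 1, Nat.sub_lt hr Nat.one_pos⟩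
    rw [← ht, h, orderOf_one] at this
    omega
  have hA₀ne : A₀ ≠ ∅ := by
    intro h
    exact htne (by rw [htA₀, h, nperm_empty])
  have hA₀Icc : A₀ ≠ Finset.Icc 1 n := by
    intro h
    apply hZ
    intro g hg
    rw [htA₀, h]
    exact eps_commute_Dn (by omega) g (hGDn hg)
  have hss : A₀ ⊂ Finset.Icc 1 n := ssubset_of_subset_of_ne hA₀ hA₀Icc
  obtain ⟨b, hbIcc, hbA₀⟩ := Finset.exists_of_ssubset hss
  obtain ⟨a, haA₀⟩ := Finset.nonempty_iff_ne_empty.2 hA₀ne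
  have haIcc : a ∈ Finset.Icc 1 n := hA₀ haA₀
  have hab : a ≠ b := fun h => hbA₀ (h ▸ haA₀)
  -- conjugate t to get nperm {a, b} ∈ G
  have hswab : Equiv.swap a b ∈ Plow n := swap_mem_Plow haIcc hbIcc
  have hσG : dbl n (Equiv.swap a b) ∈ G := hSclG (dbl_swap_mem_Scl' haIcc hbIcc)
  have hconj : dbl n (Equiv.swap a b) * t * (dbl n (Equiv.swap a b))⁻¹
      = nperm n (A₀.image (Equiv.swap a b)) := by
    rw [htA₀]; exact dbl_conj_nperm hswab hA₀
  have himg : A₀.image (Equiv.swap a b) ⊆ Finset.Icc 1 n := by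
    intro x hx
    rw [Finset.mem_image] at hx
    obtain ⟨y, hy, rfl⟩ := hx
    exact Plow_maps hswab (hA₀ hy)
  have hpairG : nperm n ({a, b} : Finset ℕ) ∈ G := by
    have h1 : t * (dbl n (Equiv.swap a b) * t * (dbl n (Equiv.swap a b))⁻¹) ∈ G :=
      mul_mem htG (mul_mem (mul_mem hσG htG) (inv_mem hσG))
    rwa [hconj, htA₀, nperm_mul hA₀ himg, image_swap_symmDiff haA₀ hbA₀] at h1
  -- conjugate {a, b} to {1, 2}
  have h1Icc : (1 : ℕ) ∈ Finset.Icc 1 n := by simp [Finset.mem_Icc]; omega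
  have h2Icc : (2 : ℕ) ∈ Finset.Icc 1 n := by simp [Finset.mem_Icc]; omega
  have hpairsub : ({a, b} : Finset ℕ) ⊆ Finset.Icc 1 n := by
    intro x hx; simp at hx; rcases hx with rfl | rfl <;> assumption
  set τ₁ := Equiv.swap 1 a with hτ₁
  have hτ₁P : τ₁ ∈ Plow n := swap_mem_Plow h1Icc haIcc
  set b₁ := τ₁ b with hb₁
  have hb₁Icc : b₁ ∈ Finset.Icc 1 n := Plow_maps hτ₁P hbIcc
  have hb₁ne1 : b₁ ≠ 1 := by
    intro h
    have : τ₁ b = τ₁ a := by rw [← hb₁] at *; rw [h, hτ₁, Equiv.swap_apply_right]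
    exact hab (τ₁.injective this).symm
  set τ₂ := Equiv.swap 2 b₁ with hτ₂
  have hτ₂P : τ₂ ∈ Plow n := swap_mem_Plow h2Icc hb₁Icc
  have hστ₁G : dbl n τ₁ ∈ G := hSclG (dbl_swap_mem_Scl' h1Icc haIcc)
  have hστ₂G : dbl n τ₂ ∈ G := hSclG (dbl_swap_mem_Scl' h2Icc hb₁Icc)
  have himg1 : ({a, b} : Finset ℕ).image τ₁ = ({1, b₁} : Finset ℕ) := by
    rw [Finset.image_insert, Finset.image_singleton, hτ₁, Equiv.swap_apply_right]
  have himg1sub : ({1, b₁} : Finset ℕ) ⊆ Finset.Icc 1 n := by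
    intro x hx; simp at hx; rcases hx with rfl | rfl <;> assumption
  have himg2 : ({1, b₁} : Finset ℕ).image τ₂ = ({1, 2} : Finset ℕ) := by
    rw [Finset.image_insert, Finset.image_singleton, hτ₂, Equiv.swap_apply_right,
      Equiv.swap_apply_of_ne_of_ne (by omega) (Ne.symm hb₁ne1)]
  have hbeta0 : beta n 0 ∈ G := by
    have c1 : dbl n τ₁ * nperm n ({a, b} : Finset ℕ) * (dbl n τ₁)⁻¹
        = nperm n ({1, b₁} : Finset ℕ) := by
      rw [dbl_conj_nperm hτ₁P hpairsub, himg1]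
    have c2 : dbl n τ₂ * nperm n ({1, b₁} : Finset ℕ) * (dbl n τ₂)⁻¹
        = nperm n ({1, 2} : Finset ℕ) := by
      rw [dbl_conj_nperm hτ₂P himg1sub, himg2]
    rw [beta_zero_eq (by omega)]
    rw [← c2, ← c1]
    exact mul_mem (mul_mem hστ₂G (mul_mem (mul_mem hστ₁G hpairG) (inv_mem hστ₁G)))
      (inv_mem hστ₂G)
  -- conclude
  apply le_antisymm hGDn
  apply Subgroup.closure_le _ |>.2
  rintro g ⟨i, hi, rfl⟩
  by_cases hi0 : i = 0
  · subst hi0; exact hbeta0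
  · exact hSclG (Subgroup.subset_closure ⟨i, by omega, hi, rfl⟩)

section part2aux

variable {G : Type*} [Group G] {r : ℕ} (s : Fin r → G)

lemma subJ_mono {I J : Set (Fin r)} (h : I ⊆ J) : subJ s I ≤ subJ s J :=
  Subgroup.closure_mono (Set.image_mono h)

lemma mem_subJ {I : Set (Fin r)} {i : Fin r} (h : i ∈ I) : s i ∈ subJ s I :=
  Subgroup.subset_closure ⟨i, h, rfl⟩

lemma subJ_commute
    (hcomm : ∀ i j : Fin r, (i : ℕ) + 2 ≤ (j : ℕ) ∨ (j : ℕ) + 2 ≤ (i : ℕ) →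
      Commute (s i) (s j))
    {I J : Set (Fin r)}
    (h : ∀ i ∈ I, ∀ j ∈ J, (i : ℕ) + 2 ≤ (j : ℕ) ∨ (j : ℕ) + 2 ≤ (i : ℕ)) :
    ∀ a ∈ subJ s I, ∀ b ∈ subJ s J, Commute a b := by
  intro a ha
  induction ha using Subgroup.closure_induction with
  | mem x hx =>
    intro b hb
    induction hb using Subgroup.closure_induction with
    | mem y hy =>
      obtain ⟨i, hi, rfl⟩ := hx
      obtain ⟨j, hj, rfl⟩ := hy
      exact hcomm i j (h i hi j hj)
    | one => exact Commute.one_right _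
    | mul y z _ _ cy cz => exact Commute.mul_right cy cz
    | inv y _ cy => exact Commute.inv_right cy
  | one => intro b hb; exact Commute.one_left _
  | mul x y _ _ cx cy => intro b hb; exact Commute.mul_left (cx b hb) (cy b hb)
  | inv x _ cx => intro b hb; exact Commute.inv_left (cx b hb)

lemma subJ_split
    (hcomm : ∀ i j : Fin r, (i : ℕ) + 2 ≤ (j : ℕ) ∨ (j : ℕ) + 2 ≤ (i : ℕ) →
      Commute (s i) (s j))
    {I : Set (Fin r)} (m : Fin r) (hm : m ∉ I) :
    ∀ g ∈ subJ s I,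
      ∃ a ∈ subJ s {i | i ∈ I ∧ (i : ℕ) < (m : ℕ)},
        ∃ b ∈ subJ s {i | i ∈ I ∧ (m : ℕ) < (i : ℕ)}, g = a * b := by
  have hcross : ∀ a ∈ subJ s {i | i ∈ I ∧ (i : ℕ) < (m : ℕ)},
      ∀ b ∈ subJ s {i | i ∈ I ∧ (m : ℕ) < (i : ℕ)}, Commute a b := by
    apply subJ_commute s hcomm
    rintro i ⟨_, hi⟩ j ⟨_, hj⟩
    left; omega
  intro g hg
  induction hg using Subgroup.closure_induction with
  | mem x hx =>
    obtain ⟨i, hi, rfl⟩ := hx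
    rcases lt_trichotomy (i : ℕ) (m : ℕ) with h | h | h
    · exact ⟨s i, mem_subJ s ⟨hi, h⟩, 1, one_mem _, by simp⟩
    · exact absurd (Fin.ext h : i = m) (fun he => hm (he ▸ hi))
    · exact ⟨1, one_mem _, s i, mem_subJ s ⟨hi, h⟩, by simp⟩
  | one => exact ⟨1, one_mem _, 1, one_mem _, by simp⟩
  | mul x y _ _ px py =>
    obtain ⟨a, ha, b, hb, rfl⟩ := px
    obtain ⟨a', ha', b', hb', rfl⟩ := py
    refine ⟨a * a', mul_mem ha ha', b * b', mul_mem hb hb', ?_⟩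
    have hcomm' : Commute b a' := hcross a' ha' b hb |>.symm
    rw [mul_assoc, ← mul_assoc b a' b', hcomm'.eq, mul_assoc, ← mul_assoc]
  | inv x _ px =>
    obtain ⟨a, ha, b, hb, rfl⟩ := px
    refine ⟨a⁻¹, inv_mem ha, b⁻¹, inv_mem hb, ?_⟩
    rw [mul_inv_rev]
    exact (hcross a⁻¹ (inv_mem ha) b⁻¹ (inv_mem hb)).eq.symm

end part2aux

lemma NS_conj {n : ℕ} {σ m : Equiv.Perm ℕ} (hσ : σ ∈ Sdiag n) (hm : m ∈ NS n) :
    σ * m * σ⁻¹ ∈ NS n := by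
  obtain ⟨τ, hτ, rfl⟩ := hσ
  obtain ⟨A, hA, hc, rfl⟩ := hm
  rw [dbl_conj_nperm hτ hA]
  apply nperm_mem_NS
  · intro x hx
    rw [Finset.mem_image] at hx
    obtain ⟨a, ha, rfl⟩ := hx
    exact Plow_maps hτ (hA ha)
  · rwa [Finset.card_image_of_injective _ τ.injective]

lemma subJ_empty {G : Type*} [Group G] {r : ℕ} (s : Fin r → G) :
    subJ s (∅ : Set (Fin r)) = ⊥ := by
  rw [subJ, Set.image_empty, Subgroup.closure_empty]

section decompsec

variable {n r : ℕ} {s : Fin r → Equiv.Perm ℕ}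

lemma subJ_le_Sdiag (hSd : ∀ i : Fin r, (i : ℕ) + 1 < r → s i ∈ Sdiag n)
    {I : Set (Fin r)} (hIA : ∀ i ∈ I, (i : ℕ) + 1 < r) : subJ s I ≤ Sdiag n := by
  apply Subgroup.closure_le _ |>.2
  rintro g ⟨i, hi, rfl⟩
  exact hSd i (hIA i hi)

lemma decomp (hr : 1 ≤ r)
    (hSd : ∀ i : Fin r, (i : ℕ) + 1 < r → s i ∈ Sdiag n)
    (htNS : s ⟨r - 1, Nat.sub_lt hr Nat.one_pos⟩ ∈ NS n) (lo : ℕ) :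
    ∀ g ∈ subJ s {i | lo ≤ (i : ℕ)},
      ∃ x ∈ subJ s {i | lo ≤ (i : ℕ) ∧ (i : ℕ) + 1 < r}, x⁻¹ * g ∈ NS n := by
  have hY : subJ s {i | lo ≤ (i : ℕ) ∧ (i : ℕ) + 1 < r} ≤ Sdiag n :=
    subJ_le_Sdiag hSd (fun i hi => hi.2)
  intro g hg
  induction hg using Subgroup.closure_induction with
  | mem x hx =>
    obtain ⟨i, hi, rfl⟩ := hx
    by_cases h2 : (i : ℕ) + 1 < r
    · exact ⟨s i, mem_subJ s ⟨hi, h2⟩, by rw [inv_mul_cancel]; exact one_mem _⟩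
    · have : i = ⟨r - 1, Nat.sub_lt hr Nat.one_pos⟩ := Fin.ext (by have := i.isLt; simp; omega)
      refine ⟨1, one_mem _, ?_⟩
      rw [this]
      simpa using htNS
  | one => exact ⟨1, one_mem _, by simpa using one_mem (NS n)⟩
  | mul x y _ _ px py =>
    obtain ⟨x₁, hx₁, hm₁⟩ := px
    obtain ⟨y₁, hy₁, hm₂⟩ := py
    refine ⟨x₁ * y₁, mul_mem hx₁ hy₁, ?_⟩
    have key : (x₁ * y₁)⁻¹ * (x * y) = (y₁⁻¹ * (x₁⁻¹ * x) * y₁) * (y₁⁻¹ * y) := by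
      group
    rw [key]
    exact mul_mem (NS_conj (inv_mem (hY hy₁)) hm₁) hm₂
  | inv x _ px =>
    obtain ⟨x₁, hx₁, hm⟩ := px
    refine ⟨x₁⁻¹, inv_mem hx₁, ?_⟩
    have key : (x₁⁻¹)⁻¹ * x⁻¹ = x₁ * (x₁⁻¹ * x)⁻¹ * x₁⁻¹ := by group
    rw [key]
    exact NS_conj (hY hx₁) (inv_mem hm)

lemma Zcond (hn : 5 ≤ n) (hr : 1 ≤ r)
    (hSd : ∀ i : Fin r, (i : ℕ) + 1 < r → s i ∈ Sdiag n)
    (htNS : s ⟨r - 1, Nat.sub_lt hr Nat.one_pos⟩ ∈ NS n) (lo : ℕ) :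
    subJ s {i | lo ≤ (i : ℕ) ∧ (i : ℕ) + 1 < r} ⊓ subJ s {i | lo + 1 ≤ (i : ℕ)}
      = subJ s {i | lo + 1 ≤ (i : ℕ) ∧ (i : ℕ) + 1 < r} := by
  apply le_antisymm
  · intro g hg
    rw [Subgroup.mem_inf] at hg
    obtain ⟨x, hx, hm⟩ := decomp hr hSd htNS (lo + 1) g hg.2
    have hgS : g ∈ Sdiag n := subJ_le_Sdiag hSd (fun i hi => hi.2) hg.1
    have hxS : x ∈ Sdiag n := subJ_le_Sdiag hSd (fun i hi => hi.2) hx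
    have h1 : x⁻¹ * g = 1 :=
      Sdiag_inf_NS (by omega) (mul_mem (inv_mem hxS) hgS) hm
    have : g = x := by
      have := congrArg (fun z => x * z) h1
      simpa [← mul_assoc] using this
    rw [this]
    exact hx
  · exact le_inf (subJ_mono s (fun i hi => ⟨Nat.le_of_succ_le hi.1, hi.2⟩))
      (subJ_mono s (fun i hi => hi.1))

end decompsec

section mainsec

variable {n r : ℕ} {s : Fin r → Equiv.Perm ℕ} {lo : ℕ}

/-- Claim A: `G_I ⊓ F = G_{I ∩ A}` for `I ⊆ [lo, r-1]`. -/
lemma claimA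
    (hcomm : ∀ i j : Fin r, (i : ℕ) + 2 ≤ (j : ℕ) ∨ (j : ℕ) + 2 ≤ (i : ℕ) →
      Commute (s i) (s j))
    (hZc : subJ s {i | lo ≤ (i : ℕ) ∧ (i : ℕ) + 1 < r} ⊓ subJ s {i | lo + 1 ≤ (i : ℕ)}
      = subJ s {i | lo + 1 ≤ (i : ℕ) ∧ (i : ℕ) + 1 < r})
    (IH : ∀ I J : Set (Fin r), (∀ i ∈ I, lo + 1 ≤ (i : ℕ)) → (∀ j ∈ J, lo + 1 ≤ (j : ℕ)) →
      subJ s I ⊓ subJ s J = subJ s (I ∩ J))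
    (hlo : lo + 1 < r)
    (I : Set (Fin r)) (hI : ∀ i ∈ I, lo ≤ (i : ℕ)) :
    subJ s I ⊓ subJ s {i | lo ≤ (i : ℕ) ∧ (i : ℕ) + 1 < r}
      = subJ s (I ∩ {i | (i : ℕ) + 1 < r}) := by
  apply le_antisymm
  swap
  · exact le_inf (subJ_mono s Set.inter_subset_left)
      (subJ_mono s (fun i hi => ⟨hI i hi.1, hi.2⟩))
  by_cases hIA : ∀ i ∈ I, (i : ℕ) + 1 < r
  · intro g hg
    rw [Subgroup.mem_inf] at hg
    have heq : I ∩ {i : Fin r | (i : ℕ) + 1 < r} = I := by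
      ext i; exact ⟨fun h => h.1, fun h => ⟨h, hIA i h⟩⟩
    rw [heq]
    exact hg.1
  · push_neg at hIA
    obtain ⟨il, hil, hil2⟩ := hIA
    by_cases hloI : (⟨lo, by omega⟩ : Fin r) ∈ I
    · by_cases hfull : ∀ i : Fin r, lo ≤ (i : ℕ) → i ∈ I
      · intro g hg
        rw [Subgroup.mem_inf] at hg
        exact subJ_mono s (fun i hi => by exact ⟨hfull i hi.1, hi.2⟩) hg.2
      · push_neg at hfull
        obtain ⟨m, hm1, hm2⟩ := hfull
        intro g hg
        rw [Subgroup.mem_inf] at hg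
        obtain ⟨a, ha, b, hb, rfl⟩ := subJ_split s hcomm m hm2 _ hg.1
        have hmr : (m : ℕ) ≤ r - 1 := by have := m.isLt; omega
        have haF : a ∈ subJ s {i | lo ≤ (i : ℕ) ∧ (i : ℕ) + 1 < r} :=
          subJ_mono s (fun i hi => by refine ⟨hI i hi.1, ?_⟩; have h2 : (i : ℕ) < (m : ℕ) := hi.2; omega) ha
        have hbF : b ∈ subJ s {i | lo ≤ (i : ℕ) ∧ (i : ℕ) + 1 < r} := by
          have h := mul_mem (inv_mem haF) hg.2
          rwa [inv_mul_cancel_left] at h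
        have hbT : b ∈ subJ s {i | lo + 1 ≤ (i : ℕ)} :=
          subJ_mono s (fun i hi => by have h2 := hi.2; simp only [Set.mem_setOf_eq]; omega) hb
        have hbZ : b ∈ subJ s {i | lo + 1 ≤ (i : ℕ) ∧ (i : ℕ) + 1 < r} := by
          rw [← hZc]; exact Subgroup.mem_inf.mpr ⟨hbF, hbT⟩
        have hbb : b ∈ subJ s ({i : Fin r | lo + 1 ≤ (i : ℕ) ∧ (i : ℕ) + 1 < r}
            ∩ {i | i ∈ I ∧ (m : ℕ) < (i : ℕ)}) := by
          rw [← IH {i : Fin r | lo + 1 ≤ (i : ℕ) ∧ (i : ℕ) + 1 < r}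
            {i | i ∈ I ∧ (m : ℕ) < (i : ℕ)} (fun i hi => hi.1)
            (fun i hi => by have h2 : (m : ℕ) < (i : ℕ) := hi.2; omega)]
          exact Subgroup.mem_inf.mpr ⟨hbZ, hb⟩
        refine mul_mem (subJ_mono s ?_ ha) (subJ_mono s ?_ hbb)
        · rintro i ⟨hi1, hi2⟩
          exact ⟨hi1, by simp only [Set.mem_setOf_eq] at hi2 ⊢; omega⟩
        · rintro i ⟨hi1, hi2⟩
          exact ⟨hi2.1, hi1.2⟩
    · have hIT : ∀ i ∈ I, lo + 1 ≤ (i : ℕ) := by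
        intro i hi
        have h1 := hI i hi
        by_cases hivl : (i : ℕ) = lo
        · exfalso
          exact hloI ((Fin.ext hivl : i = ⟨lo, by omega⟩) ▸ hi)
        · omega
      intro g hg
      rw [Subgroup.mem_inf] at hg
      have hgT : g ∈ subJ s {i | lo + 1 ≤ (i : ℕ)} := subJ_mono s hIT hg.1
      have hgZ : g ∈ subJ s {i | lo + 1 ≤ (i : ℕ) ∧ (i : ℕ) + 1 < r} := by
        rw [← hZc]; exact Subgroup.mem_inf.mpr ⟨hg.2, hgT⟩
      have h2 : g ∈ subJ s (I ∩ {i : Fin r | lo + 1 ≤ (i : ℕ) ∧ (i : ℕ) + 1 < r}) := by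
        rw [← IH I {i : Fin r | lo + 1 ≤ (i : ℕ) ∧ (i : ℕ) + 1 < r} hIT
          (fun i hi => hi.1)]
        exact Subgroup.mem_inf.mpr ⟨hg.1, hgZ⟩
      exact subJ_mono s (fun i hi => by exact ⟨hi.1, hi.2.2⟩) h2

/-- Claim B: `G_I ⊓ T = G_{I ∩ [lo+1, r-1]}` for `I ⊆ [lo, r-1]`. -/
lemma claimB
    (hcomm : ∀ i j : Fin r, (i : ℕ) + 2 ≤ (j : ℕ) ∨ (j : ℕ) + 2 ≤ (i : ℕ) →
      Commute (s i) (s j))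
    (hC : IsCOn s {i : Fin r | (i : ℕ) + 1 < r})
    (hZc : subJ s {i | lo ≤ (i : ℕ) ∧ (i : ℕ) + 1 < r} ⊓ subJ s {i | lo + 1 ≤ (i : ℕ)}
      = subJ s {i | lo + 1 ≤ (i : ℕ) ∧ (i : ℕ) + 1 < r})
    (hlo : lo + 1 < r)
    (I : Set (Fin r)) (hI : ∀ i ∈ I, lo ≤ (i : ℕ)) :
    subJ s I ⊓ subJ s {i | lo + 1 ≤ (i : ℕ)}
      = subJ s (I ∩ {i | lo + 1 ≤ (i : ℕ)}) := by
  apply le_antisymm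
  swap
  · exact le_inf (subJ_mono s Set.inter_subset_left)
      (subJ_mono s Set.inter_subset_right)
  by_cases hIT : ∀ i ∈ I, lo + 1 ≤ (i : ℕ)
  · intro g hg
    rw [Subgroup.mem_inf] at hg
    have heq : I ∩ {i : Fin r | lo + 1 ≤ (i : ℕ)} = I := by
      ext i; exact ⟨fun h => h.1, fun h => ⟨h, hIT i h⟩⟩
    rw [heq]
    exact hg.1
  · by_cases hIA : ∀ i ∈ I, (i : ℕ) + 1 < r
    · intro g hg
      rw [Subgroup.mem_inf] at hg
      have hgF : g ∈ subJ s {i | lo ≤ (i : ℕ) ∧ (i : ℕ) + 1 < r} :=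
        subJ_mono s (fun i hi => by exact ⟨hI i hi, hIA i hi⟩) hg.1
      have hgZ : g ∈ subJ s {i | lo + 1 ≤ (i : ℕ) ∧ (i : ℕ) + 1 < r} := by
        rw [← hZc]; exact Subgroup.mem_inf.mpr ⟨hgF, hg.2⟩
      have h2 : g ∈ subJ s (I ∩ {i : Fin r | lo + 1 ≤ (i : ℕ) ∧ (i : ℕ) + 1 < r}) := by
        rw [← hC I hIA {i : Fin r | lo + 1 ≤ (i : ℕ) ∧ (i : ℕ) + 1 < r}
          (fun i hi => hi.2)]
        exact Subgroup.mem_inf.mpr ⟨hg.1, hgZ⟩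
      exact subJ_mono s (fun i hi => by exact ⟨hi.1, hi.2.1⟩) h2
    · push_neg at hIA
      obtain ⟨il, hil, hil2⟩ := hIA
      by_cases hfull : ∀ i : Fin r, lo ≤ (i : ℕ) → i ∈ I
      · intro g hg
        rw [Subgroup.mem_inf] at hg
        exact subJ_mono s
          (fun i hi => by exact ⟨hfull i (by have : lo + 1 ≤ (i : ℕ) := hi; omega), hi⟩) hg.2
      · push_neg at hfull
        obtain ⟨m, hm1, hm2⟩ := hfull
        intro g hg
        rw [Subgroup.mem_inf] at hg
        obtain ⟨a, ha, b, hb, rfl⟩ := subJ_split s hcomm m hm2 _ hg.1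
        have hmr : (m : ℕ) ≤ r - 1 := by have := m.isLt; omega
        have hbT : b ∈ subJ s {i | lo + 1 ≤ (i : ℕ)} :=
          subJ_mono s (fun i hi => by have h2 := hi.2; simp only [Set.mem_setOf_eq]; omega) hb
        have haT : a ∈ subJ s {i | lo + 1 ≤ (i : ℕ)} := by
          have h := mul_mem hg.2 (inv_mem hbT)
          rwa [mul_inv_cancel_right] at h
        have haF : a ∈ subJ s {i | lo ≤ (i : ℕ) ∧ (i : ℕ) + 1 < r} :=
          subJ_mono s (fun i hi => by refine ⟨hI i hi.1, ?_⟩; have h2 : (i : ℕ) < (m : ℕ) := hi.2; omega) ha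
        have haZ : a ∈ subJ s {i | lo + 1 ≤ (i : ℕ) ∧ (i : ℕ) + 1 < r} := by
          rw [← hZc]; exact Subgroup.mem_inf.mpr ⟨haF, haT⟩
        have haa : a ∈ subJ s ({i : Fin r | lo + 1 ≤ (i : ℕ) ∧ (i : ℕ) + 1 < r}
            ∩ {i | i ∈ I ∧ (i : ℕ) < (m : ℕ)}) := by
          rw [← hC {i : Fin r | lo + 1 ≤ (i : ℕ) ∧ (i : ℕ) + 1 < r}
            (fun i hi => hi.2) {i | i ∈ I ∧ (i : ℕ) < (m : ℕ)}
            (fun i hi => show (i : ℕ) + 1 < r by have : (i : ℕ) < (m : ℕ) := hi.2; omega)]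
          exact Subgroup.mem_inf.mpr ⟨haZ, ha⟩
        refine mul_mem (subJ_mono s ?_ haa) (subJ_mono s ?_ hb)
        · rintro i ⟨hi1, hi2⟩
          exact ⟨hi2.1, hi1.1⟩
        · rintro i ⟨hi1, hi2⟩
          exact ⟨hi1, by simp only [Set.mem_setOf_eq] at hi2 ⊢; omega⟩

end mainsec

section casesec

variable {n r : ℕ} {s : Fin r → Equiv.Perm ℕ} {lo : ℕ}

/-- Case 1: if `J` avoids the last index. -/
lemma caseA
    (hcomm : ∀ i j : Fin r, (i : ℕ) + 2 ≤ (j : ℕ) ∨ (j : ℕ) + 2 ≤ (i : ℕ) →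
      Commute (s i) (s j))
    (hC : IsCOn s {i : Fin r | (i : ℕ) + 1 < r})
    (hZc : subJ s {i | lo ≤ (i : ℕ) ∧ (i : ℕ) + 1 < r} ⊓ subJ s {i | lo + 1 ≤ (i : ℕ)}
      = subJ s {i | lo + 1 ≤ (i : ℕ) ∧ (i : ℕ) + 1 < r})
    (IH : ∀ I J : Set (Fin r), (∀ i ∈ I, lo + 1 ≤ (i : ℕ)) → (∀ j ∈ J, lo + 1 ≤ (j : ℕ)) →
      subJ s I ⊓ subJ s J = subJ s (I ∩ J))
    (hlo : lo + 1 < r)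
    (I J : Set (Fin r)) (hI : ∀ i ∈ I, lo ≤ (i : ℕ))
    (hJ : ∀ j ∈ J, lo ≤ (j : ℕ) ∧ (j : ℕ) + 1 < r) :
    subJ s I ⊓ subJ s J = subJ s (I ∩ J) := by
  apply le_antisymm
  swap
  · exact le_inf (subJ_mono s Set.inter_subset_left) (subJ_mono s Set.inter_subset_right)
  intro g hg
  rw [Subgroup.mem_inf] at hg
  have hgF : g ∈ subJ s {i | lo ≤ (i : ℕ) ∧ (i : ℕ) + 1 < r} :=
    subJ_mono s (fun j hj => by exact hJ j hj) hg.2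
  have h1 : g ∈ subJ s (I ∩ {i : Fin r | (i : ℕ) + 1 < r}) := by
    rw [← claimA hcomm hZc IH hlo I hI]
    exact Subgroup.mem_inf.mpr ⟨hg.1, hgF⟩
  have h2 : g ∈ subJ s ((I ∩ {i : Fin r | (i : ℕ) + 1 < r}) ∩ J) := by
    rw [← hC (I ∩ {i : Fin r | (i : ℕ) + 1 < r}) (fun i hi => hi.2) J
      (fun j hj => (hJ j hj).2)]
    exact Subgroup.mem_inf.mpr ⟨h1, hg.2⟩
  exact subJ_mono s (fun i hi => by exact ⟨hi.1.1, hi.2⟩) h2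

/-- Case 2: if `J` avoids the first index `lo`. -/
lemma caseB
    (hcomm : ∀ i j : Fin r, (i : ℕ) + 2 ≤ (j : ℕ) ∨ (j : ℕ) + 2 ≤ (i : ℕ) →
      Commute (s i) (s j))
    (hC : IsCOn s {i : Fin r | (i : ℕ) + 1 < r})
    (hZc : subJ s {i | lo ≤ (i : ℕ) ∧ (i : ℕ) + 1 < r} ⊓ subJ s {i | lo + 1 ≤ (i : ℕ)}
      = subJ s {i | lo + 1 ≤ (i : ℕ) ∧ (i : ℕ) + 1 < r})
    (IH : ∀ I J : Set (Fin r), (∀ i ∈ I, lo + 1 ≤ (i : ℕ)) → (∀ j ∈ J, lo + 1 ≤ (j : ℕ)) →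
      subJ s I ⊓ subJ s J = subJ s (I ∩ J))
    (hlo : lo + 1 < r)
    (I J : Set (Fin r)) (hI : ∀ i ∈ I, lo ≤ (i : ℕ))
    (hJ : ∀ j ∈ J, lo + 1 ≤ (j : ℕ)) :
    subJ s I ⊓ subJ s J = subJ s (I ∩ J) := by
  apply le_antisymm
  swap
  · exact le_inf (subJ_mono s Set.inter_subset_left) (subJ_mono s Set.inter_subset_right)
  intro g hg
  rw [Subgroup.mem_inf] at hg
  have hgT : g ∈ subJ s {i | lo + 1 ≤ (i : ℕ)} := subJ_mono s (fun j hj => hJ j hj) hg.2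
  have h1 : g ∈ subJ s (I ∩ {i : Fin r | lo + 1 ≤ (i : ℕ)}) := by
    rw [← claimB hcomm hC hZc hlo I hI]
    exact Subgroup.mem_inf.mpr ⟨hg.1, hgT⟩
  have h2 : g ∈ subJ s ((I ∩ {i : Fin r | lo + 1 ≤ (i : ℕ)}) ∩ J) := by
    rw [← IH (I ∩ {i : Fin r | lo + 1 ≤ (i : ℕ)}) J (fun i hi => hi.2) hJ]
    exact Subgroup.mem_inf.mpr ⟨h1, hg.2⟩
  exact subJ_mono s (fun i hi => by exact ⟨hi.1.1, hi.2⟩) h2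

end casesec

lemma COn_all {n r : ℕ} {s : Fin r → Equiv.Perm ℕ} (hn : 5 ≤ n) (hr : 1 ≤ r)
    (hcomm : ∀ i j : Fin r, (i : ℕ) + 2 ≤ (j : ℕ) ∨ (j : ℕ) + 2 ≤ (i : ℕ) →
      Commute (s i) (s j))
    (hC : IsCOn s {i : Fin r | (i : ℕ) + 1 < r})
    (hSd : ∀ i : Fin r, (i : ℕ) + 1 < r → s i ∈ Sdiag n)
    (htNS : s ⟨r - 1, Nat.sub_lt hr Nat.one_pos⟩ ∈ NS n) :
    ∀ k lo : ℕ, r ≤ lo + k → ∀ I J : Set (Fin r), (∀ i ∈ I, lo ≤ (i : ℕ)) →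
      (∀ j ∈ J, lo ≤ (j : ℕ)) → subJ s I ⊓ subJ s J = subJ s (I ∩ J) := by
  intro k
  induction k with
  | zero =>
    intro lo hlo I J hI hJ
    have hIe : I = ∅ := Set.eq_empty_iff_forall_notMem.2
      (fun i hi => by have := hI i hi; have := i.isLt; omega)
    rw [hIe, Set.empty_inter, subJ_empty, bot_inf_eq]
  | succ k IHk =>
    intro lo hlo I J hI hJ
    by_cases hstep : lo + 1 < r
    swap
    · -- degenerate window: everything is the last index
      have hIsub : I ⊆ {(⟨r - 1, Nat.sub_lt hr Nat.one_pos⟩ : Fin r)} := fun i hi => by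
        have h1 := hI i hi; have h2 := i.isLt
        exact Set.mem_singleton_iff.mpr (Fin.ext (by simp; omega))
      have hJsub : J ⊆ {(⟨r - 1, Nat.sub_lt hr Nat.one_pos⟩ : Fin r)} := fun j hj => by
        have h1 := hJ j hj; have h2 := j.isLt
        exact Set.mem_singleton_iff.mpr (Fin.ext (by simp; omega))
      rcases Set.subset_singleton_iff_eq.1 hIsub with hIe | hIe
      · rw [hIe, Set.empty_inter, subJ_empty, bot_inf_eq]
      · rcases Set.subset_singleton_iff_eq.1 hJsub with hJe | hJe
        · rw [hJe, Set.inter_empty, subJ_empty, inf_bot_eq]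
        · rw [hIe, hJe, Set.inter_self, inf_idem]
    · have IH' : ∀ I J : Set (Fin r), (∀ i ∈ I, lo + 1 ≤ (i : ℕ)) →
          (∀ j ∈ J, lo + 1 ≤ (j : ℕ)) → subJ s I ⊓ subJ s J = subJ s (I ∩ J) :=
        fun I J hI hJ => IHk (lo + 1) (by omega) I J hI hJ
      have hZc := Zcond hn hr hSd htNS lo
      by_cases hJA : ∀ j ∈ J, (j : ℕ) + 1 < r
      · exact caseA hcomm hC hZc IH' hstep I J hI (fun j hj => ⟨hJ j hj, hJA j hj⟩)
      by_cases hIA : ∀ i ∈ I, (i : ℕ) + 1 < r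
      · rw [inf_comm, Set.inter_comm]
        exact caseA hcomm hC hZc IH' hstep J I hJ (fun i hi => ⟨hI i hi, hIA i hi⟩)
      by_cases hJlo : (⟨lo, by omega⟩ : Fin r) ∈ J
      swap
      · have hJT : ∀ j ∈ J, lo + 1 ≤ (j : ℕ) := fun j hj => by
          by_cases h : (j : ℕ) = lo
          · exact absurd ((Fin.ext h : j = ⟨lo, by omega⟩) ▸ hj) hJlo
          · have := hJ j hj; omega
        exact caseB hcomm hC hZc IH' hstep I J hI hJT
      by_cases hIlo : (⟨lo, by omega⟩ : Fin r) ∈ I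
      swap
      · have hIT : ∀ i ∈ I, lo + 1 ≤ (i : ℕ) := fun i hi => by
          by_cases h : (i : ℕ) = lo
          · exact absurd ((Fin.ext h : i = ⟨lo, by omega⟩) ▸ hi) hIlo
          · have := hI i hi; omega
        rw [inf_comm, Set.inter_comm]
        exact caseB hcomm hC hZc IH' hstep J I hJ hIT
      -- main remaining case
      by_cases hfull : ∀ i : Fin r, lo ≤ (i : ℕ) → i ∈ I
      · have hJI : J ⊆ I := fun j hj => hfull j (hJ j hj)
        have heq : I ∩ J = J := by
          ext x; exact ⟨fun h => h.2, fun h => ⟨hJI h, h⟩⟩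
        rw [heq, inf_eq_right.2 (subJ_mono s hJI)]
      · push_neg at hfull
        obtain ⟨m, hm1, hm2⟩ := hfull
        apply le_antisymm
        swap
        · exact le_inf (subJ_mono s Set.inter_subset_left)
            (subJ_mono s Set.inter_subset_right)
        intro g hg
        rw [Subgroup.mem_inf] at hg
        obtain ⟨a, ha, b, hb, rfl⟩ := subJ_split s hcomm m hm2 _ hg.1
        have hb' : b ∈ subJ s (J ∪ {i | i ∈ I ∧ (m : ℕ) < (i : ℕ)}) :=
          subJ_mono s Set.subset_union_right hb
        have hab' : a ∈ subJ s (J ∪ {i | i ∈ I ∧ (m : ℕ) < (i : ℕ)}) := by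
          have h := mul_mem (subJ_mono s Set.subset_union_left hg.2) (inv_mem hb')
          rwa [mul_inv_cancel_right] at h
        have key1 := caseA hcomm hC hZc IH' hstep
          (J ∪ {i | i ∈ I ∧ (m : ℕ) < (i : ℕ)}) {i | i ∈ I ∧ (i : ℕ) < (m : ℕ)}
          (fun i hi => by
            rcases hi with h | h
            · exact hJ i h
            · exact hI i h.1)
          (fun i hi => by
            have h1 := hI i hi.1
            have h2 : (i : ℕ) < (m : ℕ) := hi.2
            have h3 := m.isLt
            exact ⟨h1, by omega⟩)
        have ha2 : a ∈ subJ s ((J ∪ {i | i ∈ I ∧ (m : ℕ) < (i : ℕ)})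
            ∩ {i | i ∈ I ∧ (i : ℕ) < (m : ℕ)}) := by
          rw [← key1]
          exact Subgroup.mem_inf.mpr ⟨hab', ha⟩
        have haJ : a ∈ subJ s (J ∩ I) := by
          refine subJ_mono s ?_ ha2
          rintro i ⟨hi1, hi2⟩
          rcases hi1 with h | h
          · exact ⟨h, hi2.1⟩
          · exact absurd hi2.2 (by have : (m : ℕ) < (i : ℕ) := h.2; omega)
        have hbJ : b ∈ subJ s J := by
          have h := mul_mem (inv_mem (subJ_mono s Set.inter_subset_left haJ)) hg.2
          rwa [inv_mul_cancel_left] at h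
        have key2 := caseB hcomm hC hZc IH' hstep J {i | i ∈ I ∧ (m : ℕ) < (i : ℕ)} hJ
          (fun i hi => by have h2 : (m : ℕ) < (i : ℕ) := hi.2; omega)
        have hb2 : b ∈ subJ s (J ∩ {i | i ∈ I ∧ (m : ℕ) < (i : ℕ)}) := by
          rw [← key2]
          exact Subgroup.mem_inf.mpr ⟨hbJ, hb⟩
        refine mul_mem (subJ_mono s ?_ haJ) (subJ_mono s ?_ hb2)
        · rintro i ⟨hi1, hi2⟩; exact ⟨hi2, hi1⟩
        · rintro i ⟨hi1, hi2⟩; exact ⟨hi2.1, hi1⟩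

/-- If `G = ⟨s₁,…,s_r⟩ ≤ W ≅ Dₙ` is a string group generated by involutions with
`G_{1,…,r-1} = S ≅ Sym(n)` a string C-group and `s_r ∈ N ∖ Z(G)`, then `G = W` and
`(G, {s₁,…,s_r})` is a string C-group. -/
theorem stmt14 (n r : ℕ) (hn : 5 ≤ n) (hr : 1 ≤ r) (s : Fin r → Equiv.Perm ℕ)
    (hmem : ∀ i, s i ∈ Dn n)
    (hinv : ∀ i, orderOf (s i) = 2)
    (hcomm : ∀ i j : Fin r, (i : ℕ) + 2 ≤ (j : ℕ) ∨ (j : ℕ) + 2 ≤ (i : ℕ) →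
      Commute (s i) (s j))
    (hS : subJ s {i | (i : ℕ) + 1 < r}
      = Subgroup.closure {g | ∃ i, 1 ≤ i ∧ i < n ∧ g = beta n i})
    (hC : IsCOn s {i | (i : ℕ) + 1 < r})
    (hNmem : s ⟨r - 1, by omega⟩ ∈ Neven n)
    (hZ : ¬ ∀ g ∈ Subgroup.closure (Set.range s), Commute (s ⟨r - 1, by omega⟩) g) :
    Subgroup.closure (Set.range s) = Dn n ∧ IsCOn s Set.univ := by
  constructor
  · exact part1 n r hn hr s hmem hinv hS hNmem hZ
  · have hSd : ∀ i : Fin r, (i : ℕ) + 1 < r → s i ∈ Sdiag n := by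
      intro i hi
      have h1 : s i ∈ subJ s {i : Fin r | (i : ℕ) + 1 < r} := mem_subJ s hi
      rw [hS] at h1
      exact Scl_le_Sdiag n h1
    have htNS : s ⟨r - 1, by omega⟩ ∈ NS n := Neven_le_NS n hNmem
    intro J _ K _
    exact COn_all hn hr hcomm hC hSd htNS r 0 (by omega) J K
      (fun i _ => Nat.zero_le _) (fun j _ => Nat.zero_le _)
end

section
/- Let n ≥ 5 be odd. Then the Coxeter group of type D_n admits a string C-group representation of rank n with Schläfli type {4, 3^{n−2}}. -/
theorem Equiv.Perm.apply_inv_self {α : Type*} (f : Equiv.Perm α) (x : α) : f (f⁻¹ x) = x :=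
  f.apply_symm_apply x

theorem Equiv.Perm.inv_apply_self {α : Type*} (f : Equiv.Perm α) (x : α) : f⁻¹ (f x) = x :=
  f.symm_apply_apply x

namespace P16
open Equiv Subgroup

variable {n : ℕ}

/-- coordinate permutation action on sign vectors -/
def act : Equiv.Perm (Fin n) →* MulAut (Fin n → ℤˣ) where
  toFun σ :=
    { toFun := fun v => v ∘ ⇑σ⁻¹
      invFun := fun v => v ∘ ⇑σ
      left_inv := fun v => by ext c; simp
      right_inv := fun v => by ext c; simp
      map_mul' := fun v w => rfl }
  map_one' := by ext v c; simp
  map_mul' := fun σ τ => by ext v c; simp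

@[simp] lemma act_apply (σ : Equiv.Perm (Fin n)) (v : Fin n → ℤˣ) (c : Fin n) :
    act σ v c = v (σ⁻¹ c) := rfl

abbrev Hg (n : ℕ) := (Fin n → ℤˣ) ⋊[act] Equiv.Perm (Fin n)

def rel (J : Set (Fin n)) (c d : Fin n) : Prop :=
  ∀ k : Fin n, min (c:ℕ) (d:ℕ) < (k:ℕ) → (k:ℕ) ≤ max (c:ℕ) (d:ℕ) → k ∈ J

lemma rel_refl (J : Set (Fin n)) (c : Fin n) : rel J c c := by
  intro k h1 h2; omega

lemma rel_symm {J : Set (Fin n)} {c d : Fin n} (h : rel J c d) : rel J d c := by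
  intro k h1 h2; exact h k (by omega) (by omega)

lemma rel_trans {J : Set (Fin n)} {c d e : Fin n} (h1 : rel J c d) (h2 : rel J d e) :
    rel J c e := by
  intro k hk1 hk2
  rcases le_or_gt (k:ℕ) (max (c:ℕ) (d:ℕ)) with h | h
  · by_cases h' : min (c:ℕ) (d:ℕ) < (k:ℕ)
    · exact h1 k h' h
    · exact h2 k (by omega) (by omega)
  · exact h2 k (by omega) (by omega)

lemma rel_inter {J K : Set (Fin n)} {c d : Fin n} :
    rel (J ∩ K) c d ↔ rel J c d ∧ rel K c d := by
  constructor
  · intro h; exact ⟨fun k h1 h2 => (h k h1 h2).1, fun k h1 h2 => (h k h1 h2).2⟩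
  · rintro ⟨hJ, hK⟩ k h1 h2; exact ⟨hJ k h1 h2, hK k h1 h2⟩

lemma rel_mono {J K : Set (Fin n)} (hJK : J ⊆ K) {c d : Fin n} (h : rel J c d) :
    rel K c d := fun k h1 h2 => hJK (h k h1 h2)

@[simp] lemma fin_val_zero [NeZero n] : ((0 : Fin n) : ℕ) = 0 := rfl

lemma rel_zero_le [NeZero n] {J : Set (Fin n)} {c d : Fin n} (h : rel J 0 d)
    (hcd : (c:ℕ) ≤ (d:ℕ)) : rel J 0 c := by
  intro k h1 h2
  rw [fin_val_zero, Nat.min_comm, Nat.min_zero] at h1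
  rw [fin_val_zero, Nat.max_comm, Nat.max_zero] at h2
  exact h k (by rw [fin_val_zero]; omega) (by rw [fin_val_zero]; omega)

/-- block-preserving permutations -/
def Y (J : Set (Fin n)) : Subgroup (Equiv.Perm (Fin n)) where
  carrier := {σ | ∀ c, rel J c (σ c)}
  one_mem' := fun c => rel_refl J c
  mul_mem' := by
    intro σ τ hσ hτ c
    exact rel_trans (hτ c) (hσ (τ c))
  inv_mem' := by
    intro σ hσ c
    have := hσ (σ⁻¹ c)
    simp only [Equiv.Perm.apply_inv_self] at this
    exact rel_symm this

lemma swap_mem_Y {J : Set (Fin n)} {a b : Fin n} (h : rel J a b) :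
    Equiv.swap a b ∈ Y J := by
  intro c
  rcases eq_or_ne c a with rfl | hca
  · rw [Equiv.swap_apply_left]; exact h
  rcases eq_or_ne c b with rfl | hcb
  · rw [Equiv.swap_apply_right]; exact rel_symm h
  · rw [Equiv.swap_apply_of_ne_of_ne hca hcb]; exact rel_refl J c

def signOK [NeZero n] (J : Set (Fin n)) (ε : Fin n → ℤˣ) : Prop :=
  (∏ c, ε c) = 1 ∧ ∀ c d : Fin n, ¬ rel J 0 c → ¬ rel J 0 d → ε c = ε d

lemma signOK_one [NeZero n] (J : Set (Fin n)) : signOK J 1 := by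
  constructor
  · simp
  · intro c d _ _; rfl

def Cs [NeZero n] (J : Set (Fin n)) : Subgroup (Hg n) where
  carrier := {g | g.right ∈ Y J ∧ ((0 ∈ J ∧ signOK J g.left) ∨ (0 ∉ J ∧ g.left = 1))}
  one_mem' := by
    refine ⟨(Y J).one_mem, ?_⟩
    by_cases h0 : 0 ∈ J
    · exact Or.inl ⟨h0, signOK_one J⟩
    · exact Or.inr ⟨h0, rfl⟩
  mul_mem' := by
    rintro g h ⟨hgY, hgS⟩ ⟨hhY, hhS⟩
    refine ⟨(Y J).mul_mem hgY hhY, ?_⟩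
    rcases hgS with ⟨h0, hg1, hg2⟩ | ⟨h0, hg1⟩
    · rcases hhS with ⟨_, hh1, hh2⟩ | ⟨h0', _⟩
      · refine Or.inl ⟨h0, ?_, ?_⟩
        · show (∏ c, (g.left * act g.right h.left) c) = 1
          rw [show (∏ c, (g.left * act g.right h.left) c)
              = (∏ c, g.left c) * (∏ c, h.left (g.right⁻¹ c)) by
            rw [← Finset.prod_mul_distrib]; rfl]
          rw [Equiv.prod_comp g.right⁻¹ h.left] at *
          rw [hg1, hh1, one_mul]
        · intro c d hc hd
          show g.left c * h.left (g.right⁻¹ c) = g.left d * h.left (g.right⁻¹ d)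
          have hic : ¬ rel J 0 (g.right⁻¹ c) := by
            intro hrel
            exact hc (rel_trans hrel (rel_symm ((Y J).inv_mem hgY c)))
          have hid : ¬ rel J 0 (g.right⁻¹ d) := by
            intro hrel
            exact hd (rel_trans hrel (rel_symm ((Y J).inv_mem hgY d)))
          rw [hg2 c d hc hd, hh2 _ _ hic hid]
      · exact absurd h0 h0'
    · rcases hhS with ⟨h0', _⟩ | ⟨_, hh1⟩
      · exact absurd h0' h0
      · refine Or.inr ⟨h0, ?_⟩
        show g.left * act g.right h.left = 1
        rw [hg1, hh1, map_one, one_mul]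
  inv_mem' := by
    rintro g ⟨hgY, hgS⟩
    refine ⟨(Y J).inv_mem hgY, ?_⟩
    rcases hgS with ⟨h0, hg1, hg2⟩ | ⟨h0, hg1⟩
    · refine Or.inl ⟨h0, ?_, ?_⟩
      · show (∏ c, (act g.right⁻¹ g.left⁻¹) c) = 1
        have : (∏ c, (act g.right⁻¹ g.left⁻¹) c) = ∏ c, (g.left⁻¹ : Fin n → ℤˣ) c := by
          exact Equiv.prod_comp (g.right⁻¹)⁻¹ (g.left⁻¹ : Fin n → ℤˣ)
        rw [this]
        have : (∏ c, (g.left⁻¹ : Fin n → ℤˣ) c) = (∏ c, g.left c)⁻¹ := by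
          rw [← Finset.prod_inv_distrib]; rfl
        rw [this, hg1, inv_one]
      · intro c d hc hd
        show (g.left⁻¹ : Fin n → ℤˣ) ((g.right⁻¹)⁻¹ c) = (g.left⁻¹ : Fin n → ℤˣ) ((g.right⁻¹)⁻¹ d)
        have hic : ¬ rel J 0 ((g.right⁻¹)⁻¹ c) := by
          intro hrel
          exact hc (rel_trans hrel (rel_symm (((Y J).inv_mem ((Y J).inv_mem hgY)) c)))
        have hid : ¬ rel J 0 ((g.right⁻¹)⁻¹ d) := by
          intro hrel
          exact hd (rel_trans hrel (rel_symm (((Y J).inv_mem ((Y J).inv_mem hgY)) d)))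
        show (g.left ((g.right⁻¹)⁻¹ c))⁻¹ = (g.left ((g.right⁻¹)⁻¹ d))⁻¹
        rw [hg2 _ _ hic hid]
    · refine Or.inr ⟨h0, ?_⟩
      show act g.right⁻¹ g.left⁻¹ = 1
      rw [hg1, inv_one, map_one]
  

lemma mem_Y {J : Set (Fin n)} {σ : Equiv.Perm (Fin n)} :
    σ ∈ Y J ↔ ∀ c, rel J c (σ c) := Iff.rfl

def prev (k : Fin n) : Fin n := ⟨(k:ℕ) - 1, lt_of_le_of_lt (Nat.sub_le _ _) k.isLt⟩

def sgens (J : Set (Fin n)) : Set (Equiv.Perm (Fin n)) :=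
  {g | ∃ k : Fin n, k ∈ J ∧ (k:ℕ) ≠ 0 ∧ g = Equiv.swap (prev k) k}

lemma young_aux (J : Set (Fin n)) (m : ℕ) :
    ∀ σ ∈ Y J, (∀ x : Fin n, m ≤ (x:ℕ) → σ x = x) → σ ∈ Subgroup.closure (sgens J) := by
  induction m with
  | zero =>
      intro σ _ hfix
      have : σ = 1 := Equiv.ext fun x => hfix x (Nat.zero_le _)
      rw [this]; exact one_mem _
  | succ m ih =>
      by_cases hm : m < n
      · have inner : ∀ d : ℕ, ∀ σ, σ ∈ Y J → (∀ x : Fin n, m+1 ≤ (x:ℕ) → σ x = x) →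
            m - ((σ⁻¹ ⟨m, hm⟩ : Fin n):ℕ) ≤ d → σ ∈ Subgroup.closure (sgens J) := by
          intro d
          induction d with
          | zero =>
              intro σ hσ hfix hd
              have hMv : ((⟨m, hm⟩ : Fin n) : ℕ) = m := rfl
              -- σ⁻¹ M = M
              have hble : ((σ⁻¹ ⟨m, hm⟩ : Fin n):ℕ) ≤ m := by
                by_contra hgt
                have : σ (σ⁻¹ ⟨m, hm⟩) = σ⁻¹ ⟨m, hm⟩ := hfix _ (by omega)
                rw [Equiv.Perm.apply_inv_self] at this
                have : m = ((σ⁻¹ ⟨m, hm⟩ : Fin n):ℕ) := by rw [← this]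
                omega
              have hbm : σ⁻¹ ⟨m, hm⟩ = ⟨m, hm⟩ := by
                apply Fin.ext; simp only; omega
              have hfixM : σ ⟨m, hm⟩ = ⟨m, hm⟩ := by
                conv_lhs => rw [← hbm]
                exact Equiv.Perm.apply_inv_self σ _
              apply ih σ hσ
              intro x hx
              rcases eq_or_lt_of_le hx with heq | hlt
              · have : x = ⟨m, hm⟩ := Fin.ext (by omega)
                rw [this]; exact hfixM
              · exact hfix x (by omega)
          | succ d ihd =>
              intro σ hσ hfix hd
              have hMv : ((⟨m, hm⟩ : Fin n) : ℕ) = m := rfl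
              by_cases hbm : σ⁻¹ ⟨m, hm⟩ = ⟨m, hm⟩
              · have hfixM : σ ⟨m, hm⟩ = ⟨m, hm⟩ := by
                  conv_lhs => rw [← hbm]
                  exact Equiv.Perm.apply_inv_self σ _
                apply ih σ hσ
                intro x hx
                rcases eq_or_lt_of_le hx with heq | hlt
                · have : x = ⟨m, hm⟩ := Fin.ext (by omega)
                  rw [this]; exact hfixM
                · exact hfix x (by omega)
              · set b : Fin n := σ⁻¹ ⟨m, hm⟩ with hbdef
                have hble : (b:ℕ) ≤ m := by
                  by_contra hgt
                  have : σ b = b := hfix _ (by omega)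
                  rw [hbdef, Equiv.Perm.apply_inv_self] at this
                  have : m = (b:ℕ) := by rw [hbdef, ← this]
                  omega
                have hblt : (b:ℕ) < m := by
                  rcases eq_or_lt_of_le hble with heq | h
                  · exact absurd (Fin.ext (by omega) : b = ⟨m, hm⟩) hbm
                  · exact h
                have hb'lt : (b:ℕ)+1 < n := by omega
                set b' : Fin n := ⟨(b:ℕ)+1, hb'lt⟩ with hb'def
                have hb'v : (b' : ℕ) = (b:ℕ)+1 := rfl
                have hrel : rel J b b' := by
                  have hσb : σ b = ⟨m, hm⟩ := by rw [hbdef, Equiv.Perm.apply_inv_self]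
                  have h1 : rel J b (σ b) := mem_Y.mp hσ b
                  rw [hσb] at h1
                  intro k hk1 hk2
                  apply h1 k <;> omega
                have hb'J : b' ∈ J := hrel b' (by omega) (by omega)
                have hswapgen : Equiv.swap b b' ∈ sgens J := by
                  refine ⟨b', hb'J, by omega, ?_⟩
                  rw [show prev b' = b from Fin.ext rfl]
                set σ' := σ * Equiv.swap b b' with hσ'def
                have hσ'Y : σ' ∈ Y J := (Y J).mul_mem hσ (swap_mem_Y hrel)
                have hσ'fix : ∀ x : Fin n, m+1 ≤ (x:ℕ) → σ' x = x := by
                  intro x hx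
                  have hxb : x ≠ b := by intro h; rw [h] at hx; omega
                  have hxb' : x ≠ b' := by
                    intro h; rw [h] at hx; omega
                  simp only [hσ'def, Equiv.Perm.mul_apply, Equiv.swap_apply_of_ne_of_ne hxb hxb']
                  exact hfix x hx
                have hσ'inv : σ'⁻¹ ⟨m, hm⟩ = b' := by
                  simp only [hσ'def, mul_inv_rev, Equiv.Perm.mul_apply]
                  rw [Equiv.swap_inv, ← hbdef, Equiv.swap_apply_left]
                have hmem' : σ' ∈ Subgroup.closure (sgens J) := by
                  apply ihd σ' hσ'Y hσ'fix
                  rw [hσ'inv]; omega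
                have : σ = σ' * Equiv.swap b b' := by
                  rw [hσ'def, mul_assoc, Equiv.swap_mul_self, mul_one]
                rw [this]
                exact mul_mem hmem' (subset_closure hswapgen)
        intro σ hσ hfix
        exact inner m σ hσ hfix (by omega)
      · intro σ hσ hfix
        apply ih σ hσ
        intro x hx
        exact absurd x.isLt (by omega)

lemma Y_le_closure (J : Set (Fin n)) : Y J ≤ Subgroup.closure (sgens J) := by
  intro σ hσ
  exact young_aux J n σ hσ (fun x hx => absurd x.isLt (by omega))


section Signs
variable {n : ℕ}

lemma act_one (v : Fin n → ℤˣ) : act (1 : Equiv.Perm (Fin n)) v = v := by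
  funext c; rw [act_apply]; simp

lemma mk_mul (ε ε' : Fin n → ℤˣ) (σ σ' : Equiv.Perm (Fin n)) :
    (⟨ε, σ⟩ * ⟨ε', σ'⟩ : Hg n) = ⟨ε * act σ ε', σ * σ'⟩ := rfl

def eps0 [NeZero n] : Fin n → ℤˣ := fun c => if c = 0 then 1 else -1

def chi (a b : Fin n) : Fin n → ℤˣ := fun c => if c = a then -1 else if c = b then -1 else 1

lemma chi_mul_self (a b : Fin n) : chi a b * chi a b = 1 := by
  funext c
  show chi a b c * chi a b c = 1
  rcases Int.units_eq_one_or (chi a b c) with h|h <;> rw [h] <;> decide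

lemma eps0_mul_self [NeZero n] : (eps0 (n := n)) * eps0 = 1 := by
  funext c
  show eps0 c * eps0 c = 1
  rcases Int.units_eq_one_or (eps0 (n := n) c) with h|h <;> rw [h] <;> decide

lemma chi_prod {a b : Fin n} (h : a ≠ b) : (∏ c, chi a b c) = 1 := by
  classical
  have h1 : ∏ c ∈ ({a, b} : Finset (Fin n)), chi a b c = ∏ c, chi a b c := by
    apply Finset.prod_subset (Finset.subset_univ _)
    intro x _ hx
    simp only [Finset.mem_insert, Finset.mem_singleton] at hx
    push_neg at hx
    simp [chi, hx.1, hx.2]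
  rw [← h1, Finset.prod_pair h]
  simp [chi, h, Ne.symm h]

lemma prod_eq_neg_one_pow [NeZero n] (ε : Fin n → ℤˣ) :
    (∏ c, ε c) = (-1 : ℤˣ) ^ (Finset.univ.filter (fun c => ε c = -1)).card := by
  classical
  rw [← Finset.prod_filter_mul_prod_filter_not Finset.univ (fun c => ε c = -1)]
  have h2 : (∏ c ∈ Finset.univ.filter (fun c => ¬ ε c = -1), ε c) = 1 := by
    apply Finset.prod_eq_one
    intro c hc
    simp only [Finset.mem_filter] at hc
    rcases Int.units_eq_one_or (ε c) with h|h
    · exact h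
    · exact absurd h hc.2
  rw [h2, mul_one]
  rw [Finset.prod_congr rfl (fun c hc => (Finset.mem_filter.mp hc).2), Finset.prod_const]

lemma even_card_of_prod [NeZero n] {ε : Fin n → ℤˣ} (hprod : (∏ c, ε c) = 1) :
    Even (Finset.univ.filter (fun c => ε c = -1)).card := by
  classical
  have h := prod_eq_neg_one_pow ε
  rw [hprod] at h
  rcases Nat.even_or_odd (Finset.univ.filter (fun c => ε c = -1)).card with he|ho
  · exact he
  · exfalso
    rw [ho.neg_one_pow] at h
    exact absurd h (by decide)

lemma sign_mem [NeZero n] (T : Subgroup (Hg n)) (B : Set (Fin n))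
    (hchi : ∀ a b : Fin n, a ∈ B → b ∈ B → a ≠ b → (⟨chi a b, 1⟩ : Hg n) ∈ T) :
    ∀ N : ℕ, ∀ ε : Fin n → ℤˣ,
      (Finset.univ.filter (fun c => ε c = -1)).card ≤ N →
      (∀ c, ε c = -1 → c ∈ B) → (∏ c, ε c) = 1 →
      (⟨ε, (1 : Equiv.Perm (Fin n))⟩ : Hg n) ∈ T := by
  intro N
  induction N with
  | zero =>
      intro ε hcard hB hprod
      have hε : ε = 1 := by
        funext c
        rcases Int.units_eq_one_or (ε c) with h|h
        · exact h
        · exfalso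
          have hc : c ∈ Finset.univ.filter (fun c => ε c = -1) := by
            simp [h]
          have := Finset.card_pos.mpr ⟨c, hc⟩
          omega
      rw [hε]
      exact one_mem T
  | succ N ihN =>
      intro ε hcard hB hprod
      by_cases h0 : (Finset.univ.filter (fun c => ε c = -1)).card = 0
      · exact ihN ε (le_trans (Nat.le_of_eq h0) (Nat.zero_le N)) hB hprod
      · obtain ⟨a, ha⟩ :=
          (Finset.card_pos (s := Finset.univ.filter (fun c => ε c = -1))).mp (by omega)
        have haε : ε a = -1 := (Finset.mem_filter.mp ha).2
        have heven := even_card_of_prod hprod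
        have hcard2 : 2 ≤ (Finset.univ.filter (fun c => ε c = -1)).card := by
          rcases heven with ⟨k, hk⟩; omega
        obtain ⟨b, hb⟩ : ∃ b, b ∈ (Finset.univ.filter (fun c => ε c = -1)).erase a := by
          apply (Finset.card_pos (s := (Finset.univ.filter (fun c => ε c = -1)).erase a)).mp
          rw [Finset.card_erase_of_mem ha]
          omega
        have hba : b ≠ a := (Finset.mem_erase.mp hb).1
        have hbε : ε b = -1 := (Finset.mem_filter.mp (Finset.mem_erase.mp hb).2).2
        set ε' := ε * chi a b with hε'
        have hε'a : ε' a = 1 := by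
          rw [hε']
          show ε a * chi a b a = 1
          rw [haε]; simp [chi]
        have hε'b : ε' b = 1 := by
          rw [hε']
          show ε b * chi a b b = 1
          rw [hbε]; simp [chi, hba]
        have hε'other : ∀ c, c ≠ a → c ≠ b → ε' c = ε c := by
          intro c hca hcb
          rw [hε']
          show ε c * chi a b c = ε c
          simp [chi, hca, hcb]
        have hsub : (Finset.univ.filter (fun c => ε' c = -1)) ⊆
            (Finset.univ.filter (fun c => ε c = -1)).erase a := by
          intro c hc
          have hcε' : ε' c = -1 := (Finset.mem_filter.mp hc).2
          have hca : c ≠ a := by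
            intro h; rw [h, hε'a] at hcε'; exact absurd hcε' (by decide)
          have hcb : c ≠ b := by
            intro h; rw [h, hε'b] at hcε'; exact absurd hcε' (by decide)
          rw [hε'other c hca hcb] at hcε'
          exact Finset.mem_erase.mpr ⟨hca, by simp [hcε']⟩
        have hcard' : (Finset.univ.filter (fun c => ε' c = -1)).card ≤ N := by
          have := Finset.card_le_card hsub
          rw [Finset.card_erase_of_mem ha] at this
          omega
        have hB' : ∀ c, ε' c = -1 → c ∈ B := by
          intro c hc
          have hmem : c ∈ (Finset.univ.filter (fun c => ε c = -1)).erase a :=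
            hsub (by simp [hc])
          exact hB c (Finset.mem_filter.mp (Finset.mem_erase.mp hmem).2).2
        have hprod' : (∏ c, ε' c) = 1 := by
          rw [hε']
          show (∏ c, ε c * chi a b c) = 1
          rw [Finset.prod_mul_distrib, hprod, chi_prod (Ne.symm hba), one_mul]
        have hmem' := ihN ε' hcard' hB' hprod'
        have key : (⟨ε, (1 : Equiv.Perm (Fin n))⟩ : Hg n)
            = (⟨ε', 1⟩ : Hg n) * ⟨chi a b, 1⟩ := by
          rw [mk_mul, act_one, mul_one, hε', mul_assoc, chi_mul_self, mul_one]
        rw [key]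
        exact mul_mem hmem' (hchi a b (hB a haε) (hB b hbε) (Ne.symm hba))

end Signs


section Gens
variable {n : ℕ}

def xg [NeZero n] (k : Fin n) : Hg n :=
  if (k:ℕ) = 0 then ⟨eps0, 1⟩ else ⟨1, Equiv.swap (prev k) k⟩

def gens [NeZero n] (J : Set (Fin n)) : Set (Hg n) := xg '' J

lemma mem_Cs_mk [NeZero n] {J : Set (Fin n)} {ε : Fin n → ℤˣ} {σ : Equiv.Perm (Fin n)} :
    (⟨ε, σ⟩ : Hg n) ∈ Cs J ↔ σ ∈ Y J ∧ ((0 ∈ J ∧ signOK J ε) ∨ (0 ∉ J ∧ ε = 1)) := Iff.rfl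

lemma mk_inv (ε : Fin n → ℤˣ) (σ : Equiv.Perm (Fin n)) :
    (⟨ε, σ⟩ : Hg n)⁻¹ = ⟨act σ⁻¹ ε⁻¹, σ⁻¹⟩ := rfl

lemma conj_mk (τ : Equiv.Perm (Fin n)) (v : Fin n → ℤˣ) :
    (⟨1, τ⟩ : Hg n) * ⟨v, 1⟩ * (⟨1, τ⟩ : Hg n)⁻¹ = ⟨act τ v, 1⟩ := by
  have h : (⟨1, τ⟩ : Hg n) * ⟨v, 1⟩ * (⟨1, τ⟩ : Hg n)⁻¹
      = ⟨(1 * act τ v) * act (τ * 1) ((act τ⁻¹) (1:Fin n → ℤˣ)⁻¹), (τ * 1) * τ⁻¹⟩ := rfl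
  rw [h]
  congr 1
  · simp
  · simp

lemma inrY_mem [NeZero n] {J : Set (Fin n)} {σ : Equiv.Perm (Fin n)} (hσ : σ ∈ Y J) :
    (⟨1, σ⟩ : Hg n) ∈ Subgroup.closure (gens J) := by
  have hσcl : σ ∈ Subgroup.closure (sgens J) := Y_le_closure J hσ
  have h1 : (SemidirectProduct.inr σ : Hg n) ∈
      Subgroup.map (SemidirectProduct.inr : Equiv.Perm (Fin n) →* Hg n)
        (Subgroup.closure (sgens J)) := Subgroup.mem_map_of_mem _ hσcl
  rw [MonoidHom.map_closure] at h1
  have h2 : (⇑(SemidirectProduct.inr : Equiv.Perm (Fin n) →* Hg n)) '' sgens J ⊆ gens J := by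
    rintro _ ⟨g', ⟨k, hkJ, hk0, rfl⟩, rfl⟩
    refine ⟨k, hkJ, ?_⟩
    rw [xg, if_neg hk0]
    rfl
  have h3 := Subgroup.closure_mono h2 h1
  exact h3

lemma eps0_prod [NeZero n] (hodd : Odd n) : (∏ c, (eps0 : Fin n → ℤˣ) c) = 1 := by
  classical
  rw [prod_eq_neg_one_pow]
  have hfe : (Finset.univ.filter (fun c => (eps0 : Fin n → ℤˣ) c = -1))
      = Finset.univ.erase 0 := by
    ext c
    simp only [Finset.mem_filter, Finset.mem_univ, true_and, Finset.mem_erase, and_true]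
    constructor
    · intro h hc
      rw [hc] at h
      simp only [eps0, if_pos rfl] at h
      exact absurd h (by decide)
    · intro h
      simp only [eps0, if_neg h]
  rw [hfe, Finset.card_erase_of_mem (Finset.mem_univ _), Finset.card_univ, Fintype.card_fin]
  have : Even (n - 1) := by
    rcases hodd with ⟨k, hk⟩
    exact ⟨k, by omega⟩
  exact this.neg_one_pow

lemma eta_eq [NeZero n] (a : Fin n) :
    act (Equiv.swap 0 a) eps0 = fun c => if c = a then 1 else -1 := by
  funext c
  rw [act_apply, Equiv.swap_inv]
  by_cases hc : c = a
  · rw [hc, Equiv.swap_apply_right]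
    simp [eps0]
  · have h1 : Equiv.swap 0 a c ≠ 0 := by
      by_cases hc0 : c = 0
      · rw [hc0, Equiv.swap_apply_left]
        intro h
        exact hc (by rw [hc0, h])
      · rw [Equiv.swap_apply_of_ne_of_ne hc0 hc]
        exact hc0
    simp [eps0, h1, hc]

lemma chi_eq_eta_mul [NeZero n] {a b : Fin n} (hab : a ≠ b) :
    chi a b = act (Equiv.swap 0 a) eps0 * act (Equiv.swap 0 b) eps0 := by
  rw [eta_eq, eta_eq]
  funext c
  show chi a b c = (if c = a then 1 else -1) * (if c = b then (1:ℤˣ) else -1)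
  by_cases hca : c = a
  · simp [chi, hca, hab, Ne.symm hab]
  · by_cases hcb : c = b
    · simp [chi, hca, hcb, Ne.symm hab]
    · simp [chi, hca, hcb]

theorem closure_gens [NeZero n] (hodd : Odd n) (J : Set (Fin n)) :
    Subgroup.closure (gens J) = Cs J := by
  apply le_antisymm
  · rw [Subgroup.closure_le]
    rintro _ ⟨k, hkJ, rfl⟩
    by_cases hk0 : (k:ℕ) = 0
    · have hk : k = 0 := Fin.ext (by rw [hk0, fin_val_zero])
      rw [xg, if_pos hk0]
      refine ⟨(Y J).one_mem, Or.inl ⟨by rw [← hk]; exact hkJ, eps0_prod hodd, ?_⟩⟩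
      intro c d hc hd
      have hc0 : c ≠ 0 := by
        intro h; rw [h] at hc; exact hc (rel_refl J 0)
      have hd0 : d ≠ 0 := by
        intro h; rw [h] at hd; exact hd (rel_refl J 0)
      show eps0 c = eps0 d
      simp [eps0, hc0, hd0]
    · rw [xg, if_neg hk0]
      have hrel : rel J (prev k) k := by
        intro k' h1 h2
        have hpv : ((prev k : Fin n) : ℕ) = (k:ℕ) - 1 := rfl
        have : k' = k := Fin.ext (by omega)
        rw [this]; exact hkJ
      refine ⟨swap_mem_Y hrel, ?_⟩
      by_cases h0J : 0 ∈ J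
      · exact Or.inl ⟨h0J, signOK_one J⟩
      · exact Or.inr ⟨h0J, rfl⟩
  · rintro g hg
    obtain ⟨ε, σ⟩ := g
    rw [mem_Cs_mk] at hg
    obtain ⟨hY, hsign⟩ := hg
    have hright : (⟨ε, σ⟩ : Hg n) = (⟨ε, 1⟩ : Hg n) * ⟨1, σ⟩ := by
      rw [mk_mul, map_one, mul_one, one_mul]
    rw [hright]
    refine mul_mem ?_ (inrY_mem hY)
    rcases hsign with ⟨h0J, hprod, hconst⟩ | ⟨h0J, hε⟩
    · -- sign case
      have hchi : ∀ a b : Fin n, rel J 0 a → rel J 0 b → a ≠ b →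
          (⟨chi a b, 1⟩ : Hg n) ∈ Subgroup.closure (gens J) := by
        intro a b ha hb hab
        have hx0 : (⟨eps0, 1⟩ : Hg n) ∈ Subgroup.closure (gens J) := by
          apply Subgroup.subset_closure
          refine ⟨0, h0J, ?_⟩
          rw [xg, if_pos (fin_val_zero)]
        have heta : ∀ a : Fin n, rel J 0 a →
            (⟨act (Equiv.swap 0 a) eps0, 1⟩ : Hg n) ∈ Subgroup.closure (gens J) := by
          intro a ha
          rw [← conj_mk]
          have hswY : (⟨1, Equiv.swap 0 a⟩ : Hg n) ∈ Subgroup.closure (gens J) :=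
            inrY_mem (swap_mem_Y ha)
          exact mul_mem (mul_mem hswY hx0) (inv_mem hswY)
        rw [show (⟨chi a b, 1⟩ : Hg n)
            = (⟨act (Equiv.swap 0 a) eps0, 1⟩ : Hg n) * ⟨act (Equiv.swap 0 b) eps0, 1⟩ by
          rw [mk_mul, act_one, mul_one, ← chi_eq_eta_mul hab]]
        exact mul_mem (heta a ha) (heta b hb)
      by_cases hex : ∃ c, ¬ rel J 0 c ∧ ε c = -1
      · obtain ⟨c₀, hc₀B, hc₀ε⟩ := hex
        set ε' := ε * eps0 with hε'
        have hkey : (⟨ε, (1:Equiv.Perm (Fin n))⟩ : Hg n) = (⟨ε', 1⟩ : Hg n) * ⟨eps0, 1⟩ := by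
          rw [mk_mul, act_one, mul_one, hε', mul_assoc, eps0_mul_self, mul_one]
        rw [hkey]
        refine mul_mem ?_ (Subgroup.subset_closure ⟨0, h0J, by rw [xg, if_pos fin_val_zero]⟩)
        apply sign_mem (Subgroup.closure (gens J)) {c | rel J 0 c}
          (fun a b ha hb hab => hchi a b ha hb hab)
          (Finset.univ.filter (fun c => ε' c = -1)).card ε' le_rfl
        · intro c hc
          by_contra hcB
          have hc0 : c ≠ 0 := by
            intro h; rw [h] at hcB; exact hcB (rel_refl J 0)
          have hεc : ε c = -1 := by
            rw [hconst c c₀ hcB hc₀B]; exact hc₀ε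
          have : ε' c = 1 := by
            rw [hε']
            show ε c * eps0 c = 1
            rw [hεc]
            simp [eps0, hc0]
          rw [this] at hc
          exact absurd hc (by decide)
        · rw [hε']
          show (∏ c, ε c * eps0 c) = 1
          rw [Finset.prod_mul_distrib, hprod, eps0_prod hodd, one_mul]
      · push_neg at hex
        apply sign_mem (Subgroup.closure (gens J)) {c | rel J 0 c}
          (fun a b ha hb hab => hchi a b ha hb hab)
          (Finset.univ.filter (fun c => ε c = -1)).card ε le_rfl
        · intro c hc
          by_contra hcB
          exact absurd hc (by simpa using hex c hcB)
        · exact hprod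
    · rw [hε]
      exact one_mem _

end Gens


section Inf
variable {n : ℕ}

lemma B_nested [NeZero n] (J K : Set (Fin n)) :
    (∀ c, rel J 0 c → rel K 0 c) ∨ (∀ c, rel K 0 c → rel J 0 c) := by
  by_cases h : ∀ c, rel J 0 c → rel K 0 c
  · exact Or.inl h
  · push_neg at h
    obtain ⟨x, hxJ, hxK⟩ := h
    refine Or.inr fun y hyK => ?_
    rcases le_or_gt (y:ℕ) (x:ℕ) with hle | hlt
    · exact rel_zero_le hxJ hle
    · exact absurd (rel_zero_le hyK (le_of_lt hlt)) hxK

lemma signOK_of_le [NeZero n] {J K : Set (Fin n)} (hJK : J ⊆ K) {ε : Fin n → ℤˣ}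
    (h : signOK J ε) : signOK K ε := by
  obtain ⟨hprod, hconst⟩ := h
  refine ⟨hprod, fun c d hc hd => hconst c d ?_ ?_⟩
  · intro hr; exact hc (rel_mono hJK hr)
  · intro hr; exact hd (rel_mono hJK hr)

theorem Cs_inf [NeZero n] (J K : Set (Fin n)) : Cs J ⊓ Cs K = Cs (J ∩ K) := by
  ext g
  obtain ⟨ε, σ⟩ := g
  rw [Subgroup.mem_inf, mem_Cs_mk, mem_Cs_mk, mem_Cs_mk]
  have hYiff : σ ∈ Y (J ∩ K) ↔ σ ∈ Y J ∧ σ ∈ Y K := by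
    rw [mem_Y, mem_Y, mem_Y]
    constructor
    · intro h
      exact ⟨fun c => (rel_inter.mp (h c)).1, fun c => (rel_inter.mp (h c)).2⟩
    · intro ⟨h1, h2⟩ c
      exact rel_inter.mpr ⟨h1 c, h2 c⟩
  constructor
  · rintro ⟨⟨hYJ, hsJ⟩, ⟨hYK, hsK⟩⟩
    refine ⟨hYiff.mpr ⟨hYJ, hYK⟩, ?_⟩
    rcases hsJ with ⟨h0J, hpJ, hcJ⟩ | ⟨h0J, hε⟩
    · rcases hsK with ⟨h0K, hpK, hcK⟩ | ⟨h0K, hε⟩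
      · refine Or.inl ⟨⟨h0J, h0K⟩, hpJ, ?_⟩
        rcases B_nested J K with hn | hn
        · -- B_J ⊆ B_K, so rel (J∩K) 0 c ↔ rel J 0 c
          intro c d hc hd
          apply hcJ c d
          · intro hr; exact hc (rel_inter.mpr ⟨hr, hn c hr⟩)
          · intro hr; exact hd (rel_inter.mpr ⟨hr, hn d hr⟩)
        · intro c d hc hd
          apply hcK c d
          · intro hr; exact hc (rel_inter.mpr ⟨hn c hr, hr⟩)
          · intro hr; exact hd (rel_inter.mpr ⟨hn d hr, hr⟩)
      · exact Or.inr ⟨fun h => h0K h.2, hε⟩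
    · exact Or.inr ⟨fun h => h0J h.1, hε⟩
  · rintro ⟨hY, hs⟩
    obtain ⟨hYJ, hYK⟩ := hYiff.mp hY
    rcases hs with ⟨⟨h0J, h0K⟩, hp, hc⟩ | ⟨h0JK, hε⟩
    · refine ⟨⟨hYJ, Or.inl ⟨h0J, hp, ?_⟩⟩, ⟨hYK, Or.inl ⟨h0K, hp, ?_⟩⟩⟩
      · intro c d hcc hdd
        apply hc c d
        · intro hr; exact hcc (rel_mono Set.inter_subset_left hr)
        · intro hr; exact hdd (rel_mono Set.inter_subset_left hr)
      · intro c d hcc hdd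
        apply hc c d
        · intro hr; exact hcc (rel_mono Set.inter_subset_right hr)
        · intro hr; exact hdd (rel_mono Set.inter_subset_right hr)
    · constructor
      · refine ⟨hYJ, ?_⟩
        by_cases h0J : 0 ∈ J
        · exact Or.inl ⟨h0J, by rw [hε]; exact signOK_one J⟩
        · exact Or.inr ⟨h0J, hε⟩
      · refine ⟨hYK, ?_⟩
        by_cases h0K : 0 ∈ K
        · exact Or.inl ⟨h0K, by rw [hε]; exact signOK_one K⟩
        · exact Or.inr ⟨h0K, hε⟩

end Inf


section Concrete
variable {n : ℕ}

lemma swap_commute_perm {a b c d : ℕ} (h1 : a ≠ c) (h2 : a ≠ d) (h3 : b ≠ c) (h4 : b ≠ d) :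
    Commute (Equiv.swap a b) (Equiv.swap c d) := by
  apply Equiv.Perm.Disjoint.commute
  intro x
  by_cases hx : x = a ∨ x = b
  · right
    rcases hx with rfl | rfl
    · exact Equiv.swap_apply_of_ne_of_ne h1 h2
    · exact Equiv.swap_apply_of_ne_of_ne h3 h4
  · push_neg at hx
    left
    exact Equiv.swap_apply_of_ne_of_ne hx.1 hx.2

/-- per-coordinate sign hom -/
def phiu (c : Fin n) : ℤˣ →* Equiv.Perm ℕ where
  toFun u := if u = 1 then 1 else Equiv.swap ((c:ℕ)+1) (n+(c:ℕ)+1)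
  map_one' := if_pos rfl
  map_mul' := by
    intro u v
    rcases Int.units_eq_one_or u with hu|hu <;> rcases Int.units_eq_one_or v with hv|hv <;>
      subst hu <;> subst hv <;>
      simp [Equiv.swap_mul_self, (by decide : (-1 : ℤˣ) * -1 = 1), (by decide : ¬((-1:ℤˣ) = 1))]

lemma phiu_apply_fix (c : Fin n) (u : ℤˣ) (x : ℕ) (h1 : x ≠ (c:ℕ)+1) (h2 : x ≠ n+(c:ℕ)+1) :
    phiu c u x = x := by
  show (if u = 1 then (1 : Equiv.Perm ℕ) else Equiv.swap ((c:ℕ)+1) (n+(c:ℕ)+1)) x = x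
  split
  · rfl
  · exact Equiv.swap_apply_of_ne_of_ne h1 h2

lemma phiu_comm : Pairwise fun c d : Fin n =>
    ∀ (u v : ℤˣ), Commute (phiu c u) (phiu d v) := by
  intro c d hcd u v
  show Commute (if u = 1 then _ else _) (if v = 1 then _ else _)
  split
  · exact Commute.one_left _
  · split
    · exact Commute.one_right _
    · have hc := c.isLt
      have hd := d.isLt
      have hv : (c:ℕ) ≠ (d:ℕ) := fun h => hcd (Fin.ext h)
      exact swap_commute_perm (by omega) (by omega) (by omega) (by omega)

def sgnPart [NeZero n] : (Fin n → ℤˣ) →* Equiv.Perm ℕ :=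
  MonoidHom.noncommPiCoprod phiu phiu_comm

lemma perm_noncommProd_fix {ι : Type*} (f : ι → Equiv.Perm ℕ) (x : ℕ) :
    ∀ (s : Finset ι), (∀ i ∈ s, f i x = x) →
    ∀ (comm : (↑s : Set ι).Pairwise (Function.onFun Commute f)), s.noncommProd f comm x = x := by
  classical
  intro s
  induction s using Finset.induction_on with
  | empty => intro _ comm; rw [Finset.noncommProd_empty]; rfl
  | @insert a s ha ih =>
      intro h comm
      rw [Finset.noncommProd_insert_of_notMem s a f comm ha, Equiv.Perm.mul_apply]
      rw [ih (fun i hi => h i (Finset.mem_insert_of_mem hi)) _]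
      exact h a (Finset.mem_insert_self a s)

lemma perm_noncommProd_single {ι : Type*} [DecidableEq ι] (f : ι → Equiv.Perm ℕ) (x : ℕ) (c : ι) :
    ∀ (s : Finset ι), c ∈ s → (∀ i ∈ s, i ≠ c → f i x = x) →
      (∀ i ∈ s, i ≠ c → f i (f c x) = f c x) →
    ∀ (comm : (↑s : Set ι).Pairwise (Function.onFun Commute f)), s.noncommProd f comm x = f c x := by
  intro s
  induction s using Finset.induction_on with
  | empty => intro h; simp at h
  | @insert a s ha ih =>
      intro hc h1 h2 comm
      rw [Finset.noncommProd_insert_of_notMem s a f comm ha, Equiv.Perm.mul_apply]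
      by_cases hac : a = c
      · subst hac
        rw [perm_noncommProd_fix f x s
          (fun i hi => h1 i (Finset.mem_insert_of_mem hi) (fun hia => ha (hia ▸ hi))) _]
      · have hcs : c ∈ s := by
          rcases Finset.mem_insert.mp hc with h|h
          · exact absurd h.symm hac
          · exact h
        rw [ih hcs (fun i hi hic => h1 i (Finset.mem_insert_of_mem hi) hic)
          (fun i hi hic => h2 i (Finset.mem_insert_of_mem hi) hic) _]
        exact h2 a (Finset.mem_insert_self a s) hac

lemma sgnPart_eq_noncommProd [NeZero n] (ε : Fin n → ℤˣ) :
    sgnPart ε = Finset.univ.noncommProd (fun c => phiu c (ε c))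
      (fun c _ d _ hcd => phiu_comm hcd _ _) := rfl

lemma sgnPart_apply_low [NeZero n] (ε : Fin n → ℤˣ) (c : Fin n) :
    sgnPart ε ((c:ℕ)+1) = if ε c = 1 then (c:ℕ)+1 else n+(c:ℕ)+1 := by
  have hc := c.isLt
  have hfc : phiu c (ε c) ((c:ℕ)+1) = if ε c = 1 then (c:ℕ)+1 else n+(c:ℕ)+1 := by
    show (if ε c = 1 then (1 : Equiv.Perm ℕ) else Equiv.swap ((c:ℕ)+1) (n+(c:ℕ)+1)) _ = _
    split
    · rfl
    · rw [Equiv.swap_apply_left]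
  rw [sgnPart_eq_noncommProd]
  erw [perm_noncommProd_single (fun d => phiu d (ε d)) ((c:ℕ)+1) c Finset.univ
    (Finset.mem_univ c) ?h1 ?h2]
  · exact hfc
  case h1 =>
    intro d _ hdc
    have hd := d.isLt
    have hvdc : (d:ℕ) ≠ (c:ℕ) := fun h => hdc (Fin.ext h)
    exact phiu_apply_fix d (ε d) _ (by omega) (by omega)
  case h2 =>
    intro d _ hdc
    have hd := d.isLt
    have hvdc : (d:ℕ) ≠ (c:ℕ) := fun h => hdc (Fin.ext h)
    rw [hfc]
    split
    · exact phiu_apply_fix d (ε d) _ (by omega) (by omega)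
    · exact phiu_apply_fix d (ε d) _ (by omega) (by omega)

lemma sgnPart_apply_high [NeZero n] (ε : Fin n → ℤˣ) (c : Fin n) :
    sgnPart ε (n+(c:ℕ)+1) = if ε c = 1 then n+(c:ℕ)+1 else (c:ℕ)+1 := by
  have hc := c.isLt
  have hfc : phiu c (ε c) (n+(c:ℕ)+1) = if ε c = 1 then n+(c:ℕ)+1 else (c:ℕ)+1 := by
    show (if ε c = 1 then (1 : Equiv.Perm ℕ) else Equiv.swap ((c:ℕ)+1) (n+(c:ℕ)+1)) _ = _
    split
    · rfl
    · rw [Equiv.swap_apply_right]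
  rw [sgnPart_eq_noncommProd]
  erw [perm_noncommProd_single (fun d => phiu d (ε d)) (n+(c:ℕ)+1) c Finset.univ
    (Finset.mem_univ c) ?h1 ?h2]
  · exact hfc
  case h1 =>
    intro d _ hdc
    have hd := d.isLt
    have hvdc : (d:ℕ) ≠ (c:ℕ) := fun h => hdc (Fin.ext h)
    exact phiu_apply_fix d (ε d) _ (by omega) (by omega)
  case h2 =>
    intro d _ hdc
    have hd := d.isLt
    have hvdc : (d:ℕ) ≠ (c:ℕ) := fun h => hdc (Fin.ext h)
    rw [hfc]
    split
    · exact phiu_apply_fix d (ε d) _ (by omega) (by omega)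
    · exact phiu_apply_fix d (ε d) _ (by omega) (by omega)

lemma sgnPart_apply_out [NeZero n] (ε : Fin n → ℤˣ) (x : ℕ) (hx : x = 0 ∨ n+n < x) :
    sgnPart ε x = x := by
  rw [sgnPart_eq_noncommProd]
  apply perm_noncommProd_fix
  intro d _
  have hd := d.isLt
  exact phiu_apply_fix d (ε d) _ (by omega) (by omega)

/-- underlying function of the diagonal embedding -/
def pf (σ : Equiv.Perm (Fin n)) (x : ℕ) : ℕ :=
  if h : 1 ≤ x ∧ x ≤ n then ((σ ⟨x-1, by omega⟩ : Fin n) : ℕ) + 1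
  else if h2 : n+1 ≤ x ∧ x ≤ n+n then n + ((σ ⟨x-n-1, by omega⟩ : Fin n) : ℕ) + 1
  else x

lemma pf_low (σ : Equiv.Perm (Fin n)) (c : Fin n) : pf σ ((c:ℕ)+1) = ((σ c : Fin n) : ℕ) + 1 := by
  have hc := c.isLt
  rw [pf, dif_pos ⟨by omega, by omega⟩]
  have hmk : ∀ (h : (c:ℕ)+1-1 < n), σ ⟨(c:ℕ)+1-1, h⟩ = σ c :=
    fun h => congrArg σ (Fin.ext rfl)
  rw [hmk]

lemma pf_high (σ : Equiv.Perm (Fin n)) (c : Fin n) :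
    pf σ (n+(c:ℕ)+1) = n + ((σ c : Fin n) : ℕ) + 1 := by
  have hc := c.isLt
  have hn : 0 < n := Fin.pos c
  rw [pf, dif_neg (by omega), dif_pos ⟨by omega, by omega⟩]
  have hmk : ∀ (h : n+(c:ℕ)+1-n-1 < n), σ ⟨n+(c:ℕ)+1-n-1, h⟩ = σ c :=
    fun h => congrArg σ (Fin.ext (by show n+(c:ℕ)+1-n-1 = (c:ℕ); omega))
  rw [hmk]

lemma pf_out (σ : Equiv.Perm (Fin n)) (x : ℕ) (hx : x = 0 ∨ n+n < x) : pf σ x = x := by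
  rw [pf, dif_neg (by omega), dif_neg (by omega)]

lemma nat_cases (n : ℕ) (x : ℕ) : (∃ c : Fin n, x = (c:ℕ)+1) ∨ (∃ c : Fin n, x = n+(c:ℕ)+1)
    ∨ (x = 0 ∨ n+n < x) := by
  by_cases h1 : 1 ≤ x ∧ x ≤ n
  · exact Or.inl ⟨⟨x-1, by omega⟩, by show x = (x-1)+1; omega⟩
  · by_cases h2 : n+1 ≤ x ∧ x ≤ n+n
    · exact Or.inr (Or.inl ⟨⟨x-n-1, by omega⟩, by show x = n+(x-n-1)+1; omega⟩)
    · exact Or.inr (Or.inr (by omega))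

lemma pf_pf (σ τ : Equiv.Perm (Fin n)) (x : ℕ) : pf σ (pf τ x) = pf (σ * τ) x := by
  rcases nat_cases n x with ⟨c, rfl⟩ | ⟨c, rfl⟩ | hout
  · rw [pf_low, pf_low, pf_low]; rfl
  · rw [pf_high, pf_high, pf_high]; rfl
  · rw [pf_out _ _ hout, pf_out _ _ hout, pf_out _ _ hout]

lemma pf_one (x : ℕ) : pf (1 : Equiv.Perm (Fin n)) x = x := by
  rcases nat_cases n x with ⟨c, rfl⟩ | ⟨c, rfl⟩ | hout
  · rw [pf_low]; rfl
  · rw [pf_high]; rfl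
  · exact pf_out _ _ hout

def permPart : Equiv.Perm (Fin n) →* Equiv.Perm ℕ where
  toFun σ :=
    { toFun := pf σ
      invFun := pf σ⁻¹
      left_inv := fun x => by rw [pf_pf, inv_mul_cancel, pf_one]
      right_inv := fun x => by rw [pf_pf, mul_inv_cancel, pf_one] }
  map_one' := Equiv.ext fun x => pf_one x
  map_mul' := fun σ τ => Equiv.ext fun x => (pf_pf σ τ x).symm

lemma permPart_apply_low (σ : Equiv.Perm (Fin n)) (c : Fin n) :
    permPart σ ((c:ℕ)+1) = ((σ c : Fin n) : ℕ) + 1 := pf_low σ c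

lemma permPart_apply_high (σ : Equiv.Perm (Fin n)) (c : Fin n) :
    permPart σ (n+(c:ℕ)+1) = n + ((σ c : Fin n) : ℕ) + 1 := pf_high σ c

lemma permPart_apply_out (σ : Equiv.Perm (Fin n)) (x : ℕ) (hx : x = 0 ∨ n+n < x) :
    permPart σ x = x := pf_out σ x hx

lemma permPart_inv (σ : Equiv.Perm (Fin n)) : (permPart σ)⁻¹ = permPart σ⁻¹ :=
  (map_inv permPart σ).symm

def Psi [NeZero n] : Hg n →* Equiv.Perm ℕ := by
  refine SemidirectProduct.lift sgnPart permPart ?_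
  intro σ
  apply MonoidHom.ext
  intro ε
  show sgnPart (act σ ε) = MulAut.conj (permPart σ) (sgnPart ε)
  have key : sgnPart (act σ ε) = permPart σ * sgnPart ε * (permPart σ)⁻¹ := by
    apply Equiv.ext
    intro x
    rw [Equiv.Perm.mul_apply, Equiv.Perm.mul_apply, permPart_inv]
    rcases nat_cases n x with ⟨c, rfl⟩ | ⟨c, rfl⟩ | hout
    · rw [sgnPart_apply_low, permPart_apply_low, sgnPart_apply_low, act_apply]
      split
      · rw [permPart_apply_low, Equiv.Perm.apply_inv_self]
      · rw [permPart_apply_high, Equiv.Perm.apply_inv_self]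
    · rw [sgnPart_apply_high, permPart_apply_high, sgnPart_apply_high, act_apply]
      split
      · rw [permPart_apply_high, Equiv.Perm.apply_inv_self]
      · rw [permPart_apply_low, Equiv.Perm.apply_inv_self]
    · rw [sgnPart_apply_out _ _ hout, permPart_apply_out _ _ hout,
        sgnPart_apply_out _ _ hout, permPart_apply_out _ _ hout]
  rw [key]
  rfl

lemma Psi_apply [NeZero n] (ε : Fin n → ℤˣ) (σ : Equiv.Perm (Fin n)) :
    Psi (⟨ε, σ⟩ : Hg n) = sgnPart ε * permPart σ := rfl

lemma Psi_injective [NeZero n] : Function.Injective (Psi (n := n)) := by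
  rw [injective_iff_map_eq_one]
  rintro ⟨ε, σ⟩ h
  rw [Psi_apply] at h
  have heval : ∀ c : Fin n, (c:ℕ)+1 = (c:ℕ)+1 → σ c = c ∧ ε (σ c) = 1 := by
    intro c _
    have hx : (sgnPart ε * permPart σ) ((c:ℕ)+1) = (c:ℕ)+1 := by rw [h]; rfl
    rw [Equiv.Perm.mul_apply, permPart_apply_low, sgnPart_apply_low] at hx
    have hσc := (σ c).isLt
    have hc := c.isLt
    split at hx
    · constructor
      · exact Fin.ext (by omega)
      · assumption
    · omega
  have hσ : σ = 1 := by
    apply Equiv.ext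
    intro c
    exact (heval c rfl).1
  have hε : ε = 1 := by
    funext c
    have h2 := (heval c rfl).2
    rw [(heval c rfl).1] at h2
    exact h2
  rw [hσ, hε]
  rfl

end Concrete


section Ident
variable {n : ℕ}

lemma permPart_swap (a b : Fin n) :
    permPart (Equiv.swap a b) =
      Equiv.swap ((a:ℕ)+1) ((b:ℕ)+1) * Equiv.swap (n+(a:ℕ)+1) (n+(b:ℕ)+1) := by
  have ha := a.isLt
  have hb := b.isLt
  apply Equiv.ext
  intro x
  rw [Equiv.Perm.mul_apply]
  rcases nat_cases n x with ⟨c, rfl⟩ | ⟨c, rfl⟩ | hout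
  · have hc := c.isLt
    rw [permPart_apply_low]
    have hfix : Equiv.swap (n+(a:ℕ)+1) (n+(b:ℕ)+1) ((c:ℕ)+1) = (c:ℕ)+1 :=
      Equiv.swap_apply_of_ne_of_ne (by omega) (by omega)
    rw [hfix]
    by_cases hca : c = a
    · subst hca
      rw [Equiv.swap_apply_left, Equiv.swap_apply_left]
    · by_cases hcb : c = b
      · subst hcb
        rw [Equiv.swap_apply_right, Equiv.swap_apply_right]
      · have h1 : ((c:ℕ)+1 : ℕ) ≠ (a:ℕ)+1 := fun h => hca (Fin.ext (by omega))
        have h2 : ((c:ℕ)+1 : ℕ) ≠ (b:ℕ)+1 := fun h => hcb (Fin.ext (by omega))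
        rw [Equiv.swap_apply_of_ne_of_ne hca hcb, Equiv.swap_apply_of_ne_of_ne h1 h2]
  · have hc := c.isLt
    rw [permPart_apply_high]
    by_cases hca : c = a
    · subst hca
      have hfix : Equiv.swap ((c:ℕ)+1) ((b:ℕ)+1) (n+(b:ℕ)+1) = n+(b:ℕ)+1 :=
        Equiv.swap_apply_of_ne_of_ne (by omega) (by omega)
      rw [Equiv.swap_apply_left, Equiv.swap_apply_left, hfix]
    · by_cases hcb : c = b
      · subst hcb
        have hfix : Equiv.swap ((a:ℕ)+1) ((c:ℕ)+1) (n+(a:ℕ)+1) = n+(a:ℕ)+1 :=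
          Equiv.swap_apply_of_ne_of_ne (by omega) (by omega)
        rw [Equiv.swap_apply_right, Equiv.swap_apply_right, hfix]
      · have h1 : (n+(c:ℕ)+1 : ℕ) ≠ n+(a:ℕ)+1 := fun h => hca (Fin.ext (by omega))
        have h2 : (n+(c:ℕ)+1 : ℕ) ≠ n+(b:ℕ)+1 := fun h => hcb (Fin.ext (by omega))
        have hfix : Equiv.swap ((a:ℕ)+1) ((b:ℕ)+1) (n+(c:ℕ)+1) = n+(c:ℕ)+1 :=
          Equiv.swap_apply_of_ne_of_ne (by omega) (by omega)
        rw [Equiv.swap_apply_of_ne_of_ne hca hcb, Equiv.swap_apply_of_ne_of_ne h1 h2, hfix]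
  · have h1 : Equiv.swap (n+(a:ℕ)+1) (n+(b:ℕ)+1) x = x :=
      Equiv.swap_apply_of_ne_of_ne (by omega) (by omega)
    have h2 : Equiv.swap ((a:ℕ)+1) ((b:ℕ)+1) x = x :=
      Equiv.swap_apply_of_ne_of_ne (by omega) (by omega)
    rw [permPart_apply_out _ _ hout, h1, h2]

lemma Psi_xg_eq_beta [NeZero n] (k : Fin n) (hk : (k:ℕ) ≠ 0) :
    Psi (xg k) = beta n (k:ℕ) := by
  have hkv := k.isLt
  rw [xg, if_neg hk, Psi_apply, map_one, one_mul, permPart_swap, beta, if_neg hk]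
  have hprev : ((prev k : Fin n) : ℕ) = (k:ℕ) - 1 := rfl
  rw [hprev, show (k:ℕ)-1+1 = (k:ℕ) by omega, show n+((k:ℕ)-1)+1 = n+(k:ℕ) by omega]

lemma Psi_chi01_eq_beta0 [NeZero n] (hn2 : 1 < n) :
    Psi (⟨chi 0 ⟨1, hn2⟩, 1⟩ : Hg n) = beta n 0 := by
  set fone : Fin n := ⟨1, hn2⟩ with hfone
  have hf1 : ((fone : Fin n) : ℕ) = 1 := rfl
  have hf0 : fone ≠ (0 : Fin n) := fun h => by
    have h2 := congrArg Fin.val h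
    rw [hf1, fin_val_zero] at h2
    exact one_ne_zero h2
  rw [Psi_apply, map_one, mul_one, beta, if_pos rfl]
  apply Equiv.ext
  intro x
  rw [Equiv.Perm.mul_apply]
  rcases nat_cases n x with ⟨c, rfl⟩ | ⟨c, rfl⟩ | hout
  · have hc := c.isLt
    rw [sgnPart_apply_low]
    by_cases hc0 : c = 0
    · subst hc0
      have hchi : chi (0:Fin n) fone 0 = -1 := by simp [chi]
      rw [if_neg (by rw [hchi]; decide), fin_val_zero]
      have e1 : Equiv.swap 2 (n+2) (0+1) = 0+1 :=
        Equiv.swap_apply_of_ne_of_ne (by omega) (by omega)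
      rw [e1, show (0+1 : ℕ) = 1 from rfl, Equiv.swap_apply_left]
    · by_cases hc1 : c = fone
      · subst hc1
        have hchi : chi (0:Fin n) fone fone = -1 := by simp [chi, hf0]
        rw [if_neg (by rw [hchi]; decide), hf1]
        rw [show (1+1 : ℕ) = 2 from rfl, Equiv.swap_apply_left]
        have e2 : Equiv.swap 1 (n+1) (n+2) = n+2 :=
          Equiv.swap_apply_of_ne_of_ne (by omega) (by omega)
        rw [e2]
      · have hcv0 : (c:ℕ) ≠ 0 := fun h => hc0 (Fin.ext (by rw [h, fin_val_zero]))
        have hcv1 : (c:ℕ) ≠ 1 := fun h => hc1 (Fin.ext (by rw [h, hf1]))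
        have hchi : chi (0:Fin n) fone c = 1 := by simp [chi, hc0, hc1]
        rw [if_pos hchi]
        have e1 : Equiv.swap 2 (n+2) ((c:ℕ)+1) = (c:ℕ)+1 :=
          Equiv.swap_apply_of_ne_of_ne (by omega) (by omega)
        have e2 : Equiv.swap 1 (n+1) ((c:ℕ)+1) = (c:ℕ)+1 :=
          Equiv.swap_apply_of_ne_of_ne (by omega) (by omega)
        rw [e1, e2]
  · have hc := c.isLt
    rw [sgnPart_apply_high]
    by_cases hc0 : c = 0
    · subst hc0
      have hchi : chi (0:Fin n) fone 0 = -1 := by simp [chi]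
      rw [if_neg (by rw [hchi]; decide), fin_val_zero]
      have e1 : Equiv.swap 2 (n+2) (n+0+1) = n+0+1 :=
        Equiv.swap_apply_of_ne_of_ne (by omega) (by omega)
      rw [e1, show (n+0+1 : ℕ) = n+1 from rfl, Equiv.swap_apply_right]
    · by_cases hc1 : c = fone
      · subst hc1
        have hchi : chi (0:Fin n) fone fone = -1 := by simp [chi, hf0]
        rw [if_neg (by rw [hchi]; decide), hf1]
        have e0 : (n+1+1 : ℕ) = n+2 := by omega
        rw [e0, Equiv.swap_apply_right]
        have e2 : Equiv.swap 1 (n+1) 2 = 2 :=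
          Equiv.swap_apply_of_ne_of_ne (by omega) (by omega)
        rw [e2]
      · have hcv0 : (c:ℕ) ≠ 0 := fun h => hc0 (Fin.ext (by rw [h, fin_val_zero]))
        have hcv1 : (c:ℕ) ≠ 1 := fun h => hc1 (Fin.ext (by rw [h, hf1]))
        have hchi : chi (0:Fin n) fone c = 1 := by simp [chi, hc0, hc1]
        rw [if_pos hchi]
        have e1 : Equiv.swap 2 (n+2) (n+(c:ℕ)+1) = n+(c:ℕ)+1 :=
          Equiv.swap_apply_of_ne_of_ne (by omega) (by omega)
        have e2 : Equiv.swap 1 (n+1) (n+(c:ℕ)+1) = n+(c:ℕ)+1 :=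
          Equiv.swap_apply_of_ne_of_ne (by omega) (by omega)
        rw [e1, e2]
  · rw [sgnPart_apply_out _ _ hout]
    have e1 : Equiv.swap 2 (n+2) x = x :=
      Equiv.swap_apply_of_ne_of_ne (by omega) (by omega)
    have e2 : Equiv.swap 1 (n+1) x = x :=
      Equiv.swap_apply_of_ne_of_ne (by omega) (by omega)
    rw [e1, e2]

/-- model generating set matching the `beta` generators -/
def mset (hn2 : 1 < n) [NeZero n] : Set (Hg n) :=
  {g | g = (⟨chi 0 ⟨1, hn2⟩, 1⟩ : Hg n) ∨ ∃ k : Fin n, (k:ℕ) ≠ 0 ∧ g = xg k}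

lemma Y_univ (σ : Equiv.Perm (Fin n)) : σ ∈ Y (Set.univ : Set (Fin n)) := by
  intro c k _ _
  trivial

lemma inr_mem_closure_mset [NeZero n] (hn2 : 1 < n) (σ : Equiv.Perm (Fin n)) :
    (⟨1, σ⟩ : Hg n) ∈ Subgroup.closure (mset hn2) := by
  have hσcl : σ ∈ Subgroup.closure (sgens (Set.univ : Set (Fin n))) :=
    Y_le_closure _ (Y_univ σ)
  have h1 : (SemidirectProduct.inr σ : Hg n) ∈
      Subgroup.map (SemidirectProduct.inr : Equiv.Perm (Fin n) →* Hg n)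
        (Subgroup.closure (sgens Set.univ)) := Subgroup.mem_map_of_mem _ hσcl
  rw [MonoidHom.map_closure] at h1
  have h2 : (⇑(SemidirectProduct.inr : Equiv.Perm (Fin n) →* Hg n)) '' sgens Set.univ
      ⊆ mset hn2 := by
    rintro _ ⟨g', ⟨k, _, hk0, rfl⟩, rfl⟩
    refine Or.inr ⟨k, hk0, ?_⟩
    rw [xg, if_neg hk0]
    rfl
  exact Subgroup.closure_mono h2 h1

lemma closure_mset [NeZero n] (hodd : Odd n) (hn2 : 1 < n) :
    Subgroup.closure (mset hn2) = Cs (Set.univ : Set (Fin n)) := by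
  apply le_antisymm
  · rw [Subgroup.closure_le]
    rintro g (rfl | ⟨k, hk0, rfl⟩)
    · refine ⟨(Y _).one_mem, Or.inl ⟨trivial, ?_, ?_⟩⟩
      · exact chi_prod (fun h => by
          have := congrArg Fin.val h
          rw [fin_val_zero] at this
          exact absurd this.symm one_ne_zero)
      · intro c d hc hd
        exact absurd (fun k _ _ => trivial) hc
    · rw [← closure_gens hodd Set.univ]
      exact Subgroup.subset_closure ⟨k, trivial, rfl⟩
  · rintro g hg
    obtain ⟨ε, σ⟩ := g
    rw [mem_Cs_mk] at hg
    obtain ⟨hY, hsign⟩ := hg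
    have hprod : (∏ c, ε c) = 1 := by
      rcases hsign with ⟨_, hp, _⟩ | ⟨h0, _⟩
      · exact hp
      · exact absurd trivial h0
    have hright : (⟨ε, σ⟩ : Hg n) = (⟨ε, 1⟩ : Hg n) * ⟨1, σ⟩ := by
      rw [mk_mul, map_one, mul_one, one_mul]
    rw [hright]
    refine mul_mem ?_ (inr_mem_closure_mset hn2 σ)
    -- sign part via conjugates of chi 0 1
    have hchi : ∀ a b : Fin n, a ≠ b →
        (⟨chi a b, 1⟩ : Hg n) ∈ Subgroup.closure (mset hn2) := by
      intro a b hab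
      set fone : Fin n := ⟨1, hn2⟩ with hfone
      have hf0 : fone ≠ 0 := fun h => by
        have := congrArg Fin.val h
        rw [fin_val_zero] at this
        exact absurd this one_ne_zero
      set σab : Equiv.Perm (Fin n) :=
        Equiv.swap 0 a * Equiv.swap fone (Equiv.swap 0 a b) with hσab
      have hσab0 : σab 0 = a := by
        rw [hσab, Equiv.Perm.mul_apply]
        have h1 : Equiv.swap 0 a b ≠ 0 := by
          intro h
          have h2 : Equiv.swap 0 a b = Equiv.swap 0 a a := by
            rw [h, Equiv.swap_apply_right]
          exact hab ((Equiv.swap 0 a).injective h2).symm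
        rw [Equiv.swap_apply_of_ne_of_ne (Ne.symm hf0) (Ne.symm h1), Equiv.swap_apply_left]
      have hσab1 : σab fone = b := by
        rw [hσab, Equiv.Perm.mul_apply, Equiv.swap_apply_left, Equiv.swap_apply_self]
      have hact : act σab (chi 0 fone) = chi a b := by
        funext c
        rw [act_apply]
        have hinj := σab.injective
        by_cases hca : c = a
        · subst hca
          have : σab⁻¹ (σab 0) = 0 := Equiv.Perm.inv_apply_self σab 0
          rw [← hσab0, this]
          simp [chi]
        · by_cases hcb : c = b
          · subst hcb
            have : σab⁻¹ (σab fone) = fone := Equiv.Perm.inv_apply_self σab fone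
            rw [← hσab1, this]
            simp [chi, hf0, Ne.symm hf0]
          · have h0 : σab⁻¹ c ≠ 0 := by
              intro h
              apply hca
              rw [← hσab0, ← h, Equiv.Perm.apply_inv_self]
            have h1 : σab⁻¹ c ≠ fone := by
              intro h
              apply hcb
              rw [← hσab1, ← h, Equiv.Perm.apply_inv_self]
            show (if σab⁻¹ c = 0 then (-1:ℤˣ) else if σab⁻¹ c = fone then -1 else 1)
              = (if c = a then -1 else if c = b then -1 else 1)
            rw [if_neg h0, if_neg h1, if_neg hca, if_neg hcb]
      rw [← hact, ← conj_mk]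
      have hbase : (⟨chi 0 fone, 1⟩ : Hg n) ∈ Subgroup.closure (mset hn2) :=
        Subgroup.subset_closure (Or.inl rfl)
      have hs := inr_mem_closure_mset hn2 σab
      exact mul_mem (mul_mem hs hbase) (inv_mem hs)
    exact sign_mem (Subgroup.closure (mset hn2)) Set.univ
      (fun a b _ _ hab => hchi a b hab)
      (Finset.univ.filter (fun c => ε c = -1)).card ε le_rfl
      (fun c _ => trivial) hprod

lemma Dn_eq_map [NeZero n] (hodd : Odd n) (hn2 : 1 < n) :
    Dn n = Subgroup.map (Psi : Hg n →* Equiv.Perm ℕ) (Cs Set.univ) := by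
  have hset : {g : Equiv.Perm ℕ | ∃ i < n, g = beta n i} = ⇑(Psi : Hg n →* _) '' mset hn2 := by
    ext g
    constructor
    · rintro ⟨i, hi, rfl⟩
      by_cases hi0 : i = 0
      · subst hi0
        exact ⟨_, Or.inl rfl, Psi_chi01_eq_beta0 hn2⟩
      · refine ⟨xg ⟨i, hi⟩, Or.inr ⟨⟨i, hi⟩, hi0, rfl⟩, Psi_xg_eq_beta ⟨i, hi⟩ hi0⟩
    · rintro ⟨m, (rfl | ⟨k, hk0, rfl⟩), rfl⟩
      · exact ⟨0, by omega, Psi_chi01_eq_beta0 hn2⟩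
      · exact ⟨(k:ℕ), k.isLt, Psi_xg_eq_beta k hk0⟩
  rw [Dn, hset, ← MonoidHom.map_closure, closure_mset hodd hn2]

end Ident


section Orders
variable {n : ℕ}

lemma fin_ne_zero_of_val [NeZero n] {j : Fin n} (h : (j:ℕ) ≠ 0) : j ≠ 0 :=
  fun hh => h (by rw [hh, fin_val_zero])

lemma fin_ne_of_val {a b : Fin n} (h : (a:ℕ) ≠ (b:ℕ)) : a ≠ b :=
  fun hh => h (congrArg Fin.val hh)

lemma orderOf_xg [NeZero n] (hn2 : 1 < n) (k : Fin n) : orderOf (xg k) = 2 := by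
  haveI : Fact (Nat.Prime 2) := ⟨Nat.prime_two⟩
  by_cases hk : (k:ℕ) = 0
  · rw [xg, if_pos hk]
    apply orderOf_eq_prime
    · rw [pow_two, mk_mul, act_one, eps0_mul_self, mul_one]
      rfl
    · intro h
      have h2 : (eps0 : Fin n → ℤˣ) = 1 := congrArg SemidirectProduct.left h
      have h3 := congrFun h2 ⟨1, hn2⟩
      have h4 : (eps0 : Fin n → ℤˣ) ⟨1, hn2⟩ = -1 := by
        rw [eps0, if_neg (fin_ne_zero_of_val (by show (1:ℕ) ≠ 0; omega))]
      rw [h4, Pi.one_apply] at h3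
      exact absurd h3 (by decide)
  · rw [xg, if_neg hk]
    apply orderOf_eq_prime
    · rw [pow_two, mk_mul, map_one, mul_one, Equiv.swap_mul_self]
      rfl
    · intro h
      have h2 : Equiv.swap (prev k) k = 1 := congrArg SemidirectProduct.right h
      have h3 := Equiv.ext_iff.mp h2 (prev k)
      rw [Equiv.swap_apply_left, Equiv.Perm.one_apply] at h3
      have h4 := congrArg Fin.val h3
      have hp : ((prev k : Fin n):ℕ) = (k:ℕ)-1 := rfl
      rw [hp] at h4
      omega

lemma swap_commute_gen {α : Type*} [DecidableEq α] {a b c d : α} (h1 : a ≠ c) (h2 : a ≠ d)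
    (h3 : b ≠ c) (h4 : b ≠ d) : Commute (Equiv.swap a b) (Equiv.swap c d) := by
  apply Equiv.Perm.Disjoint.commute
  intro x
  by_cases hx : x = a ∨ x = b
  · right
    rcases hx with rfl | rfl
    · exact Equiv.swap_apply_of_ne_of_ne h1 h2
    · exact Equiv.swap_apply_of_ne_of_ne h3 h4
  · push_neg at hx
    left
    exact Equiv.swap_apply_of_ne_of_ne hx.1 hx.2

lemma act_swap_eps0 [NeZero n] {j : Fin n} (hj : 2 ≤ (j:ℕ)) :
    act (Equiv.swap (prev j) j) eps0 = eps0 := by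
  have hpv : ((prev j : Fin n):ℕ) = (j:ℕ)-1 := rfl
  have hj0f : j ≠ (0 : Fin n) := fin_ne_zero_of_val (by omega)
  have hpj0f : prev j ≠ (0 : Fin n) := fin_ne_zero_of_val (by rw [hpv]; omega)
  funext c
  rw [act_apply, Equiv.swap_inv]
  by_cases h1 : c = prev j
  · subst h1
    rw [Equiv.swap_apply_left]
    show (if j = 0 then (1:ℤˣ) else -1) = (if prev j = 0 then 1 else -1)
    rw [if_neg hj0f, if_neg hpj0f]
  · by_cases h2 : c = j
    · rw [h2, Equiv.swap_apply_right]
      show (if prev j = 0 then (1:ℤˣ) else -1) = (if j = 0 then 1 else -1)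
      rw [if_neg hj0f, if_neg hpj0f]
    · rw [Equiv.swap_apply_of_ne_of_ne h1 h2]

lemma xg_commute [NeZero n] {i j : Fin n} (h : (i:ℕ)+2 ≤ (j:ℕ)) : Commute (xg i) (xg j) := by
  have hj0 : (j:ℕ) ≠ 0 := by omega
  have hpjv : ((prev j : Fin n):ℕ) = (j:ℕ)-1 := rfl
  have hpiv : ((prev i : Fin n):ℕ) = (i:ℕ)-1 := rfl
  by_cases hi : (i:ℕ) = 0
  · rw [xg, xg, if_pos hi, if_neg hj0]
    show _ * _ = _ * _
    rw [mk_mul, mk_mul, map_one, mul_one, one_mul, one_mul, mul_one]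
    have key := act_swap_eps0 (n := n) (j := j) (by omega)
    rw [key]
  · rw [xg, xg, if_neg hi, if_neg hj0]
    have c1 : prev i ≠ prev j := fin_ne_of_val (by rw [hpiv, hpjv]; omega)
    have c2 : prev i ≠ j := fin_ne_of_val (by rw [hpiv]; omega)
    have c3 : i ≠ prev j := fin_ne_of_val (by rw [hpjv]; omega)
    have c4 : i ≠ j := fin_ne_of_val (by omega)
    exact (swap_commute_gen c1 c2 c3 c4).map (SemidirectProduct.inr)

lemma cycle_pow_three {α : Type*} [DecidableEq α] {a b c : α} (hab : a ≠ b) (hbc : b ≠ c)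
    (hac : a ≠ c) : (Equiv.swap a b * Equiv.swap b c)^3 = 1
      ∧ (Equiv.swap a b * Equiv.swap b c) ≠ 1 := by
  set σ := Equiv.swap a b * Equiv.swap b c with hσ
  have hA : σ a = b := by
    rw [hσ, Equiv.Perm.mul_apply, Equiv.swap_apply_of_ne_of_ne hab hac, Equiv.swap_apply_left]
  have hB : σ b = c := by
    rw [hσ, Equiv.Perm.mul_apply, Equiv.swap_apply_left,
      Equiv.swap_apply_of_ne_of_ne (Ne.symm hac) (Ne.symm hbc)]
  have hC : σ c = a := by
    rw [hσ, Equiv.Perm.mul_apply, Equiv.swap_apply_right, Equiv.swap_apply_right]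
  have hfix : ∀ x, x ≠ a → x ≠ b → x ≠ c → σ x = x := by
    intro x hxa hxb hxc
    rw [hσ, Equiv.Perm.mul_apply, Equiv.swap_apply_of_ne_of_ne hxb hxc,
      Equiv.swap_apply_of_ne_of_ne hxa hxb]
  constructor
  · apply Equiv.ext
    intro x
    have hcube : (σ^3) x = σ (σ (σ x)) := by
      rw [pow_succ, pow_succ, pow_one, Equiv.Perm.mul_apply, Equiv.Perm.mul_apply]
    rw [hcube, Equiv.Perm.one_apply]
    by_cases hxa : x = a
    · subst hxa; rw [hA, hB, hC]
    · by_cases hxb : x = b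
      · subst hxb; rw [hB, hC, hA]
      · by_cases hxc : x = c
        · subst hxc; rw [hC, hA, hB]
        · rw [hfix x hxa hxb hxc, hfix x hxa hxb hxc, hfix x hxa hxb hxc]
  · intro h
    have h2 := Equiv.ext_iff.mp h a
    rw [hA, Equiv.Perm.one_apply] at h2
    exact hab h2.symm

lemma orderOf_xg_mul [NeZero n] {i j : Fin n} (hi : (i:ℕ) ≠ 0) (hj : (j:ℕ) = (i:ℕ)+1) :
    orderOf (xg i * xg j) = 3 := by
  haveI : Fact (Nat.Prime 3) := ⟨by norm_num⟩
  have hj0 : (j:ℕ) ≠ 0 := by omega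
  have hpjv : ((prev j : Fin n):ℕ) = (j:ℕ)-1 := rfl
  have hpiv : ((prev i : Fin n):ℕ) = (i:ℕ)-1 := rfl
  rw [xg, if_neg hi, xg, if_neg hj0]
  have hpj : prev j = i := Fin.ext (by rw [hpjv]; omega)
  rw [hpj]
  have hd1 : prev i ≠ i := fin_ne_of_val (by rw [hpiv]; omega)
  have hd2 : i ≠ j := fin_ne_of_val (by omega)
  have hd3 : prev i ≠ j := fin_ne_of_val (by rw [hpiv]; omega)
  obtain ⟨hcube, hne⟩ := cycle_pow_three hd1 hd2 hd3
  have hinr : (⟨1, Equiv.swap (prev i) i⟩ : Hg n) * ⟨1, Equiv.swap i j⟩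
      = SemidirectProduct.inr (Equiv.swap (prev i) i * Equiv.swap i j) := by
    rw [map_mul]
    rfl
  rw [hinr, orderOf_injective _ SemidirectProduct.inr_injective]
  exact orderOf_eq_prime hcube hne

lemma orderOf_xg_mul0 [NeZero n] (hn2 : 1 < n) {j : Fin n} (hj : (j:ℕ) = 1) :
    orderOf (xg 0 * xg j) = 4 := by
  have hj0 : (j:ℕ) ≠ 0 := by omega
  have hpjv : ((prev j : Fin n):ℕ) = (j:ℕ)-1 := rfl
  rw [xg, if_pos fin_val_zero, xg, if_neg hj0]
  set τ := Equiv.swap (prev j) j with hτ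
  set g : Hg n := ⟨eps0, 1⟩ * ⟨1, τ⟩ with hg
  have hgmk : g = (⟨eps0, τ⟩ : Hg n) := by
    rw [hg, mk_mul, act_one, mul_one, one_mul]
  set w : Fin n → ℤˣ := eps0 * act τ eps0 with hw
  have hg2 : g^2 = (⟨w, 1⟩ : Hg n) := by
    rw [pow_two, hgmk, mk_mul, hτ, Equiv.swap_mul_self, hw]
  have hg4 : g^4 = 1 := by
    have : g^4 = (g^2)^2 := by rw [← pow_mul]
    rw [this, hg2, pow_two, mk_mul, act_one]
    have hww : w * w = 1 := by
      funext c
      show w c * w c = 1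
      exact Int.units_mul_self _
    rw [hww, mul_one]
    rfl
  have hg2ne : g^2 ≠ 1 := by
    rw [hg2]
    intro h
    have h2 : w = 1 := congrArg SemidirectProduct.left h
    have h3 := congrFun h2 0
    have hpj0 : prev j = 0 := Fin.ext (by rw [hpjv, fin_val_zero]; omega)
    have hτ0 : τ 0 = j := by rw [hτ, ← hpj0, Equiv.swap_apply_left]
    have h4 : w 0 = -1 := by
      rw [hw]
      show eps0 0 * act τ eps0 0 = -1
      rw [act_apply, hτ, Equiv.swap_inv, ← hτ, hτ0]
      show (if (0:Fin n) = 0 then (1:ℤˣ) else -1) * (if j = 0 then 1 else -1) = -1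
      rw [if_pos rfl, if_neg (fin_ne_zero_of_val hj0), one_mul]
    rw [h4, Pi.one_apply] at h3
    exact absurd h3 (by decide)
  have hdvd : orderOf g ∣ 4 := orderOf_dvd_of_pow_eq_one hg4
  have hne0 : orderOf g ≠ 0 := by
    intro h
    rw [h, zero_dvd_iff] at hdvd
    norm_num at hdvd
  have hle : orderOf g ≤ 4 := Nat.le_of_dvd (by norm_num) hdvd
  have h1le : 1 ≤ orderOf g := Nat.pos_of_ne_zero hne0
  have hne3 : orderOf g ≠ 3 := by
    intro h
    rw [h] at hdvd
    norm_num at hdvd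
  have hcases : orderOf g = 1 ∨ orderOf g = 2 ∨ orderOf g = 4 := by omega
  rcases hcases with h|h|h
  · exfalso
    have hg1 : g = 1 := orderOf_eq_one_iff.mp h
    rw [hg1] at hg2ne
    exact hg2ne (one_pow 2)
  · exfalso
    have := pow_orderOf_eq_one g
    rw [h] at this
    exact hg2ne this
  · exact h

end Orders

end P16

/-- For odd `n ≥ 5`, the Coxeter group of type `Dₙ` admits a string C-group
representation of rank `n` with Schläfli type `{4, 3^(n-2)}`. -/
theorem stmt16 (n : ℕ) (hn : 5 ≤ n) (hodd : Odd n) :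
    ∃ s : Fin n → (Dn n),
      (∀ i, orderOf (s i) = 2) ∧
      Subgroup.closure (Set.range s) = ⊤ ∧
      (∀ i j : Fin n, (i : ℕ) + 2 ≤ (j : ℕ) ∨ (j : ℕ) + 2 ≤ (i : ℕ) →
        Commute (s i) (s j)) ∧
      IsCOn s Set.univ ∧
      ∀ i j : Fin n, (j : ℕ) = (i : ℕ) + 1 →
        orderOf (s i * s j) = if (i : ℕ) = 0 then 4 else 3 := by
  haveI : NeZero n := ⟨by omega⟩
  have hn2 : 1 < n := by omega
  have hsub_inj : Function.Injective ⇑(Dn n).subtype := (Dn n).subtype_injective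
  have hsmem : ∀ k : Fin n, P16.Psi (P16.xg k) ∈ Dn n := by
    intro k
    rw [P16.Dn_eq_map hodd hn2]
    refine Subgroup.mem_map.mpr ⟨P16.xg k, ?_, rfl⟩
    rw [← P16.closure_gens hodd Set.univ]
    exact Subgroup.subset_closure ⟨k, trivial, rfl⟩
  refine ⟨fun k => ⟨P16.Psi (P16.xg k), hsmem k⟩, ?_, ?_, ?_, ?_, ?_⟩
  · -- involutions
    intro i
    show orderOf (⟨P16.Psi (P16.xg i), hsmem i⟩ : (Dn n)) = 2
    rw [← orderOf_injective (Dn n).subtype hsub_inj ⟨P16.Psi (P16.xg i), hsmem i⟩]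
    show orderOf (P16.Psi (P16.xg i)) = 2
    rw [orderOf_injective _ P16.Psi_injective]
    exact P16.orderOf_xg hn2 i
  · -- generation
    apply Subgroup.map_injective hsub_inj
    rw [MonoidHom.map_closure]
    have himg : (⇑(Dn n).subtype ''
        Set.range (fun k => (⟨P16.Psi (P16.xg k), hsmem k⟩ : Dn n)))
        = ⇑P16.Psi '' P16.gens (Set.univ : Set (Fin n)) := by
      rw [P16.gens, Set.image_univ, ← Set.range_comp, ← Set.range_comp]
      rfl
    rw [himg, ← MonoidHom.map_closure, P16.closure_gens hodd,
      ← P16.Dn_eq_map hodd hn2, ← MonoidHom.range_eq_map, Subgroup.subtype_range]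
  · -- far commutation
    intro i j hij
    rcases hij with h | h
    · exact Subtype.ext ((P16.xg_commute h).map P16.Psi)
    · have hc : Commute ((⟨P16.Psi (P16.xg j), hsmem j⟩ : Dn n))
          ⟨P16.Psi (P16.xg i), hsmem i⟩ :=
        Subtype.ext ((P16.xg_commute h).map P16.Psi)
      exact hc.symm
  · -- intersection property
    intro J _ K _
    have key : ∀ L : Set (Fin n),
        Subgroup.map (Dn n).subtype
          (subJ (fun k => (⟨P16.Psi (P16.xg k), hsmem k⟩ : Dn n)) L)
        = Subgroup.map P16.Psi (P16.Cs L) := by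
      intro L
      rw [subJ, MonoidHom.map_closure, ← P16.closure_gens hodd L, MonoidHom.map_closure]
      congr 1
      rw [P16.gens, ← Set.image_comp, ← Set.image_comp]
      rfl
    apply Subgroup.map_injective hsub_inj
    rw [Subgroup.map_inf _ _ _ hsub_inj, key J, key K,
      ← Subgroup.map_inf _ _ _ P16.Psi_injective, P16.Cs_inf, key (J ∩ K)]
  · -- Schläfli type
    intro i j hij
    have hordmul : orderOf ((⟨P16.Psi (P16.xg i), hsmem i⟩ : Dn n)
        * ⟨P16.Psi (P16.xg j), hsmem j⟩) = orderOf (P16.xg i * P16.xg j) := by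
      have e1 : (Dn n).subtype ((⟨P16.Psi (P16.xg i), hsmem i⟩ : Dn n)
          * ⟨P16.Psi (P16.xg j), hsmem j⟩) = P16.Psi (P16.xg i * P16.xg j) := by
        rw [map_mul, map_mul]
        rfl
      rw [← orderOf_injective (Dn n).subtype hsub_inj, e1,
        orderOf_injective _ P16.Psi_injective]
    rw [hordmul]
    by_cases hi : (i:ℕ) = 0
    · rw [if_pos hi]
      have hieq : i = 0 := Fin.ext (by rw [hi, P16.fin_val_zero])
      rw [hieq]
      exact P16.orderOf_xg_mul0 hn2 (by omega : (j:ℕ) = 1)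
    · rw [if_neg hi]
      exact P16.orderOf_xg_mul hi hij
end
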